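/- arXiv:1302.3737 — 4 statements merged into one kernel-verified Lean document; each statement's English description precedes it below -/
import Mathlib

section
/- Let d ≥ 1 and let p₁ ≠ p₂ be two distinct points of ℝᵈ. Then for every homeomorphism f in Homeo₀(ℝᵈ) there exist homeomorphisms f₁, f₃ in G_{p₁}^d and f₂ in G_{p₂}^d such that f = f₁ ∘ f₂ ∘ f₃. -/
/-- The group of homeomorphisms of a topological space, with composition as
multiplication: `(f * g) x = f (g x)`. -/
instance homeoGroup {X : Type*} [TopologicalSpace X] : Group (X ≃ₜ X) where
  mul f g := g.trans f
  one := Homeomorph.refl X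
  inv := Homeomorph.symm
  mul_assoc _ _ _ := rfl
  one_mul f := Homeomorph.ext fun _ => rfl
  mul_one f := Homeomorph.ext fun _ => rfl
  inv_mul_cancel f := Homeomorph.ext fun x => f.symm_apply_apply x

/-- `f` is isotopic to the identity through a compactly supported isotopy: there is a
level-preserving homeomorphism `H` of `X × [0,1]` (so each time slice `H (·, t)` is a
homeomorphism of `X`, varying continuously in `t`), supported in a fixed compact set `K`,
which is the identity at time `0` and equals `f` at time `1`. -/
def IsotopicToIdC {X : Type*} [TopologicalSpace X] (f : X ≃ₜ X) : Prop :=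
  ∃ H : (X × unitInterval) ≃ₜ (X × unitInterval), ∃ K : Set X, IsCompact K ∧
    (∀ p : X × unitInterval, (H p).2 = p.2) ∧
    (∀ x : X, H (x, 0) = (x, 0)) ∧
    (∀ x : X, H (x, 1) = (f x, 1)) ∧
    (∀ t : unitInterval, ∀ x ∉ K, H (x, t) = (x, t))

/-- `Homeo0 X`: the group of compactly supported homeomorphisms of `X` which are
isotopic to the identity through a compactly supported isotopy. -/
def Homeo0 (X : Type*) [TopologicalSpace X] : Subgroup (X ≃ₜ X) where
  carrier := {f | IsotopicToIdC f}
  one_mem' := ⟨Homeomorph.refl _, ∅, isCompact_empty, fun _ => rfl, fun _ => rfl,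
    fun _ => rfl, fun _ _ _ => rfl⟩
  mul_mem' := by
    rintro f g ⟨H₁, K₁, hK₁, hl₁, h0₁, h1₁, hs₁⟩ ⟨H₂, K₂, hK₂, hl₂, h0₂, h1₂, hs₂⟩
    refine ⟨H₂.trans H₁, K₁ ∪ K₂, hK₁.union hK₂, fun p => ?_, fun x => ?_, fun x => ?_,
      fun t x hx => ?_⟩
    · show (H₁ (H₂ p)).2 = p.2
      rw [hl₁, hl₂]
    · show H₁ (H₂ (x, 0)) = (x, 0)
      rw [h0₂, h0₁]
    · show H₁ (H₂ (x, 1)) = ((f * g) x, 1)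
      rw [h1₂, h1₁]
      rfl
    · show H₁ (H₂ (x, t)) = (x, t)
      rw [hs₂ t x fun h => hx (Or.inr h), hs₁ t x fun h => hx (Or.inl h)]
  inv_mem' := by
    rintro f ⟨H, K, hK, hl, h0, h1, hs⟩
    refine ⟨H.symm, K, hK, fun p => ?_, fun x => ?_, fun x => ?_, fun t x hx => ?_⟩
    · conv_rhs => rw [← H.apply_symm_apply p]
      rw [hl]
    · conv_lhs => rw [← h0 x]
      exact H.symm_apply_apply _
    · have : H ((f⁻¹ : X ≃ₜ X) x, 1) = (x, 1) := by
        rw [h1]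
        show (f (f.symm x), 1) = (x, 1)
        rw [f.apply_symm_apply]
      rw [← this, H.symm_apply_apply]
    · conv_lhs => rw [← hs t x hx]
      exact H.symm_apply_apply _

/-- The subgroup of `Homeo₀ X` consisting of homeomorphisms which pointwise fix a
neighbourhood of the set `S`. -/
def fixingNbhd {X : Type*} [TopologicalSpace X] (S : Set X) : Subgroup (Homeo0 X) where
  carrier := {f | ∃ U : Set X, IsOpen U ∧ S ⊆ U ∧ ∀ x ∈ U, (f : X ≃ₜ X) x = x}
  one_mem' := ⟨Set.univ, isOpen_univ, Set.subset_univ _, fun _ _ => rfl⟩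
  mul_mem' := by
    rintro f g ⟨U, hU, hSU, hf⟩ ⟨V, hV, hSV, hg⟩
    refine ⟨U ∩ V, hU.inter hV, Set.subset_inter hSU hSV, fun x hx => ?_⟩
    show (f : X ≃ₜ X) ((g : X ≃ₜ X) x) = x
    rw [hg x hx.2, hf x hx.1]
  inv_mem' := by
    rintro f ⟨U, hU, hSU, hf⟩
    refine ⟨U, hU, hSU, fun x hx => ?_⟩
    show ((f : X ≃ₜ X)).symm x = x
    conv_lhs => rw [← hf x hx]
    exact (f : X ≃ₜ X).symm_apply_apply x

open Metric Set
set_option linter.unusedSectionVars false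
set_option linter.unusedVariables false

/-- A continuous bijection of a nice space which is the identity outside a compact set
is a homeomorphism. -/
noncomputable def mkHomeo {X : Type*} [TopologicalSpace X] [T2Space X]
    [WeaklyLocallyCompactSpace X]
    (g : X → X) (hc : Continuous g) (hb : Function.Bijective g)
    (K : Set X) (hK : IsCompact K) (hid : ∀ x ∉ K, g x = x) : X ≃ₜ X where
  toEquiv := Equiv.ofBijective g hb
  continuous_toFun := hc
  continuous_invFun := by
    have hproper : IsProperMap g := by
      rw [isProperMap_iff_isCompact_preimage]
      refine ⟨hc, fun C hC => ?_⟩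
      have hsub : g ⁻¹' C ⊆ C ∪ K := by
        intro x hx
        by_cases hxK : x ∈ K
        · exact Or.inr hxK
        · exact Or.inl (by rwa [← hid x hxK])
      exact (hC.union hK).of_isClosed_subset (hC.isClosed.preimage hc) hsub
    have hclosed : IsClosedMap g := hproper.isClosedMap
    rw [continuous_iff_isClosed]
    intro C hC
    have : (Equiv.ofBijective g hb).symm ⁻¹' C = g '' C := by
      ext x
      simp only [mem_preimage, mem_image]
      constructor
      · intro h
        exact ⟨_, h, (Equiv.ofBijective g hb).apply_symm_apply x⟩
      · rintro ⟨y, hy, rfl⟩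
        rwa [show (Equiv.ofBijective g hb).symm (g y) = y from
          (Equiv.ofBijective g hb).symm_apply_apply y]
    show IsClosed (⇑(Equiv.ofBijective g hb).symm ⁻¹' C)
    rw [this]
    exact hclosed C hC

section Push

variable {E : Type*} [NormedAddCommGroup E] [NormedSpace ℝ E] [ProperSpace E]

/-- A cone bump function of height `c`, radius `r`, centered at `q`. -/
noncomputable def coneBump (q : E) (c r : ℝ) (x : E) : ℝ := c * max 0 (1 - ‖x - q‖ / r)

variable {q : E} {c r : ℝ}

lemma coneBump_nonneg (hc : 0 ≤ c) (x : E) : 0 ≤ coneBump q c r x :=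
  mul_nonneg hc (le_max_left _ _)

lemma coneBump_le (hc : 0 ≤ c) (hr : 0 < r) (x : E) : coneBump q c r x ≤ c := by
  have : max 0 (1 - ‖x - q‖ / r) ≤ 1 := by
    apply max_le zero_le_one
    have : 0 ≤ ‖x - q‖ / r := div_nonneg (norm_nonneg _) hr.le
    linarith
  calc coneBump q c r x ≤ c * 1 := mul_le_mul_of_nonneg_left this hc
    _ = c := mul_one c

lemma coneBump_self (hc : 0 ≤ c) (hr : 0 < r) : coneBump q c r q = c := by
  simp [coneBump, hr]

lemma coneBump_eq_zero (hr : 0 < r) {x : E} (h : r ≤ ‖x - q‖) : coneBump q c r x = 0 := by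
  have : 1 - ‖x - q‖ / r ≤ 0 := by
    have : 1 ≤ ‖x - q‖ / r := (one_le_div hr).2 h
    linarith
  simp [coneBump, max_eq_left this]

lemma coneBump_lip (hc : 0 ≤ c) (hr : 0 < r) (x y : E) :
    |coneBump q c r x - coneBump q c r y| ≤ (c / r) * ‖x - y‖ := by
  have h1 : |coneBump q c r x - coneBump q c r y|
      = c * |max 0 (1 - ‖x - q‖ / r) - max 0 (1 - ‖y - q‖ / r)| := by
    rw [coneBump, coneBump, ← mul_sub, abs_mul, abs_of_nonneg hc]
  have h2 : |max 0 (1 - ‖x - q‖ / r) - max 0 (1 - ‖y - q‖ / r)|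
      ≤ |(1 - ‖x - q‖ / r) - (1 - ‖y - q‖ / r)| := by
    rw [max_comm 0 _, max_comm 0 _]
    exact abs_max_sub_max_le_abs _ _ _
  have h3 : |(1 - ‖x - q‖ / r) - (1 - ‖y - q‖ / r)| = |‖y - q‖ - ‖x - q‖| / r := by
    rw [show (1 - ‖x - q‖ / r) - (1 - ‖y - q‖ / r) = (‖y - q‖ - ‖x - q‖) / r by ring,
      abs_div, abs_of_pos hr]
  have h4 : |‖y - q‖ - ‖x - q‖| ≤ ‖x - y‖ := by
    rw [abs_sub_comm]
    have := abs_norm_sub_norm_le (x - q) (y - q)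
    simpa using this
  calc |coneBump q c r x - coneBump q c r y|
      ≤ c * (|‖y - q‖ - ‖x - q‖| / r) := by rw [h1, ← h3]; exact mul_le_mul_of_nonneg_left (h3 ▸ h2) hc
    _ ≤ c * (‖x - y‖ / r) := mul_le_mul_of_nonneg_left ((div_le_div_iff_of_pos_right hr).2 h4) hc
    _ = (c / r) * ‖x - y‖ := by ring

lemma coneBump_continuous : Continuous (coneBump q c r) := by
  unfold coneBump
  fun_prop

end Push

section Push2

open Metric Set
variable {E : Type*} [NormedAddCommGroup E] [NormedSpace ℝ E] [ProperSpace E]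

/-- Pushing along direction `e` by the time-`t` cone bump. -/
noncomputable def conePushFun (q : E) (c r : ℝ) (e : E) (t : ℝ) (x : E) : E :=
  x + (t * coneBump q c r x) • e

variable {q : E} {c r : ℝ} {e : E}

lemma pushFun_injective (hc : 0 ≤ c) (hcr : c < r) (he : ‖e‖ = 1)
    {t : ℝ} (ht : t ∈ Set.Icc (0:ℝ) 1) : Function.Injective (conePushFun q c r e t) := by
  have hr : 0 < r := lt_of_le_of_lt hc hcr
  intro x y hxy
  have hsub : x - y = ((t * coneBump q c r y) - (t * coneBump q c r x)) • e := by
    have h := hxy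
    unfold conePushFun at h
    rw [sub_smul]
    linear_combination (norm := module) h
  have hnorm : ‖x - y‖ ≤ (c / r) * ‖x - y‖ := by
    calc ‖x - y‖ = |(t * coneBump q c r y) - (t * coneBump q c r x)| := by
          rw [hsub, norm_smul, he, mul_one, Real.norm_eq_abs]
      _ = |t| * |coneBump q c r y - coneBump q c r x| := by rw [← mul_sub, abs_mul]
      _ ≤ 1 * |coneBump q c r y - coneBump q c r x| := by
          apply mul_le_mul_of_nonneg_right _ (abs_nonneg _)
          rw [abs_le]; constructor <;> linarith [ht.1, ht.2]
      _ = |coneBump q c r y - coneBump q c r x| := one_mul _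
      _ ≤ (c / r) * ‖y - x‖ := coneBump_lip hc hr y x
      _ = (c / r) * ‖x - y‖ := by rw [norm_sub_rev]
  have hlt : c / r < 1 := (div_lt_one hr).2 hcr
  by_contra hne
  have hpos : 0 < ‖x - y‖ := by
    rw [norm_pos_iff, sub_ne_zero]
    exact fun h => hne (by rw [h])
  nlinarith

lemma pushFun_surjective (hc : 0 ≤ c) (hcr : c < r) {t : ℝ} (ht : t ∈ Set.Icc (0:ℝ) 1) :
    Function.Surjective (conePushFun q c r e t) := by
  have hr : 0 < r := lt_of_le_of_lt hc hcr
  intro z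
  set G : ℝ → ℝ := fun s => s - t * coneBump q c r (z - s • e) with hG
  have hcont : ContinuousOn G (Set.Icc 0 c) := by
    apply Continuous.continuousOn
    unfold G
    have : Continuous (coneBump q c r (E := E)) := coneBump_continuous
    fun_prop
  have hG0 : G 0 ≤ 0 := by
    simp only [hG]
    have h1 : 0 ≤ coneBump q c r (z - (0:ℝ) • e) := coneBump_nonneg hc _
    nlinarith [ht.1]
  have hGc : 0 ≤ G c := by
    simp only [hG]
    have h1 : coneBump q c r (z - c • e) ≤ c := coneBump_le hc hr _
    have h2 : 0 ≤ coneBump q c r (z - c • e) := coneBump_nonneg hc _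
    nlinarith [ht.1, ht.2]
  have h0c : (0:ℝ) ≤ c := hc
  have : (0:ℝ) ∈ Set.Icc (G 0) (G c) := ⟨hG0, hGc⟩
  obtain ⟨s, hs, hGs⟩ := intermediate_value_Icc h0c hcont this
  refine ⟨z - s • e, ?_⟩
  have hts : t * coneBump q c r (z - s • e) = s := by
    have := hGs
    simp only [hG] at this
    linarith
  unfold conePushFun
  rw [hts]
  abel

lemma pushFun_continuous : Continuous (fun p : E × ℝ => conePushFun q c r e p.2 p.1) := by
  unfold conePushFun
  have : Continuous (coneBump q c r (E := E)) := coneBump_continuous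
  fun_prop

lemma pushFun_id (hr : 0 < r) {x : E} (hx : x ∉ closedBall q r) (t : ℝ) :
    conePushFun q c r e t x = x := by
  rw [mem_closedBall, not_le, dist_eq_norm] at hx
  unfold conePushFun
  rw [coneBump_eq_zero hr hx.le, mul_zero, zero_smul, add_zero]

lemma pushFun_apply_self (hc : 0 ≤ c) (hr : 0 < r) :
    conePushFun q c r e 1 q = q + c • e := by
  unfold conePushFun
  rw [coneBump_self hc hr, one_mul]

end Push2

section Push3

open Metric Set
variable {E : Type*} [NormedAddCommGroup E] [NormedSpace ℝ E] [ProperSpace E]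
variable (q : E) (c r : ℝ) (e : E)

/-- The time-one push homeomorphism. -/
noncomputable def pushHomeo (hc : 0 ≤ c) (hcr : c < r) (he : ‖e‖ = 1) : E ≃ₜ E :=
  mkHomeo (conePushFun q c r e 1)
    (pushFun_continuous.comp (Continuous.prodMk continuous_id continuous_const))
    ⟨pushFun_injective hc hcr he ⟨zero_le_one, le_refl 1⟩,
     pushFun_surjective hc hcr ⟨zero_le_one, le_refl 1⟩⟩
    (closedBall q r) (isCompact_closedBall q r)
    (fun x hx => pushFun_id (lt_of_le_of_lt hc hcr) hx 1)

variable {q c r e}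

lemma pushHomeo_apply (hc : 0 ≤ c) (hcr : c < r) (he : ‖e‖ = 1) (x : E) :
    pushHomeo q c r e hc hcr he x = conePushFun q c r e 1 x := rfl

/-- The push isotopy as a level-preserving homeomorphism of `E × [0,1]`. -/
noncomputable def pushIso (q : E) (hc : 0 ≤ c) (hcr : c < r) (he : ‖e‖ = 1) :
    (E × unitInterval) ≃ₜ (E × unitInterval) :=
  mkHomeo (fun p => (conePushFun q c r e (p.2 : ℝ) p.1, p.2))
    ((pushFun_continuous.comp
      (Continuous.prodMk continuous_fst (continuous_subtype_val.comp continuous_snd))).prodMk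
      continuous_snd)
    ⟨by
      rintro ⟨x, t⟩ ⟨y, s⟩ h
      rw [Prod.mk.injEq] at h
      obtain ⟨h1, h2⟩ := h
      subst h2
      exact Prod.ext (pushFun_injective hc hcr he ⟨t.2.1, t.2.2⟩ h1) rfl,
     by
      rintro ⟨z, t⟩
      obtain ⟨x, hx⟩ := pushFun_surjective (q := q) (e := e) hc hcr (t := (t:ℝ))
        ⟨t.2.1, t.2.2⟩ z
      exact ⟨(x, t), by simp [hx]⟩⟩
    (closedBall q r ×ˢ (univ : Set unitInterval))
    ((isCompact_closedBall q r).prod isCompact_univ)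
    (by
      rintro ⟨x, t⟩ hp
      simp only [mem_prod, mem_univ, and_true] at hp
      exact Prod.ext (pushFun_id (lt_of_le_of_lt hc hcr) hp _) rfl)

lemma pushIso_apply (q : E) (hc : 0 ≤ c) (hcr : c < r) (he : ‖e‖ = 1) (p : E × unitInterval) :
    pushIso q hc hcr he p = (conePushFun q c r e (p.2 : ℝ) p.1, p.2) := rfl

lemma pushHomeo_isotopic (hc : 0 ≤ c) (hcr : c < r) (he : ‖e‖ = 1) :
    IsotopicToIdC (pushHomeo q c r e hc hcr he) := by
  refine ⟨pushIso q hc hcr he, closedBall q r, isCompact_closedBall q r,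
    fun p => by rw [pushIso_apply], fun x => ?_, fun x => ?_, fun t x hx => ?_⟩
  · rw [pushIso_apply]
    have h0 : ((0 : unitInterval) : ℝ) = 0 := rfl
    simp [h0, conePushFun]
  · rw [pushIso_apply]
    rfl
  · rw [pushIso_apply]
    show (conePushFun q c r e (t : ℝ) x, t) = (x, t)
    rw [pushFun_id (lt_of_le_of_lt hc hcr) hx]

end Push3

section Main

open Metric Set

lemma mem_Homeo0_iff {X : Type*} [TopologicalSpace X] {f : X ≃ₜ X} :
    f ∈ Homeo0 X ↔ IsotopicToIdC f := Iff.rfl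

lemma mem_fixingNbhd_iff {X : Type*} [TopologicalSpace X] {S : Set X} {f : Homeo0 X} :
    f ∈ fixingNbhd S ↔
      ∃ U : Set X, IsOpen U ∧ S ⊆ U ∧ ∀ x ∈ U, (f : X ≃ₜ X) x = x := Iff.rfl

variable {E : Type*} [NormedAddCommGroup E] [NormedSpace ℝ E] [ProperSpace E]

/-- One push step: a compactly supported homeomorphism fixing a neighbourhood of `p`
which moves `q` away from `p` by a factor `5/4`. -/
lemma push_step (p : E) {q : E} (hq : q ≠ p) :
    ∃ h : Homeo0 E, h ∈ fixingNbhd {p} ∧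
      dist ((h : E ≃ₜ E) q) p = (5 / 4) * dist q p := by
  set D := dist q p with hD_def
  have hD : 0 < D := dist_pos.2 hq
  set e : E := D⁻¹ • (q - p) with he_def
  have hqp : ‖q - p‖ = D := by rw [hD_def, dist_eq_norm]
  have he : ‖e‖ = 1 := by
    rw [he_def, norm_smul, hqp, Real.norm_eq_abs, abs_of_pos (inv_pos.2 hD),
      inv_mul_cancel₀ hD.ne']
  have hc : (0:ℝ) ≤ D / 4 := by positivity
  have hcr : D / 4 < D / 2 := by linarith
  have hr : (0:ℝ) < D / 2 := by linarith
  refine ⟨⟨pushHomeo q (D/4) (D/2) e hc hcr he, pushHomeo_isotopic hc hcr he⟩, ?_, ?_⟩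
  · rw [mem_fixingNbhd_iff]
    refine ⟨(closedBall q (D/2))ᶜ, isClosed_closedBall.isOpen_compl, ?_, fun x hx => ?_⟩
    · rw [singleton_subset_iff]
      simp only [mem_compl_iff, mem_closedBall]
      rw [dist_comm]
      push_neg
      linarith
    · show pushHomeo q (D/4) (D/2) e hc hcr he x = x
      rw [pushHomeo_apply]
      exact pushFun_id hr hx 1
  · show dist (pushHomeo q (D/4) (D/2) e hc hcr he q) p = (5/4) * D
    rw [pushHomeo_apply, pushFun_apply_self hc hr]
    have hqe : q - p = D • e := by
      rw [he_def, smul_smul, mul_inv_cancel₀ hD.ne', one_smul]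
    have : q + (D/4) • e - p = (D + D/4) • e := by
      rw [add_smul, add_sub_right_comm, hqe]
    rw [dist_eq_norm, this, norm_smul, he, mul_one, Real.norm_eq_abs,
      abs_of_pos (by linarith)]
    ring

lemma push_iter (p : E) {q : E} (hq : q ≠ p) (n : ℕ) :
    ∃ h : Homeo0 E, h ∈ fixingNbhd {p} ∧
      (5/4 : ℝ) ^ n * dist q p ≤ dist ((h : E ≃ₜ E) q) p := by
  induction n with
  | zero =>
    refine ⟨1, one_mem _, ?_⟩
    have h1 : ((1 : Homeo0 E) : E ≃ₜ E) q = q := rfl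
    rw [h1, pow_zero, one_mul]
  | succ n ih =>
    obtain ⟨h, hmem, hdist⟩ := ih
    have hD : 0 < dist q p := dist_pos.2 hq
    have hq' : (h : E ≃ₜ E) q ≠ p := by
      rw [← dist_pos]
      calc (0:ℝ) < (5/4:ℝ)^n * dist q p := by positivity
        _ ≤ _ := hdist
    obtain ⟨g, gmem, gdist⟩ := push_step p hq'
    refine ⟨g * h, mul_mem gmem hmem, ?_⟩
    have hco : ((g * h : Homeo0 E) : E ≃ₜ E) q = (g : E ≃ₜ E) ((h : E ≃ₜ E) q) := rfl
    rw [hco, gdist, pow_succ]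
    calc (5/4:ℝ)^n * (5/4) * dist q p = (5/4) * ((5/4:ℝ)^n * dist q p) := by ring
      _ ≤ (5/4) * dist ((h : E ≃ₜ E) q) p := by linarith
      _ = _ := rfl

lemma exists_far (p : E) {q : E} (hq : q ≠ p) (R : ℝ) :
    ∃ h : Homeo0 E, h ∈ fixingNbhd {p} ∧ R < dist ((h : E ≃ₜ E) q) p := by
  have hD : 0 < dist q p := dist_pos.2 hq
  obtain ⟨n, hn⟩ := pow_unbounded_of_one_lt (R / dist q p) (by norm_num : (1:ℝ) < 5/4)
  obtain ⟨h, hmem, hd⟩ := push_iter p hq n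
  refine ⟨h, hmem, lt_of_lt_of_le ?_ hd⟩
  rw [div_lt_iff₀ hD] at hn
  linarith

end Main

/-- Fragmentation with respect to two points: for distinct `p₁ ≠ p₂` in `ℝ^d`, any
`f ∈ Homeo₀(ℝ^d)` can be written `f = f₁ f₂ f₃` with `f₁, f₃ ∈ G_{p₁}^d` and
`f₂ ∈ G_{p₂}^d`, where `G_p^d` consists of homeomorphisms fixing a neighbourhood
of `p`. -/
theorem stmt_6 {d : ℕ} (hd : 1 ≤ d)
    {p₁ p₂ : EuclideanSpace ℝ (Fin d)} (hp : p₁ ≠ p₂)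
    (f : Homeo0 (EuclideanSpace ℝ (Fin d))) :
    ∃ f₁ f₂ f₃ : Homeo0 (EuclideanSpace ℝ (Fin d)),
      f₁ ∈ fixingNbhd {p₁} ∧ f₂ ∈ fixingNbhd {p₂} ∧ f₃ ∈ fixingNbhd {p₁} ∧
        f = f₁ * f₂ * f₃ := by
  obtain ⟨H, K, hK, hl, h0, h1, hs⟩ := mem_Homeo0_iff.1 f.2
  have hfix : ∀ x ∉ K, ((f : EuclideanSpace ℝ (Fin d) ≃ₜ EuclideanSpace ℝ (Fin d))) x = x := by
    intro x hx
    have h2 : ((f : EuclideanSpace ℝ (Fin d) ≃ₜ EuclideanSpace ℝ (Fin d)) x, (1:unitInterval)) = (x, (1:unitInterval)) :=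
      (h1 x).symm.trans (hs 1 x hx)
    exact congrArg Prod.fst h2
  obtain ⟨R, hR⟩ := hK.isBounded.subset_closedBall p₁
  obtain ⟨h, hmem, hfar⟩ := exists_far p₁ hp.symm R
  refine ⟨h, h⁻¹ * f * h, h⁻¹, hmem, ?_, inv_mem hmem, by group⟩
  rw [mem_fixingNbhd_iff]
  refine ⟨(h : EuclideanSpace ℝ (Fin d) ≃ₜ EuclideanSpace ℝ (Fin d)) ⁻¹' (Metric.closedBall p₁ R)ᶜ,
    Metric.isClosed_closedBall.isOpen_compl.preimage (h : EuclideanSpace ℝ (Fin d) ≃ₜ EuclideanSpace ℝ (Fin d)).continuous,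
    ?_, fun x hx => ?_⟩
  · rw [Set.singleton_subset_iff]
    simp only [Set.mem_preimage, Set.mem_compl_iff, Metric.mem_closedBall]
    push_neg
    exact hfar
  · have hxK : (h : EuclideanSpace ℝ (Fin d) ≃ₜ EuclideanSpace ℝ (Fin d)) x ∉ K := by
      intro hxK
      exact hx (hR hxK)
    have hco : ((h⁻¹ * f * h : Homeo0 (EuclideanSpace ℝ (Fin d))) : EuclideanSpace ℝ (Fin d) ≃ₜ EuclideanSpace ℝ (Fin d)) x
        = ((h : EuclideanSpace ℝ (Fin d) ≃ₜ EuclideanSpace ℝ (Fin d)))⁻¹ ((f : EuclideanSpace ℝ (Fin d) ≃ₜ EuclideanSpace ℝ (Fin d)) ((h : EuclideanSpace ℝ (Fin d) ≃ₜ EuclideanSpace ℝ (Fin d)) x)) := rfl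
    rw [hco, hfix _ hxK]
    exact (h : EuclideanSpace ℝ (Fin d) ≃ₜ EuclideanSpace ℝ (Fin d)).symm_apply_apply x
end

section
/- Let d ≥ 1 and let D and D' be two disjoint embedded (d−1)-dimensional balls in ℝᵈ. Then for every homeomorphism f in Homeo₀(ℝᵈ) there exist homeomorphisms h₁, h₃ in H_D^d and h₂ in H_{D'}^d such that f = h₁ ∘ h₂ ∘ h₃. -/
/-- The closed unit ball of `ℝ^{d-1} × {0} ⊆ ℝ^d` (a single point when `d = 1`). -/
def stdBallSet (d : ℕ) : Set (EuclideanSpace ℝ (Fin d)) :=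
  {x | ‖x‖ ≤ 1 ∧ ∀ h : d - 1 < d, x ⟨d - 1, h⟩ = 0}

/-- An embedded `(d-1)`-dimensional ball in `ℝ^d`: the image of the closed unit ball of
`ℝ^{d-1} × {0}` under a homeomorphism of `ℝ^d`. -/
def IsEmbeddedBall {d : ℕ} (D : Set (EuclideanSpace ℝ (Fin d))) : Prop :=
  ∃ e : EuclideanSpace ℝ (Fin d) ≃ₜ EuclideanSpace ℝ (Fin d), D = e '' stdBallSet d

noncomputable section
variable {d : ℕ}

variable {d : ℕ}

/-- Sum of squares of the coordinates other than `J`. -/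
def fragQ (J : Fin d) (x : EuclideanSpace ℝ (Fin d)) : ℝ :=
  ∑ i ∈ Finset.univ.erase J, x i ^ 2

/-- Norm of the part of `x` orthogonal to the `J`-axis. -/
def fragY (J : Fin d) (x : EuclideanSpace ℝ (Fin d)) : ℝ := Real.sqrt (fragQ J x)

/-- Distance of the orthogonal part to the unit ball. -/
def fragA (J : Fin d) (x : EuclideanSpace ℝ (Fin d)) : ℝ := max (fragY J x - 1) 0

/-- Distance to the standard flat ball. -/
def fragN (J : Fin d) (x : EuclideanSpace ℝ (Fin d)) : ℝ :=
  Real.sqrt (fragA J x ^ 2 + x J ^ 2)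

lemma fragQ_nonneg (J : Fin d) (x) : 0 ≤ fragQ J x :=
  Finset.sum_nonneg fun i _ => sq_nonneg _

lemma fragY_nonneg (J : Fin d) (x) : 0 ≤ fragY J x := Real.sqrt_nonneg _
lemma fragA_nonneg (J : Fin d) (x) : 0 ≤ fragA J x := le_max_right _ _
lemma fragN_nonneg (J : Fin d) (x) : 0 ≤ fragN J x := Real.sqrt_nonneg _

lemma fragY_sq (J : Fin d) (x) : fragY J x ^ 2 = fragQ J x :=
  Real.sq_sqrt (fragQ_nonneg J x)

lemma fragN_sq (J : Fin d) (x) : fragN J x ^ 2 = fragA J x ^ 2 + x J ^ 2 :=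
  Real.sq_sqrt (by positivity)

lemma fragA_le_fragN (J : Fin d) (x) : fragA J x ≤ fragN J x := by
  rw [fragN]
  conv_lhs => rw [← abs_of_nonneg (fragA_nonneg J x), ← Real.sqrt_sq_eq_abs]
  exact Real.sqrt_le_sqrt (by nlinarith [sq_nonneg (x J)])

lemma abs_apply_le_fragN (J : Fin d) (x) : |x J| ≤ fragN J x := by
  rw [fragN]
  conv_lhs => rw [← Real.sqrt_sq_eq_abs]
  exact Real.sqrt_le_sqrt (by nlinarith [sq_nonneg (fragA J x)])

/-- `fragN x = 0` iff `x` is in the standard flat ball. -/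
lemma fragN_eq_zero_iff (J : Fin d) (x) : fragN J x = 0 ↔ fragY J x ≤ 1 ∧ x J = 0 := by
  rw [fragN, Real.sqrt_eq_zero (by positivity)]
  constructor
  · intro h
    have h1 : fragA J x = 0 := by nlinarith [sq_nonneg (fragA J x), sq_nonneg (x J)]
    have h2 : (x J) = 0 := by nlinarith [sq_nonneg (fragA J x), sq_nonneg (x J)]
    refine ⟨?_, h2⟩
    have h3 : fragY J x - 1 ≤ fragA J x := by rw [fragA]; exact le_max_left _ _
    rw [h1] at h3; linarith
  · rintro ⟨h1, h2⟩
    have : fragA J x = 0 := max_eq_right (by linarith)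
    rw [this, h2]; ring

lemma continuous_fragN (J : Fin d) : Continuous (fragN J) := by
  unfold fragN fragA fragY fragQ
  fun_prop

lemma continuous_fragY (J : Fin d) : Continuous (fragY J) := by
  unfold fragY fragQ; fun_prop

/-- norm bound from fragN -/
lemma norm_le_of_fragN (J : Fin d) (x) {r : ℝ} (hr : 0 ≤ r) (h : fragN J x ≤ r) :
    ‖x‖ ≤ 2 * r + 1 := by
  have ha : fragA J x ≤ r := (fragA_le_fragN J x).trans h
  have hs : |x J| ≤ r := (abs_apply_le_fragN J x).trans h
  have hy : fragY J x ≤ r + 1 := by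
    have := le_max_left (fragY J x - 1) 0
    have : fragY J x - 1 ≤ fragA J x := le_max_left _ _
    linarith
  have hq : fragQ J x ≤ (r + 1) ^ 2 := by
    have := fragY_sq J x
    nlinarith [fragY_nonneg J x]
  have hnorm : ‖x‖ = Real.sqrt (∑ i, x i ^ 2) := by
    rw [EuclideanSpace.norm_eq]; congr 1
    exact Finset.sum_congr rfl fun i _ => by rw [Real.norm_eq_abs, sq_abs]
  have hsum : (∑ i, x i ^ 2) = x J ^ 2 + fragQ J x := by
    rw [fragQ, ← Finset.add_sum_erase _ _ (Finset.mem_univ J)]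
  rw [hnorm, hsum]
  calc Real.sqrt (x J ^2 + fragQ J x) ≤ Real.sqrt ((2*r+1)^2) := by
        apply Real.sqrt_le_sqrt
        have : x J ^ 2 ≤ r ^2 := by nlinarith [abs_nonneg (x J), sq_abs (x J)]
        nlinarith
    _ = 2*r+1 := Real.sqrt_sq (by linarith)

/-- The set where fragN ≤ r is compact. -/
lemma isCompact_fragN_le (J : Fin d) (r : ℝ) (hr : 0 ≤ r) :
    IsCompact {x : EuclideanSpace ℝ (Fin d) | fragN J x ≤ r} := by
  have hclosed : IsClosed {x : EuclideanSpace ℝ (Fin d) | fragN J x ≤ r} :=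
    isClosed_le (continuous_fragN J) continuous_const
  have hsub : {x : EuclideanSpace ℝ (Fin d) | fragN J x ≤ r} ⊆ Metric.closedBall 0 (2*r+1) := by
    intro x hx
    rw [Metric.mem_closedBall, dist_zero_right]
    exact norm_le_of_fragN J x hr hx
  exact (isCompact_closedBall (0 : EuclideanSpace ℝ (Fin d)) (2*r+1)).of_isClosed_subset
    hclosed hsub

structure FragNice (δ M : ℝ) (g : ℝ → ℝ) : Prop where
  hδ : 0 < δ
  low : ∀ r, r ≤ δ → g r = r
  high : ∀ r, M ≤ r → g r = r
  mono : Monotone g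

namespace FragNice
lemma ge_δ {δ M g} (h : FragNice δ M g) {r : ℝ} (hr : δ ≤ r) : δ ≤ g r := by
  calc δ = g δ := (h.low δ le_rfl).symm
    _ ≤ g r := h.mono hr
lemma pos {δ M g} (h : FragNice δ M g) {r : ℝ} (hr : 0 < r) : 0 < g r := by
  rcases le_or_gt r δ with hc | hc
  · rw [h.low r hc]; exact hr
  · exact lt_of_lt_of_le h.hδ (h.ge_δ hc.le)
end FragNice

variable (J : Fin d) (g : ℝ → ℝ) (δ : ℝ)

def fragL (x : EuclideanSpace ℝ (Fin d)) : ℝ :=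
  1 + (g (fragN J x) - fragN J x) / max (fragN J x) δ
def fragC (x : EuclideanSpace ℝ (Fin d)) : ℝ :=
  1 + fragA J x * (fragL J g δ x - 1) / max (fragY J x) 1
def fragPsi (x : EuclideanSpace ℝ (Fin d)) : EuclideanSpace ℝ (Fin d) :=
  WithLp.toLp 2 (fun i => if i = J then fragL J g δ x * x i else fragC J g δ x * x i)

variable {J g δ}

lemma fragPsi_apply (x) (i : Fin d) :
    fragPsi J g δ x i = if i = J then fragL J g δ x * x i else fragC J g δ x * x i := rfl

lemma fragL_of_le {M} (h : FragNice δ M g) {x} (hx : fragN J x ≤ δ) : fragL J g δ x = 1 := by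
  rw [fragL, h.low _ hx]; ring

lemma fragL_of_ge {M} (h : FragNice δ M g) {x} (hx : δ ≤ fragN J x) :
    fragL J g δ x = g (fragN J x) / fragN J x := by
  have hpos : 0 < fragN J x := lt_of_lt_of_le h.hδ hx
  rw [fragL, max_eq_left hx]
  field_simp
  ring

lemma fragL_pos {M} (h : FragNice δ M g) (x) : 0 < fragL J g δ x := by
  rcases le_or_gt (fragN J x) δ with hc | hc
  · rw [fragL_of_le h hc]; norm_num
  · rw [fragL_of_ge h hc.le]
    exact div_pos (h.pos (lt_trans h.hδ hc)) (lt_trans h.hδ hc)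

lemma fragL_mul_fragN {M} (h : FragNice δ M g) (x) :
    fragL J g δ x * fragN J x = g (fragN J x) := by
  rcases le_or_gt (fragN J x) δ with hc | hc
  · rw [fragL_of_le h hc, h.low _ hc, one_mul]
  · have hpos : 0 < fragN J x := lt_of_lt_of_le h.hδ hc.le
    rw [fragL_of_ge h hc.le]
    field_simp

lemma fragA_le_maxY (x : EuclideanSpace ℝ (Fin d)) : fragA J x ≤ max (fragY J x) 1 := by
  rw [fragA]
  apply max_le
  · linarith [le_max_left (fragY J x) (1:ℝ)]
  · linarith [le_max_right (fragY J x) (1:ℝ)]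

lemma fragC_pos {M} (h : FragNice δ M g) (x) : 0 < fragC J g δ x := by
  have hmax : (0:ℝ) < max (fragY J x) 1 := lt_of_lt_of_le one_pos (le_max_right _ _)
  have hL := fragL_pos (J := J) h x
  have ha := fragA_nonneg J x
  have ham := fragA_le_maxY (J := J) x
  rcases le_or_gt 1 (fragL J g δ x) with hc | hc
  · have h0 : 0 ≤ fragA J x * (fragL J g δ x - 1) / max (fragY J x) 1 :=
      div_nonneg (mul_nonneg ha (by linarith)) hmax.le
    rw [fragC]; linarith
  · have key : fragL J g δ x - 1 ≤ fragA J x * (fragL J g δ x - 1) / max (fragY J x) 1 := by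
      rw [le_div_iff₀ hmax]
      nlinarith
    rw [fragC]; linarith

lemma fragC_of_y_le {x : EuclideanSpace ℝ (Fin d)} (hx : fragY J x ≤ 1) :
    fragC J g δ x = 1 := by
  have : fragA J x = 0 := max_eq_right (by linarith)
  rw [fragC, this]; ring

lemma fragC_of_y_gt {x : EuclideanSpace ℝ (Fin d)} (hx : 1 < fragY J x) :
    fragC J g δ x * fragY J x = 1 + fragA J x * fragL J g δ x := by
  have hA : fragA J x = fragY J x - 1 := max_eq_left (by linarith)
  have hy : (0:ℝ) < fragY J x := by linarith
  rw [fragC, max_eq_left hx.le, hA]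
  field_simp
  ring

/-- coordinates: J-coordinate of psi -/
lemma fragPsi_J (x) : fragPsi J g δ x J = fragL J g δ x * x J := by
  rw [fragPsi_apply, if_pos rfl]

lemma fragQ_psi (x) : fragQ J (fragPsi J g δ x) = fragC J g δ x ^ 2 * fragQ J x := by
  rw [fragQ, fragQ, Finset.mul_sum]
  apply Finset.sum_congr rfl
  intro i hi
  have : i ≠ J := (Finset.mem_erase.mp hi).1
  rw [fragPsi_apply, if_neg this]
  ring

lemma fragY_psi {M} (h : FragNice δ M g) (x) :
    fragY J (fragPsi J g δ x) = fragC J g δ x * fragY J x := by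
  rw [fragY, fragQ_psi, Real.sqrt_mul (sq_nonneg _), Real.sqrt_sq (fragC_pos h x).le, fragY]

lemma fragA_psi {M} (h : FragNice δ M g) (x) :
    fragA J (fragPsi J g δ x) = fragA J x * fragL J g δ x := by
  rcases le_or_gt (fragY J x) 1 with hc | hc
  · have h1 : fragA J x = 0 := max_eq_right (by linarith)
    have h2 : fragY J (fragPsi J g δ x) = fragY J x := by
      rw [fragY_psi h, fragC_of_y_le hc, one_mul]
    rw [fragA, h2, h1, max_eq_right (by linarith), zero_mul]
  · have hA : fragA J x = fragY J x - 1 := max_eq_left (by linarith)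
    have h2 : fragY J (fragPsi J g δ x) = 1 + fragA J x * fragL J g δ x := by
      rw [fragY_psi h, fragC_of_y_gt hc]
    rw [fragA, h2]
    have : 0 ≤ fragA J x * fragL J g δ x :=
      mul_nonneg (fragA_nonneg J x) (fragL_pos h x).le
    rw [max_eq_left (by linarith)]
    ring

lemma fragN_psi {M} (h : FragNice δ M g) (x) :
    fragN J (fragPsi J g δ x) = g (fragN J x) := by
  have hL := fragL_pos (J := J) h x
  rw [fragN, fragA_psi h, fragPsi_J]
  have : fragA J x * fragL J g δ x ^ 2 * fragA J x + fragL J g δ x * x J * (fragL J g δ x * x J)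
      = fragL J g δ x ^2 * (fragA J x ^2 + x J ^2) := by ring
  rw [show (fragA J x * fragL J g δ x) ^ 2 + (fragL J g δ x * x J) ^ 2
      = fragL J g δ x ^2 * (fragA J x ^2 + x J ^2) by ring]
  rw [Real.sqrt_mul (sq_nonneg _), Real.sqrt_sq hL.le, ← fragN, fragL_mul_fragN h]

lemma fragPsi_fix {x : EuclideanSpace ℝ (Fin d)} (hfix : g (fragN J x) = fragN J x) :
    fragPsi J g δ x = x := by
  have hL : fragL J g δ x = 1 := by rw [fragL, hfix]; ring
  have hC : fragC J g δ x = 1 := by rw [fragC, hL]; ring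
  ext i
  rw [fragPsi_apply]
  split <;> simp [hL, hC]

/-- Composition law. -/
lemma fragNice_comp {δ M : ℝ} {g g' : ℝ → ℝ} (h : FragNice δ M g) (h' : FragNice δ M g') :
    FragNice δ M (g' ∘ g) :=
  ⟨h.hδ, fun r hr => by rw [Function.comp_apply, h.low _ hr, h'.low _ hr],
    fun r hr => by rw [Function.comp_apply, h.high _ hr, h'.high _ hr],
    h'.mono.comp h.mono⟩

lemma fragL_comp {M g'} (h : FragNice δ M g) (h' : FragNice δ M g') (x) :
    fragL J g' δ (fragPsi J g δ x) * fragL J g δ x = fragL J (g' ∘ g) δ x := by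
  rcases le_or_gt (fragN J x) δ with hc | hc
  · have h1 := fragL_of_le h hc
    have hn' : fragN J (fragPsi J g δ x) = fragN J x := by rw [fragN_psi h, h.low _ hc]
    have h2 : fragL J g' δ (fragPsi J g δ x) = 1 := by
      rw [fragL, hn', h'.low _ hc]; ring
    have h3 : fragL J (g' ∘ g) δ x = 1 := by
      rw [fragL, Function.comp_apply, h.low _ hc, h'.low _ hc]; ring
    rw [h1, h2, h3, one_mul]
  · have hpos : 0 < fragN J x := lt_of_lt_of_le h.hδ hc.le
    have hgpos : 0 < g (fragN J x) := h.pos hpos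
    have hgδ : δ ≤ g (fragN J x) := h.ge_δ hc.le
    have hn' : fragN J (fragPsi J g δ x) = g (fragN J x) := fragN_psi h x
    rw [fragL_of_ge h hc.le, fragL_of_ge h' (by rw [hn']; exact hgδ), hn',
      fragL_of_ge (fragNice_comp h h') hc.le]
    rw [Function.comp_apply]
    field_simp

lemma fragC_comp {M g'} (h : FragNice δ M g) (h' : FragNice δ M g') (x) :
    fragC J g' δ (fragPsi J g δ x) * fragC J g δ x = fragC J (g' ∘ g) δ x := by
  rcases le_or_gt (fragY J x) 1 with hc | hc
  · have h1 : fragC J g δ x = 1 := fragC_of_y_le hc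
    have hy' : fragY J (fragPsi J g δ x) = fragY J x := by rw [fragY_psi h, h1, one_mul]
    have h2 : fragC J g' δ (fragPsi J g δ x) = 1 := fragC_of_y_le (by rw [hy']; exact hc)
    have h3 : fragC J (g' ∘ g) δ x = 1 := fragC_of_y_le hc
    rw [h1, h2, h3, one_mul]
  · have hy : (0:ℝ) < fragY J x := by linarith
    have hA : fragA J x = fragY J x - 1 := max_eq_left (by linarith)
    have hApos : 0 < fragA J x := by rw [hA]; linarith
    have hL := fragL_pos (J := J) h x
    have hL' : 0 < fragL J g' δ (fragPsi J g δ x) := fragL_pos h' _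
    have hy' : fragY J (fragPsi J g δ x) = 1 + fragA J x * fragL J g δ x := by
      rw [fragY_psi h, fragC_of_y_gt hc]
    have hy'gt : 1 < fragY J (fragPsi J g δ x) := by
      rw [hy']; nlinarith
    have hA' : fragA J (fragPsi J g δ x) = fragA J x * fragL J g δ x := fragA_psi h x
    have e1 := fragC_of_y_gt (J := J) (g := g) (δ := δ) hc
    have e2 := fragC_of_y_gt (J := J) (g := g') (δ := δ) hy'gt
    have e3 := fragC_of_y_gt (J := J) (g := g' ∘ g) (δ := δ) hc
    have eL := fragL_comp (J := J) h h' x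
    -- (c' * c) * y = c_{g'g} * y  then cancel y
    have : fragC J g' δ (fragPsi J g δ x) * fragC J g δ x * fragY J x
        = fragC J (g' ∘ g) δ x * fragY J x := by
      have hy'pos : (0:ℝ) < 1 + fragA J x * fragL J g δ x := by nlinarith
      have : fragC J g' δ (fragPsi J g δ x) * (1 + fragA J x * fragL J g δ x)
          = 1 + fragA J x * (fragL J g' δ (fragPsi J g δ x) * fragL J g δ x) := by
        rw [← hy', e2, hA']
        ring
      calc fragC J g' δ (fragPsi J g δ x) * fragC J g δ x * fragY J x
          = fragC J g' δ (fragPsi J g δ x) * (fragC J g δ x * fragY J x) := by ring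
        _ = fragC J g' δ (fragPsi J g δ x) * (1 + fragA J x * fragL J g δ x) := by rw [e1]
        _ = 1 + fragA J x * (fragL J g' δ (fragPsi J g δ x) * fragL J g δ x) := this
        _ = 1 + fragA J x * fragL J (g' ∘ g) δ x := by rw [eL]
        _ = fragC J (g' ∘ g) δ x * fragY J x := e3.symm
    exact mul_right_cancel₀ (ne_of_gt hy) this

lemma fragPsi_comp {M g'} (h : FragNice δ M g) (h' : FragNice δ M g') (x) :
    fragPsi J g' δ (fragPsi J g δ x) = fragPsi J (g' ∘ g) δ x := by
  ext i
  rw [fragPsi_apply, fragPsi_apply, fragPsi_apply]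
  split
  · rw [← mul_assoc, fragL_comp h h']
  · rw [← mul_assoc, fragC_comp h h']


/-- Piecewise linear increasing homeomorphism of `ℝ`: identity on `(-∞, δ]` and `[M, ∞)`,
maps `R` to `ε`. -/
def fragPl (δ ε R M r : ℝ) : ℝ :=
  if r ≤ δ then r
  else if r ≤ R then δ + (r - δ) * ((ε - δ) / (R - δ))
  else if r ≤ M then ε + (r - R) * ((M - ε) / (M - R))
  else r

/-- convex combinations stay in open intervals -/
lemma frag_interp_gt {a b c t : ℝ} (ha : c < a) (hb : c < b) (h0 : 0 ≤ t) (h1 : t ≤ 1) :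
    c < (1-t)*a + t*b := by
  rcases le_or_gt t (1/2) with hc | hc
  · nlinarith
  · nlinarith

lemma frag_interp_lt {a b c t : ℝ} (ha : a < c) (hb : b < c) (h0 : 0 ≤ t) (h1 : t ≤ 1) :
    (1-t)*a + t*b < c := by
  rcases le_or_gt t (1/2) with hc | hc
  · nlinarith
  · nlinarith

section Pl
variable {δ ε R M : ℝ} (h0 : 0 < δ) (h1 : δ < ε) (h2 : δ < R) (h3 : ε < M) (h4 : R < M)
include h0 h1 h2 h3 h4

lemma fragPl_low {r : ℝ} (hr : r ≤ δ) : fragPl δ ε R M r = r := if_pos hr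

lemma fragPl_mid {r : ℝ} (hr1 : ¬ r ≤ δ) (hr2 : r ≤ R) :
    fragPl δ ε R M r = δ + (r - δ) * ((ε - δ) / (R - δ)) := by
  rw [fragPl, if_neg hr1, if_pos hr2]

lemma fragPl_hi {r : ℝ} (hr1 : ¬ r ≤ R) (hr2 : r ≤ M) :
    fragPl δ ε R M r = ε + (r - R) * ((M - ε) / (M - R)) := by
  rw [fragPl, if_neg (by push_neg at hr1 ⊢; linarith), if_neg hr1, if_pos hr2]

lemma fragPl_top {r : ℝ} (hr : ¬ r ≤ M) : fragPl δ ε R M r = r := by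
  rw [fragPl, if_neg (by push_neg at hr ⊢; linarith), if_neg (by push_neg at hr ⊢; linarith),
    if_neg hr]

lemma fragPl_R : fragPl δ ε R M R = ε := by
  rw [fragPl_mid h0 h1 h2 h3 h4 (by push_neg; exact h2) le_rfl, mul_comm,
    div_mul_cancel₀ _ (ne_of_gt (show (0:ℝ) < R - δ by linarith))]
  ring

lemma fragPl_strictMono : StrictMono (fragPl δ ε R M) := by
  have k2 : 0 < (ε - δ) / (R - δ) := div_pos (by linarith) (by linarith)
  have k3 : 0 < (M - ε) / (M - R) := div_pos (by linarith) (by linarith)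
  -- bounds per branch
  have mid_mem : ∀ r, ¬ r ≤ δ → r ≤ R → δ < fragPl δ ε R M r ∧ fragPl δ ε R M r ≤ ε := by
    intro r hr1 hr2
    rw [fragPl_mid h0 h1 h2 h3 h4 hr1 hr2]
    push_neg at hr1
    constructor
    · nlinarith
    · have : (r - δ) * ((ε - δ) / (R - δ)) ≤ (R - δ) * ((ε - δ) / (R - δ)) := by nlinarith
      have hRδ : (R - δ) * ((ε - δ) / (R - δ)) = ε - δ := by
        rw [mul_comm, div_mul_cancel₀ _ (ne_of_gt (show (0:ℝ) < R - δ by linarith))]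
      linarith
  have hi_mem : ∀ r, ¬ r ≤ R → r ≤ M → ε < fragPl δ ε R M r ∧ fragPl δ ε R M r ≤ M := by
    intro r hr1 hr2
    rw [fragPl_hi h0 h1 h2 h3 h4 hr1 hr2]
    push_neg at hr1
    constructor
    · nlinarith
    · have : (r - R) * ((M - ε) / (M - R)) ≤ (M - R) * ((M - ε) / (M - R)) := by nlinarith
      have : (M - R) * ((M - ε) / (M - R)) = M - ε := by
        rw [mul_comm, div_mul_cancel₀ _ (ne_of_gt (show (0:ℝ) < M - R by linarith))]
      linarith
  intro r s hrs
  by_cases hs1 : s ≤ δ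
  · rw [fragPl_low h0 h1 h2 h3 h4 hs1, fragPl_low h0 h1 h2 h3 h4 (by linarith)]
    exact hrs
  · by_cases hr1 : r ≤ δ
    · rw [fragPl_low h0 h1 h2 h3 h4 hr1]
      by_cases hs2 : s ≤ R
      · exact lt_of_le_of_lt hr1 (mid_mem s hs1 hs2).1
      · by_cases hs3 : s ≤ M
        · exact lt_of_le_of_lt (by linarith : r ≤ ε) (hi_mem s hs2 hs3).1
        · rw [fragPl_top h0 h1 h2 h3 h4 hs3]; linarith
    · by_cases hr2 : r ≤ R
      · by_cases hs2 : s ≤ R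
        · rw [fragPl_mid h0 h1 h2 h3 h4 hr1 hr2, fragPl_mid h0 h1 h2 h3 h4 hs1 hs2]
          nlinarith
        · by_cases hs3 : s ≤ M
          · exact lt_of_le_of_lt (mid_mem r hr1 hr2).2 (hi_mem s hs2 hs3).1
          · rw [fragPl_top h0 h1 h2 h3 h4 hs3]
            exact lt_of_le_of_lt (mid_mem r hr1 hr2).2 (by linarith)
      · by_cases hr3 : r ≤ M
        · by_cases hs3 : s ≤ M
          · rw [fragPl_hi h0 h1 h2 h3 h4 hr2 (by linarith), fragPl_hi h0 h1 h2 h3 h4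
              (by push_neg at hr2 ⊢; linarith) hs3]
            nlinarith
          · rw [fragPl_top h0 h1 h2 h3 h4 hs3]
            exact lt_of_le_of_lt (hi_mem r hr2 hr3).2 (by push_neg at hs3; linarith)
        · rw [fragPl_top h0 h1 h2 h3 h4 hr3, fragPl_top h0 h1 h2 h3 h4 (by push_neg at hr3 ⊢; linarith)]
          exact hrs

/-- The explicit inverse. -/
lemma fragPl_rightInv (y : ℝ) : fragPl δ ε R M (fragPl δ R ε M y) = y := by
  have e1 : (0:ℝ) < ε - δ := by linarith
  have e2 : (0:ℝ) < R - δ := by linarith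
  have e3 : (0:ℝ) < M - ε := by linarith
  have e4 : (0:ℝ) < M - R := by linarith
  by_cases hy1 : y ≤ δ
  · rw [fragPl_low h0 h2 h1 h4 h3 hy1, fragPl_low h0 h1 h2 h3 h4 hy1]
  · by_cases hy2 : y ≤ ε
    · rw [fragPl_mid h0 h2 h1 h4 h3 hy1 hy2]
      push_neg at hy1
      have hpos : 0 < (y - δ) * ((R - δ) / (ε - δ)) :=
        mul_pos (by linarith) (div_pos e2 e1)
      have hz1 : ¬ (δ + (y - δ) * ((R - δ) / (ε - δ)) ≤ δ) := by push_neg; linarith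
      have hz2 : δ + (y - δ) * ((R - δ) / (ε - δ)) ≤ R := by
        have h5 : (y - δ) * ((R - δ) / (ε - δ)) ≤ (ε - δ) * ((R - δ) / (ε - δ)) :=
          mul_le_mul_of_nonneg_right (by linarith) (div_pos e2 e1).le
        have h6 : (ε - δ) * ((R - δ) / (ε - δ)) = R - δ := by
          rw [mul_comm, div_mul_cancel₀ _ (ne_of_gt e1)]
        linarith
      rw [fragPl_mid h0 h1 h2 h3 h4 hz1 hz2, add_sub_cancel_left, mul_assoc,
        div_mul_div_comm, mul_comm (R - δ), div_self (by positivity), mul_one]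
      ring
    · by_cases hy3 : y ≤ M
      · rw [fragPl_hi h0 h2 h1 h4 h3 hy2 hy3]
        push_neg at hy2
        have hpos : 0 < (y - ε) * ((M - R) / (M - ε)) :=
          mul_pos (by linarith) (div_pos e4 e3)
        have hz1 : ¬ (R + (y - ε) * ((M - R) / (M - ε)) ≤ R) := by push_neg; linarith
        have hz2 : R + (y - ε) * ((M - R) / (M - ε)) ≤ M := by
          have h5 : (y - ε) * ((M - R) / (M - ε)) ≤ (M - ε) * ((M - R) / (M - ε)) :=
            mul_le_mul_of_nonneg_right (by linarith) (div_pos e4 e3).le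
          have h6 : (M - ε) * ((M - R) / (M - ε)) = M - R := by
            rw [mul_comm, div_mul_cancel₀ _ (ne_of_gt e3)]
          linarith
        rw [fragPl_hi h0 h1 h2 h3 h4 hz1 hz2, add_sub_cancel_left, mul_assoc,
          div_mul_div_comm, mul_comm (M - R), div_self (by positivity), mul_one]
        ring
      · rw [fragPl_top h0 h2 h1 h4 h3 hy3, fragPl_top h0 h1 h2 h3 h4 hy3]

lemma fragPl_surjective : Function.Surjective (fragPl δ ε R M) :=
  fun y => ⟨fragPl δ R ε M y, fragPl_rightInv h0 h1 h2 h3 h4 y⟩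

lemma fragPl_continuous : Continuous (fragPl δ ε R M) := by
  have hiso := StrictMono.orderIsoOfSurjective _ (fragPl_strictMono h0 h1 h2 h3 h4)
    (fragPl_surjective h0 h1 h2 h3 h4)
  have : Continuous (StrictMono.orderIsoOfSurjective _ (fragPl_strictMono h0 h1 h2 h3 h4)
      (fragPl_surjective h0 h1 h2 h3 h4)) := OrderIso.continuous _
  convert this using 1
  exact (StrictMono.coe_orderIsoOfSurjective _ _ _).symm

lemma fragPl_nice : FragNice δ M (fragPl δ ε R M) := by
  refine ⟨h0, fun r hr => fragPl_low h0 h1 h2 h3 h4 hr, fun r hr => ?_,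
    (fragPl_strictMono h0 h1 h2 h3 h4).monotone⟩
  rcases eq_or_lt_of_le hr with hEq | hlt
  · rw [← hEq, fragPl_hi h0 h1 h2 h3 h4 (by push_neg; linarith) le_rfl, mul_comm,
      div_mul_cancel₀ _ (ne_of_gt (show (0:ℝ) < M - R by linarith))]
    ring
  · exact fragPl_top h0 h1 h2 h3 h4 (by push_neg; linarith)

/-- Interpolation identity: the straight-line interpolation between `id` and the PL map
is again of PL form. -/
lemma fragPl_interp {t : ℝ} (ht0 : 0 ≤ t) (ht1 : t ≤ 1) (r : ℝ) :
    (1 - t) * r + t * fragPl δ ε R M r = fragPl δ ((1-t)*R + t*ε) R M r := by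
  have hδt : δ < (1-t)*R + t*ε := frag_interp_gt h2 h1 ht0 ht1
  have hMt : (1-t)*R + t*ε < M := frag_interp_lt h4 h3 ht0 ht1
  have e2 : R - δ ≠ 0 := ne_of_gt (by linarith)
  have e4 : M - R ≠ 0 := ne_of_gt (by linarith)
  by_cases hr1 : r ≤ δ
  · rw [fragPl_low h0 h1 h2 h3 h4 hr1, fragPl_low h0 hδt h2 hMt h4 hr1]; ring
  · by_cases hr2 : r ≤ R
    · rw [fragPl_mid h0 h1 h2 h3 h4 hr1 hr2, fragPl_mid h0 hδt h2 hMt h4 hr1 hr2]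
      field_simp
      ring
    · by_cases hr3 : r ≤ M
      · rw [fragPl_hi h0 h1 h2 h3 h4 hr2 hr3, fragPl_hi h0 hδt h2 hMt h4 hr2 hr3]
        field_simp
        ring
      · rw [fragPl_top h0 h1 h2 h3 h4 hr3, fragPl_top h0 hδt h2 hMt h4 hr3]; ring

end Pl

section Cont
variable {d : ℕ}

lemma continuous_fragA (J : Fin d) : Continuous (fragA J) := by
  unfold fragA fragY fragQ; fun_prop

lemma max_fragN_pos (J : Fin d) {δ : ℝ} (hδ : 0 < δ) (x) : 0 < max (fragN J x) δ :=
  lt_of_lt_of_le hδ (le_max_right _ _)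

lemma continuous_fragL (J : Fin d) {g : ℝ → ℝ} (hg : Continuous g) {δ : ℝ} (hδ : 0 < δ) :
    Continuous (fragL J g δ) := by
  unfold fragL
  apply Continuous.add continuous_const
  apply Continuous.div
  · exact (hg.comp (continuous_fragN J)).sub (continuous_fragN J)
  · exact (continuous_fragN J).max continuous_const
  · exact fun x => ne_of_gt (max_fragN_pos J hδ x)

lemma continuous_fragC (J : Fin d) {g : ℝ → ℝ} (hg : Continuous g) {δ : ℝ} (hδ : 0 < δ) :
    Continuous (fragC J g δ) := by
  unfold fragC
  apply Continuous.add continuous_const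
  apply Continuous.div
  · exact (continuous_fragA J).mul ((continuous_fragL J hg hδ).sub continuous_const)
  · exact (continuous_fragY J).max continuous_const
  · intro x
    exact ne_of_gt (lt_of_lt_of_le one_pos (le_max_right _ _))

lemma continuous_fragPsi (J : Fin d) {g : ℝ → ℝ} (hg : Continuous g) {δ : ℝ} (hδ : 0 < δ) :
    Continuous (fragPsi J g δ) := by
  refine (PiLp.continuous_toLp 2 _).comp (continuous_pi fun i => ?_)
  show Continuous fun x => fragPsi J g δ x i
  simp only [fragPsi_apply]
  by_cases h : i = J
  · subst h
    simp only [if_pos rfl]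
    exact (continuous_fragL i hg hδ).mul (PiLp.continuous_apply 2 _ i)
  · simp only [if_neg h]
    exact (continuous_fragC J hg hδ).mul (PiLp.continuous_apply 2 _ i)

end Cont

/-- A continuous bijection of a Hausdorff space which is the identity outside a closed
set contained in the interior of a compact set has continuous inverse. -/
lemma continuous_inv_of_id_outside {Y : Type*} [TopologicalSpace Y] [T2Space Y]
    {F G : Y → Y} (hF : Continuous F) (hFG : ∀ y, F (G y) = y) (hGF : ∀ y, G (F y) = y)
    {K C : Set Y} (hK : IsClosed K) (hC : IsCompact C) (hKC : K ⊆ interior C)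
    (hid : ∀ y ∉ K, F y = y) : Continuous G := by
  have hGid : ∀ y ∉ K, G y = y := by
    intro y hy
    have h2 := hGF y
    rw [hid y hy] at h2
    exact h2
  have hGC : ∀ y ∈ C, G y ∈ C := by
    intro y hy
    by_cases h : G y ∈ K
    · exact interior_subset (hKC h)
    · have h2 := hFG y
      rw [hid _ h] at h2
      rw [h2]; exact hy
  have hFC : ∀ y ∈ C, F y ∈ C := by
    intro y hy
    by_cases h : F y ∈ K
    · exact interior_subset (hKC h)
    · have : G (F y) = F y := hGid _ h
      rw [hGF] at this
      rw [← this]; exact hy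
  -- the restricted equivalence on the compact set C
  haveI : CompactSpace C := isCompact_iff_compactSpace.mp hC
  let eC : C ≃ C :=
    { toFun := fun c => ⟨F c, hFC c c.2⟩
      invFun := fun c => ⟨G c, hGC c c.2⟩
      left_inv := fun c => Subtype.ext (hGF c)
      right_inv := fun c => Subtype.ext (hFG c) }
  have heC : Continuous eC := by
    apply Continuous.subtype_mk
    exact hF.comp continuous_subtype_val
  let hHomeo := Continuous.homeoOfEquivCompactToT2 (f := eC) heC
  have hGConC : ContinuousOn G C := by
    rw [continuousOn_iff_continuous_restrict]
    have : Set.domRestrict C G = Subtype.val ∘ hHomeo.symm := by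
      funext c
      rfl
    rw [this]
    exact continuous_subtype_val.comp hHomeo.symm.continuous
  rw [continuous_iff_continuousAt]
  intro y
  by_cases hy : y ∈ K
  · exact hGConC.continuousAt (mem_nhds_iff.mpr ⟨interior C, interior_subset, isOpen_interior, hKC hy⟩)
  · have hev : G =ᶠ[nhds y] id := by
      apply Filter.eventually_of_mem (hK.isOpen_compl.mem_nhds hy)
      intro z hz
      exact hGid z hz
    exact ContinuousAt.congr continuousAt_id hev.symm

section Param
variable {d : ℕ} {T : Type*} [TopologicalSpace T]

lemma continuous_fragL_param (J : Fin d) {G : T → ℝ → ℝ}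
    (hG : Continuous fun q : T × ℝ => G q.1 q.2) {δ : ℝ} (hδ : 0 < δ) :
    Continuous fun q : T × EuclideanSpace ℝ (Fin d) => fragL J (G q.1) δ q.2 := by
  simp only [fragL]
  have hν : Continuous fun q : T × EuclideanSpace ℝ (Fin d) => fragN J q.2 :=
    (continuous_fragN J).comp continuous_snd
  have h1 : Continuous fun q : T × EuclideanSpace ℝ (Fin d) => G q.1 (fragN J q.2) :=
    hG.comp (continuous_fst.prodMk hν)
  exact continuous_const.add ((h1.sub hν).div (hν.max continuous_const)
    (fun q => ne_of_gt (max_fragN_pos J hδ _)))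

lemma continuous_fragC_param (J : Fin d) {G : T → ℝ → ℝ}
    (hG : Continuous fun q : T × ℝ => G q.1 q.2) {δ : ℝ} (hδ : 0 < δ) :
    Continuous fun q : T × EuclideanSpace ℝ (Fin d) => fragC J (G q.1) δ q.2 := by
  simp only [fragC]
  have hY : Continuous fun q : T × EuclideanSpace ℝ (Fin d) => fragY J q.2 :=
    (continuous_fragY J).comp continuous_snd
  have hA : Continuous fun q : T × EuclideanSpace ℝ (Fin d) => fragA J q.2 :=
    (continuous_fragA J).comp continuous_snd
  exact continuous_const.add ((hA.mul ((continuous_fragL_param J hG hδ).sub continuous_const)).div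
    (hY.max continuous_const)
    (fun q => ne_of_gt (lt_of_lt_of_le one_pos (le_max_right _ _))))

lemma continuous_fragPsi_param (J : Fin d) {G : T → ℝ → ℝ}
    (hG : Continuous fun q : T × ℝ => G q.1 q.2) {δ : ℝ} (hδ : 0 < δ) :
    Continuous fun q : T × EuclideanSpace ℝ (Fin d) => fragPsi J (G q.1) δ q.2 := by
  refine (PiLp.continuous_toLp 2 _).comp (continuous_pi fun i => ?_)
  show Continuous fun q : T × EuclideanSpace ℝ (Fin d) => fragPsi J (G q.1) δ q.2 i
  simp only [fragPsi_apply]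
  by_cases h : i = J
  · subst h
    simp only [if_pos rfl]
    exact (continuous_fragL_param i hG hδ).mul ((PiLp.continuous_apply 2 _ i).comp continuous_snd)
  · simp only [if_neg h]
    exact (continuous_fragC_param J hG hδ).mul ((PiLp.continuous_apply 2 _ i).comp continuous_snd)

end Param

lemma frag_main {d : ℕ} (J : Fin d) {δ ε R M : ℝ} (h0 : 0 < δ) (h1 : δ < ε) (h2 : δ < R)
    (h3 : ε < M) (h4 : R < M) :
    ∃ ψ : EuclideanSpace ℝ (Fin d) ≃ₜ EuclideanSpace ℝ (Fin d),
      IsotopicToIdC ψ ∧ (∀ x, fragN J x ≤ δ → ψ x = x) ∧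
      (∀ x, fragN J x ≤ R → fragN J (ψ x) ≤ ε) := by
  have hρn : FragNice δ M (fragPl δ ε R M) := fragPl_nice h0 h1 h2 h3 h4
  have hσn : FragNice δ M (fragPl δ R ε M) := fragPl_nice h0 h2 h1 h4 h3
  have hρc : Continuous (fragPl δ ε R M) := fragPl_continuous h0 h1 h2 h3 h4
  have hσc : Continuous (fragPl δ R ε M) := fragPl_continuous h0 h2 h1 h4 h3
  have hri : ∀ y, fragPl δ ε R M (fragPl δ R ε M y) = y := fragPl_rightInv h0 h1 h2 h3 h4
  have hli : ∀ y, fragPl δ R ε M (fragPl δ ε R M y) = y := fragPl_rightInv h0 h2 h1 h4 h3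
  set X := EuclideanSpace ℝ (Fin d) with hX
  let ψ : X ≃ₜ X :=
    { toFun := fragPsi J (fragPl δ ε R M) δ
      invFun := fragPsi J (fragPl δ R ε M) δ
      left_inv := fun x => by
        rw [fragPsi_comp hρn hσn, fragPsi_fix (by exact hli _)]
      right_inv := fun x => by
        rw [fragPsi_comp hσn hρn, fragPsi_fix (by exact hri _)]
      continuous_toFun := continuous_fragPsi J hρc h0
      continuous_invFun := continuous_fragPsi J hσc h0 }
  have hψ2 : ∀ x, fragN J x ≤ δ → ψ x = x := fun x hx => fragPsi_fix (hρn.low _ hx)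
  have hψ3 : ∀ x, fragN J x ≤ R → fragN J (ψ x) ≤ ε := by
    intro x hx
    show fragN J (fragPsi J (fragPl δ ε R M) δ x) ≤ ε
    rw [fragN_psi hρn]
    calc fragPl δ ε R M (fragN J x) ≤ fragPl δ ε R M R := hρn.mono hx
      _ = ε := fragPl_R h0 h1 h2 h3 h4
  -- the isotopy
  let Gt : unitInterval → ℝ → ℝ := fun t r => (1 - (t:ℝ)) * r + (t:ℝ) * fragPl δ ε R M r
  have hGt_eq : ∀ t : unitInterval, Gt t = fragPl δ ((1-(t:ℝ))*R + (t:ℝ)*ε) R M :=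
    fun t => funext (fragPl_interp h0 h1 h2 h3 h4 t.2.1 t.2.2)
  have hεt1 : ∀ t : unitInterval, δ < (1-(t:ℝ))*R + (t:ℝ)*ε :=
    fun t => frag_interp_gt h2 h1 t.2.1 t.2.2
  have hεt2 : ∀ t : unitInterval, (1-(t:ℝ))*R + (t:ℝ)*ε < M :=
    fun t => frag_interp_lt h4 h3 t.2.1 t.2.2
  let Ff : X × unitInterval → X × unitInterval := fun p => (fragPsi J (Gt p.2) δ p.1, p.2)
  let Gf : X × unitInterval → X × unitInterval :=
    fun p => (fragPsi J (fragPl δ R ((1-(p.2:ℝ))*R + (p.2:ℝ)*ε) M) δ p.1, p.2)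
  have hGfFf : ∀ p, Gf (Ff p) = p := by
    intro p
    show (fragPsi J _ δ (fragPsi J (Gt p.2) δ p.1), p.2) = p
    rw [hGt_eq p.2, fragPsi_comp (fragPl_nice h0 (hεt1 p.2) h2 (hεt2 p.2) h4)
      (fragPl_nice h0 h2 (hεt1 p.2) h4 (hεt2 p.2)),
      fragPsi_fix (by exact fragPl_rightInv h0 h2 (hεt1 p.2) h4 (hεt2 p.2) _)]
  have hFfGf : ∀ p, Ff (Gf p) = p := by
    intro p
    show (fragPsi J (Gt p.2) δ (fragPsi J _ δ p.1), p.2) = p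
    rw [hGt_eq p.2, fragPsi_comp (fragPl_nice h0 h2 (hεt1 p.2) h4 (hεt2 p.2))
      (fragPl_nice h0 (hεt1 p.2) h2 (hεt2 p.2) h4),
      fragPsi_fix (by exact fragPl_rightInv h0 (hεt1 p.2) h2 (hεt2 p.2) h4 _)]
  have hFfcont : Continuous Ff := by
    apply Continuous.prodMk _ continuous_snd
    have hG : Continuous fun q : unitInterval × ℝ => Gt q.1 q.2 := by
      apply Continuous.add
      · exact (continuous_const.sub (continuous_subtype_val.comp continuous_fst)).mul
          continuous_snd
      · exact (continuous_subtype_val.comp continuous_fst).mul (hρc.comp continuous_snd)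
    have := (continuous_fragPsi_param J hG h0).comp
      (continuous_snd.prodMk (continuous_fst : Continuous fun p : X × unitInterval => p.1))
    exact this
  have hMpos : (0:ℝ) < M := lt_trans (lt_trans h0 h2) h4
  have hidF : ∀ p : X × unitInterval, p ∉ ({x : X | fragN J x ≤ M} ×ˢ (Set.univ : Set unitInterval)) → Ff p = p := by
    intro p hp
    have hp1 : ¬ fragN J p.1 ≤ M := by
      intro hc
      exact hp (Set.mem_prod.mpr ⟨hc, Set.mem_univ _⟩)
    push_neg at hp1
    have hfix : Gt p.2 (fragN J p.1) = fragN J p.1 := by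
      show (1 - (p.2:ℝ)) * fragN J p.1 + (p.2:ℝ) * fragPl δ ε R M (fragN J p.1) = fragN J p.1
      rw [hρn.high _ hp1.le]
      ring
    show (fragPsi J (Gt p.2) δ p.1, p.2) = p
    rw [fragPsi_fix hfix]
  have hGfcont : Continuous Gf := by
    apply continuous_inv_of_id_outside hFfcont hFfGf hGfFf
      (K := {x : X | fragN J x ≤ M} ×ˢ (Set.univ : Set unitInterval))
      (C := {x : X | fragN J x ≤ M + 1} ×ˢ (Set.univ : Set unitInterval))
    · exact (isClosed_le (continuous_fragN J) continuous_const).prod isClosed_univ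
    · exact (isCompact_fragN_le J (M+1) (by linarith)).prod isCompact_univ
    · have hmid : IsOpen ({x : X | fragN J x < M + 1} ×ˢ (Set.univ : Set unitInterval)) :=
        (isOpen_lt (continuous_fragN J) continuous_const).prod isOpen_univ
      have hsub1 : ({x : X | fragN J x ≤ M} ×ˢ (Set.univ : Set unitInterval)) ⊆
          ({x : X | fragN J x < M+1} ×ˢ (Set.univ : Set unitInterval)) :=
        Set.prod_mono (fun x hx => show fragN J x < M+1 from lt_of_le_of_lt hx (by linarith)) subset_rfl
      have hsub2 : ({x : X | fragN J x < M+1} ×ˢ (Set.univ : Set unitInterval)) ⊆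
          ({x : X | fragN J x ≤ M+1} ×ˢ (Set.univ : Set unitInterval)) :=
        Set.prod_mono (fun x hx => show fragN J x ≤ M+1 from le_of_lt hx) subset_rfl
      exact hsub1.trans (interior_maximal hsub2 hmid)
    · exact hidF
  have hc0 : ((0 : unitInterval) : ℝ) = 0 := rfl
  have hc1 : ((1 : unitInterval) : ℝ) = 1 := rfl
  refine ⟨ψ, ⟨⟨⟨Ff, Gf, hGfFf, hFfGf⟩, hFfcont, hGfcont⟩,
    {x : X | fragN J x ≤ M}, isCompact_fragN_le J M hMpos.le,
    fun p => rfl, ?_, ?_, ?_⟩, hψ2, hψ3⟩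
  · intro x
    show (fragPsi J (Gt 0) δ x, (0:unitInterval)) = (x, 0)
    rw [fragPsi_fix (by show (1 - ((0:unitInterval):ℝ)) * _ + _ * _ = _; rw [hc0]; ring)]
  · intro x
    show (fragPsi J (Gt 1) δ x, (1:unitInterval)) = (ψ x, 1)
    have : Gt 1 = fragPl δ ε R M := by
      funext r
      show (1 - ((1:unitInterval):ℝ)) * r + ((1:unitInterval):ℝ) * fragPl δ ε R M r = _
      rw [hc1]; ring
    rw [this]
    rfl
  · intro t x hx
    show (fragPsi J (Gt t) δ x, t) = (x, t)
    have hx' : ¬ fragN J x ≤ M := hx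
    push_neg at hx'
    rw [fragPsi_fix (by
      show (1 - (t:ℝ)) * fragN J x + (t:ℝ) * fragPl δ ε R M (fragN J x) = fragN J x
      rw [hρn.high _ hx'.le]; ring)]

end

/-- Conjugation preserves being isotopic to the identity. -/
lemma isotopicToIdC_conj {X : Type*} [TopologicalSpace X] (e f : X ≃ₜ X)
    (hf : IsotopicToIdC f) : IsotopicToIdC (e.symm.trans (f.trans e)) := by
  obtain ⟨H, K, hK, hl, h0, h1, hs⟩ := hf
  refine ⟨((e.symm.prodCongr (Homeomorph.refl unitInterval)).trans H).trans
    (e.prodCongr (Homeomorph.refl unitInterval)), e '' K, hK.image e.continuous,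
    fun p => ?_, fun x => ?_, fun x => ?_, fun t x hx => ?_⟩
  · simp only [Homeomorph.trans_apply, Homeomorph.coe_prodCongr, Prod.map, Homeomorph.refl_apply, id_eq, Equiv.toFun_as_coe, Homeomorph.coe_toEquiv, hl]
  · simp only [Homeomorph.trans_apply, Homeomorph.coe_prodCongr, Prod.map, Homeomorph.refl_apply, id_eq, Equiv.toFun_as_coe, Homeomorph.coe_toEquiv]
    rw [h0, e.apply_symm_apply]
  · simp only [Homeomorph.trans_apply, Homeomorph.coe_prodCongr, Prod.map, Homeomorph.refl_apply, id_eq, Equiv.toFun_as_coe, Homeomorph.coe_toEquiv]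
    rw [h1]
  · have hx' : e.symm x ∉ K := fun hc => hx ⟨e.symm x, hc, e.apply_symm_apply x⟩
    simp only [Homeomorph.trans_apply, Homeomorph.coe_prodCongr, Prod.map, Homeomorph.refl_apply, id_eq, Equiv.toFun_as_coe, Homeomorph.coe_toEquiv]
    rw [hs t _ hx', e.apply_symm_apply]

/-- Fragmentation with respect to two disjoint embedded `(d-1)`-dimensional balls `D`,
`D'` in `ℝ^d`: any `f ∈ Homeo₀(ℝ^d)` can be written `f = h₁ h₂ h₃` with
`h₁, h₃ ∈ H_D^d` and `h₂ ∈ H_{D'}^d`. -/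
theorem stmt_7 {d : ℕ} (hd : 1 ≤ d)
    {D D' : Set (EuclideanSpace ℝ (Fin d))}
    (hD : IsEmbeddedBall D) (hD' : IsEmbeddedBall D') (hdisj : Disjoint D D')
    (f : Homeo0 (EuclideanSpace ℝ (Fin d))) :
    ∃ h₁ h₂ h₃ : Homeo0 (EuclideanSpace ℝ (Fin d)),
      h₁ ∈ fixingNbhd D ∧ h₂ ∈ fixingNbhd D' ∧ h₃ ∈ fixingNbhd D ∧
        f = h₁ * h₂ * h₃ := by
  classical
  have hX : True := trivial
  obtain ⟨e, hDe⟩ := hD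
  set J : Fin d := ⟨d - 1, by omega⟩ with hJ
  -- support of f
  obtain ⟨Hf, Kf, hKf, hlf, h0f, h1f, hsf⟩ := f.2
  have hfK : ∀ x ∉ Kf, (f : (EuclideanSpace ℝ (Fin d)) ≃ₜ (EuclideanSpace ℝ (Fin d))) x = x := by
    intro x hx
    have h := hsf 1 x hx
    rw [h1f x] at h
    exact congrArg Prod.fst h
  -- basic facts about the standard ball
  have hsum_eq : ∀ x : (EuclideanSpace ℝ (Fin d)), (∑ i, x i ^ 2) = ‖x‖ ^ 2 := by
    intro x
    rw [EuclideanSpace.norm_eq]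
    rw [Real.sq_sqrt (Finset.sum_nonneg fun i _ => sq_nonneg _)]
    exact Finset.sum_congr rfl fun i _ => by rw [Real.norm_eq_abs, sq_abs]
  have hQle : ∀ x : (EuclideanSpace ℝ (Fin d)), fragQ J x ≤ ∑ i, x i ^ 2 := by
    intro x
    exact Finset.sum_le_sum_of_subset_of_nonneg (Finset.erase_subset _ _)
      (fun i _ _ => sq_nonneg _)
  have hS0 : ∀ x ∈ stdBallSet d, fragN J x = 0 := by
    intro x hx
    obtain ⟨hx1, hx2⟩ := hx
    rw [fragN_eq_zero_iff]
    constructor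
    · rw [fragY]
      rw [show (1:ℝ) = Real.sqrt 1 by simp]
      apply Real.sqrt_le_sqrt
      calc fragQ J x ≤ ∑ i, x i ^2 := hQle x
        _ = ‖x‖^2 := hsum_eq x
        _ ≤ 1 := by nlinarith [norm_nonneg x]
    · exact hx2 (by omega)
  have hS0' : ∀ x : (EuclideanSpace ℝ (Fin d)), fragN J x = 0 → x ∈ stdBallSet d := by
    intro x hx
    rw [fragN_eq_zero_iff] at hx
    obtain ⟨hx1, hx2⟩ := hx
    constructor
    · have h1 : ‖x‖^2 = fragQ J x := by
        rw [← hsum_eq x, ← Finset.add_sum_erase _ _ (Finset.mem_univ J), hx2, ← fragQ]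
        ring
      have h2 : fragQ J x ≤ 1 := by
        have := fragY_sq J x
        nlinarith [fragY_nonneg J x]
      nlinarith [norm_nonneg x]
    · intro h
      exact hx2
  -- pulled back sets
  set D₁ : Set (EuclideanSpace ℝ (Fin d)) := e ⁻¹' D' with hD₁
  set K₁ : Set (EuclideanSpace ℝ (Fin d)) := e ⁻¹' Kf with hK₁
  have hD₁c : IsCompact D₁ := by
    obtain ⟨e', hD'e⟩ := hD'
    have hstd : IsCompact (stdBallSet d) := by
      have heq : stdBallSet d = {x : EuclideanSpace ℝ (Fin d) | ‖x‖ ≤ 1} ∩ {x | x J = 0} := by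
        ext x
        constructor
        · rintro ⟨hx1, hx2⟩; exact ⟨hx1, hx2 (by omega)⟩
        · rintro ⟨hx1, hx2⟩; exact ⟨hx1, fun hh => hx2⟩
      have hcl : IsClosed (stdBallSet d) := by
        rw [heq]
        exact (isClosed_le continuous_norm continuous_const).inter
          (isClosed_eq (show Continuous fun x : EuclideanSpace ℝ (Fin d) => x J from PiLp.continuous_apply 2 _ J) continuous_const)
      apply (isCompact_closedBall (0 : EuclideanSpace ℝ (Fin d)) 1).of_isClosed_subset hcl
      intro x hx
      rw [Metric.mem_closedBall, dist_zero_right]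
      exact hx.1
    have : IsCompact D' := by
      rw [hD'e]
      exact hstd.image e'.continuous
    exact (Homeomorph.isCompact_preimage e).mpr this
  have hK₁c : IsCompact K₁ := (Homeomorph.isCompact_preimage e).mpr hKf
  have hD₁S : ∀ w ∈ D₁, 0 < fragN J w := by
    intro w hw
    rcases lt_or_eq_of_le (fragN_nonneg J w) with h | h
    · exact h
    · exfalso
      have hwS : w ∈ stdBallSet d := hS0' w h.symm
      have : e w ∈ D := hDe ▸ Set.mem_image_of_mem e hwS
      exact Set.disjoint_left.mp hdisj this hw
  -- choice of ε
  obtain ⟨ε0, hε0pos, hε0⟩ : ∃ ε0 > 0, ∀ w ∈ D₁, ε0 < fragN J w := by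
    rcases Set.eq_empty_or_nonempty D₁ with hemp | hne
    · exact ⟨1, one_pos, by rw [hemp]; intro w hw; exact absurd hw (Set.notMem_empty w)⟩
    · obtain ⟨w0, hw0, hmin⟩ := hD₁c.exists_isMinOn hne (continuous_fragN J).continuousOn
      refine ⟨fragN J w0 / 2, by linarith [hD₁S w0 hw0], fun w hw => ?_⟩
      have := isMinOn_iff.mp hmin w hw
      linarith [hD₁S w0 hw0]
  -- bound on K₁
  obtain ⟨R0, hR0⟩ : ∃ R0, ∀ z ∈ K₁, fragN J z ≤ R0 := by
    obtain ⟨R0, hR0⟩ := (hK₁c.image (continuous_fragN J)).bddAbove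
    exact ⟨R0, fun z hz => hR0 (Set.mem_image_of_mem _ hz)⟩
  -- parameters
  set δ : ℝ := ε0 / 2 with hδdef
  set R : ℝ := max R0 ε0 + 1 with hRdef
  set M : ℝ := R + 1 with hMdef
  have h0 : 0 < δ := by positivity
  have h1 : δ < ε0 := by rw [hδdef]; linarith
  have h2 : δ < R := by
    have := le_max_right R0 ε0
    rw [hδdef, hRdef]; linarith
  have h3 : ε0 < M := by
    have := le_max_right R0 ε0
    rw [hMdef, hRdef]; linarith
  have h4 : R < M := by rw [hMdef]; linarith
  obtain ⟨ψ, hψiso, hψfix, hψmap⟩ := frag_main J h0 h1 h2 h3 h4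
  set φhom : (EuclideanSpace ℝ (Fin d)) ≃ₜ (EuclideanSpace ℝ (Fin d)) := e.symm.trans (ψ.trans e) with hφdef
  have hφmem : φhom ∈ Homeo0 (EuclideanSpace ℝ (Fin d)) := isotopicToIdC_conj e ψ hψiso
  set Φ : Homeo0 (EuclideanSpace ℝ (Fin d)) := ⟨φhom, hφmem⟩ with hΦdef
  have hφapp : ∀ x : (EuclideanSpace ℝ (Fin d)), φhom x = e (ψ (e.symm x)) := fun x => rfl
  -- Φ fixes a neighbourhood of D
  have memΦD : Φ ∈ fixingNbhd D := by
    refine ⟨e '' {x : (EuclideanSpace ℝ (Fin d)) | fragN J x < δ}, ?_, ?_, ?_⟩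
    · exact (Homeomorph.isOpen_image e).mpr (isOpen_lt (continuous_fragN J) continuous_const)
    · rw [hDe]
      apply Set.image_mono
      intro x hx
      show fragN J x < δ
      rw [hS0 x hx]
      exact h0
    · rintro u ⟨x, hx, rfl⟩
      show φhom (e x) = e x
      rw [hφapp, e.symm_apply_apply, hψfix x (le_of_lt hx)]
  -- φ moves Kf off D'
  have hmove : ∀ k ∈ Kf, φhom k ∉ D' := by
    intro k hk hcon
    have hk₁ : e.symm k ∈ K₁ := by
      show e (e.symm k) ∈ Kf
      rw [e.apply_symm_apply]; exact hk
    have hb : fragN J (e.symm k) ≤ R := by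
      have := hR0 _ hk₁
      have := le_max_left R0 ε0
      rw [hRdef]; linarith
    have hsmall : fragN J (ψ (e.symm k)) ≤ ε0 := hψmap _ hb
    have : ψ (e.symm k) ∈ D₁ := by
      show e (ψ (e.symm k)) ∈ D'
      rw [← hφapp k]; exact hcon
    exact absurd hsmall (not_le.mpr (hε0 _ this))
  refine ⟨Φ⁻¹, Φ * f * Φ⁻¹, Φ, (fixingNbhd D).inv_mem memΦD, ?_, memΦD, by group⟩
  refine ⟨(φhom '' Kf)ᶜ, (hKf.image φhom.continuous).isClosed.isOpen_compl, ?_, ?_⟩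
  · intro w hw
    intro hcon
    obtain ⟨k, hk, hek⟩ := hcon
    exact hmove k hk (hek ▸ hw)
  · intro w hw
    have happ : ((Φ * f * Φ⁻¹ : Homeo0 (EuclideanSpace ℝ (Fin d))) : (EuclideanSpace ℝ (Fin d)) ≃ₜ (EuclideanSpace ℝ (Fin d))) w = φhom ((f : (EuclideanSpace ℝ (Fin d)) ≃ₜ (EuclideanSpace ℝ (Fin d))) (φhom.symm w)) := rfl
    rw [happ]
    have hz : φhom.symm w ∉ Kf := by
      intro hc
      exact hw ⟨φhom.symm w, hc, φhom.apply_symm_apply w⟩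
    rw [hfK _ hz, φhom.apply_symm_apply]
end

section
/- Let d ≥ 1 and let φ : Homeo₀(ℝᵈ) → Homeo(ℝ) be a group homomorphism such that no point of ℝ is fixed by every element of φ(Homeo₀(ℝᵈ)). For an embedded (d−1)-dimensional ball D write F_D = Fix(φ(H_D^d)). If D and D' are disjoint embedded (d−1)-dimensional balls, then F_D ∩ F_{D'} = ∅. -/
/-- The set of points of `Y` fixed by every element of the image under `φ` of the
subgroup `H`. -/
def fixSet {G Y : Type*} [Group G] [TopologicalSpace Y] (φ : G →* (Y ≃ₜ Y))
    (H : Subgroup G) : Set Y :=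
  {y | ∀ f ∈ H, φ f y = y}

open Metric Set

lemma exists_pertHomeo {E : Type*} [NormedAddCommGroup E] [NormedSpace ℝ E] [CompleteSpace E]
    (F : E → E) (L : NNReal) (hL : L < 1) (hF : LipschitzWith L F) (Kc : Set E)
    (hKc : IsCompact Kc) (hsupp : ∀ x ∉ Kc, F x = 0) :
    ∃ f : E ≃ₜ E, IsotopicToIdC f ∧ ∀ x, f x = x + F x := by
  have hne : Nonempty E := ⟨0⟩
  have hL1 : (L : ℝ) < 1 := by exact_mod_cast hL
  -- bound on F
  obtain ⟨B, hB⟩ : ∃ B : ℝ, ∀ x ∈ Kc, ‖F x‖ ≤ B := by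
    rcases (hKc.image hF.continuous).isBounded.subset_closedBall 0 with ⟨r, hr⟩
    exact ⟨r, fun x hx => by
      simpa [mem_closedBall, dist_eq_norm] using hr ⟨x, hx, rfl⟩⟩
  have hBF : ∀ x, ‖F x‖ ≤ max B 0 := by
    intro x
    by_cases hx : x ∈ Kc
    · exact le_max_of_le_left (hB x hx)
    · simp [hsupp x hx]
  set B' := max B 0 with hB'
  -- the contraction family
  have hlip : ∀ p : E × unitInterval, LipschitzWith L fun x => p.1 - (p.2 : ℝ) • F x := by
    intro p
    apply LipschitzWith.of_dist_le_mul
    intro x y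
    have : p.1 - (p.2 : ℝ) • F x - (p.1 - (p.2 : ℝ) • F y) = (p.2 : ℝ) • (F y - F x) := by
      rw [smul_sub]; abel
    rw [dist_eq_norm, this, norm_smul]
    have h1 : ‖((p.2 : ℝ))‖ ≤ 1 := by
      rw [Real.norm_eq_abs, abs_of_nonneg p.2.2.1]; exact p.2.2.2
    have h2 : ‖F y - F x‖ ≤ L * dist x y := by
      rw [← dist_eq_norm, dist_comm]
      exact hF.dist_le_mul x y
    calc ‖((p.2 : ℝ))‖ * ‖F y - F x‖ ≤ 1 * (L * dist x y) := by
          apply mul_le_mul h1 h2 (norm_nonneg _) zero_le_one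
      _ = L * dist x y := by ring
  have hcontr : ∀ p : E × unitInterval,
      ContractingWith L fun x => p.1 - (p.2 : ℝ) • F x := fun p => ⟨hL, hlip p⟩
  set G : E × unitInterval → E := fun p => (hcontr p).fixedPoint _ with hGdef
  have hG : ∀ p : E × unitInterval, p.1 - (p.2 : ℝ) • F (G p) = G p :=
    fun p => (hcontr p).fixedPoint_isFixedPt
  have hGright : ∀ p : E × unitInterval, G p + (p.2 : ℝ) • F (G p) = p.1 := by
    intro p
    have := hG p
    calc G p + (p.2 : ℝ) • F (G p) = (p.1 - (p.2 : ℝ) • F (G p)) + (p.2 : ℝ) • F (G p) := by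
          rw [this]
      _ = p.1 := by abel
  have hinj : ∀ t : ℝ, |t| ≤ 1 → ∀ x y : E, x + t • F x = y + t • F y → x = y := by
    intro t ht x y hxy
    have h0 : x + t • F x - (y + t • F y) = 0 := sub_eq_zero.mpr hxy
    have h1 : x - y = t • (F y - F x) := by
      rw [smul_sub]
      calc x - y = (x + t • F x - (y + t • F y)) + (t • F y - t • F x) := by abel
        _ = t • F y - t • F x := by rw [h0]; abel
    have h2 : ‖x - y‖ ≤ L * ‖x - y‖ := by
      calc ‖x - y‖ = |t| * ‖F y - F x‖ := by rw [h1, norm_smul, Real.norm_eq_abs]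
        _ ≤ 1 * ‖F y - F x‖ := by
            apply mul_le_mul_of_nonneg_right ht (norm_nonneg _)
        _ = ‖F y - F x‖ := one_mul _
        _ = dist (F y) (F x) := (dist_eq_norm _ _).symm
        _ ≤ L * dist y x := hF.dist_le_mul y x
        _ = L * ‖x - y‖ := by rw [dist_eq_norm, norm_sub_rev]
    have : (1 - (L : ℝ)) * ‖x - y‖ ≤ 0 := by nlinarith
    have hxy0 : ‖x - y‖ ≤ 0 := by nlinarith [norm_nonneg (x - y)]
    have := le_antisymm hxy0 (norm_nonneg _)
    rwa [norm_eq_zero, sub_eq_zero] at this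
  have habs : ∀ t : unitInterval, |(t : ℝ)| ≤ 1 := fun t => by
    rw [abs_of_nonneg t.2.1]; exact t.2.2
  have hGleft : ∀ (x : E) (t : unitInterval), G (x + (t : ℝ) • F x, t) = x := by
    intro x t
    apply hinj (t : ℝ) (habs t)
    exact hGright (x + (t : ℝ) • F x, t)
  -- continuity of G
  have hGlip : ∀ p q : E × unitInterval,
      dist (G p) (G q) ≤ ((1 + B') / (1 - L)) * dist p q := by
    intro p q
    set u := G p
    set v := G q
    have hu : u = p.1 - (p.2 : ℝ) • F u := (hG p).symm
    have hv : v = q.1 - (q.2 : ℝ) • F v := (hG q).symm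
    have key : u - v = (p.1 - q.1) - ((p.2 : ℝ) • F u - (p.2 : ℝ) • F v)
        - (((p.2 : ℝ) - (q.2 : ℝ)) • F v) := by
      rw [sub_smul]
      nth_rewrite 1 [hu, hv]
      abel
    have h1 : ‖u - v‖ ≤ ‖p.1 - q.1‖ + (L : ℝ) * ‖u - v‖ + |(p.2 : ℝ) - (q.2 : ℝ)| * B' := by
      calc ‖u - v‖ ≤ ‖p.1 - q.1‖ + ‖(p.2 : ℝ) • F u - (p.2 : ℝ) • F v‖
            + ‖((p.2 : ℝ) - (q.2 : ℝ)) • F v‖ := by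
            rw [key]
            exact (norm_sub_le _ _).trans (by gcongr; exact norm_sub_le _ _)
        _ ≤ ‖p.1 - q.1‖ + (L : ℝ) * ‖u - v‖ + |(p.2 : ℝ) - (q.2 : ℝ)| * B' := by
            gcongr
            · rw [← smul_sub, norm_smul, Real.norm_eq_abs]
              calc |(p.2 : ℝ)| * ‖F u - F v‖ ≤ 1 * ((L : ℝ) * ‖u - v‖) := by
                    apply mul_le_mul (habs p.2) _ (norm_nonneg _) zero_le_one
                    rw [← dist_eq_norm, ← dist_eq_norm]
                    exact hF.dist_le_mul u v
                _ = (L : ℝ) * ‖u - v‖ := one_mul _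
            · rw [norm_smul, Real.norm_eq_abs]
              exact mul_le_mul_of_nonneg_left (hBF v) (abs_nonneg _)
    have hd1 : ‖p.1 - q.1‖ ≤ dist p q := by
      rw [← dist_eq_norm]
      exact le_trans (le_max_left _ _) (le_of_eq (Prod.dist_eq).symm)
    have hd2 : |(p.2 : ℝ) - (q.2 : ℝ)| ≤ dist p q := by
      rw [← Real.dist_eq, ← Subtype.dist_eq]
      exact le_trans (le_max_right (dist p.1 q.1) _) (le_of_eq (Prod.dist_eq).symm)
    have hB'0 : 0 ≤ B' := le_max_right _ _
    have hdpq : 0 ≤ dist p q := dist_nonneg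
    have h2 : (1 - (L : ℝ)) * ‖u - v‖ ≤ (1 + B') * dist p q := by nlinarith
    rw [dist_eq_norm]
    rw [div_mul_eq_mul_div, le_div_iff₀ (by linarith)]
    nlinarith [norm_nonneg (u - v)]
  have hGcont : Continuous G := by
    have h0 : (0:ℝ) ≤ (1 + B') / (1 - L) := by
      apply div_nonneg _ (by linarith)
      have : (0:ℝ) ≤ B' := le_max_right _ _
      linarith
    exact (LipschitzWith.of_dist_le_mul (K := Real.toNNReal ((1 + B') / (1 - L)))
      (fun p q => by rw [Real.coe_toNNReal _ h0]; exact hGlip p q)).continuous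
  -- the isotopy
  have hcontF : Continuous F := hF.continuous
  set Hiso : (E × unitInterval) ≃ₜ (E × unitInterval) :=
    { toFun := fun p => (p.1 + (p.2 : ℝ) • F p.1, p.2)
      invFun := fun p => (G p, p.2)
      left_inv := fun p => by
        simp only []
        exact Prod.ext (hGleft p.1 p.2) rfl
      right_inv := fun p => by
        simp only []
        exact Prod.ext (hGright p) rfl
      continuous_toFun := by
        apply Continuous.prodMk
        · exact continuous_fst.add
            ((continuous_subtype_val.comp continuous_snd).smul (hcontF.comp continuous_fst))
        · exact continuous_snd
      continuous_invFun := hGcont.prodMk continuous_snd } with hHiso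
  set f : E ≃ₜ E :=
    { toFun := fun x => x + F x
      invFun := fun y => G (y, 1)
      left_inv := fun x => by
        have := hGleft x 1
        simpa using this
      right_inv := fun y => by
        have := hGright (y, 1)
        simpa using this
      continuous_toFun := continuous_id.add hcontF
      continuous_invFun := hGcont.comp (continuous_id.prodMk continuous_const) } with hf
  refine ⟨f, ⟨Hiso, Kc, hKc, fun p => rfl, fun x => ?_, fun x => ?_, fun t x hx => ?_⟩,
    fun x => rfl⟩
  · show (x + ((0 : unitInterval) : ℝ) • F x, (0:unitInterval)) = (x, 0)
    norm_num
  · show (x + ((1 : unitInterval) : ℝ) • F x, (1:unitInterval)) = (f x, 1)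
    norm_num
    rfl
  · show (x + (t : ℝ) • F x, t) = (x, t)
    rw [hsupp x hx]
    norm_num


lemma IsotopicToIdC.conj {X : Type*} [TopologicalSpace X] {f : X ≃ₜ X} (e : X ≃ₜ X)
    (hf : IsotopicToIdC f) : IsotopicToIdC ((e.symm.trans f).trans e) := by
  obtain ⟨H, K, hK, hl, h0, h1, hs⟩ := hf
  set E2 : (X × unitInterval) ≃ₜ (X × unitInterval) :=
    Homeomorph.prodCongr e (Homeomorph.refl _) with hE2d
  set E1 : (X × unitInterval) ≃ₜ (X × unitInterval) :=
    Homeomorph.prodCongr e.symm (Homeomorph.refl _) with hE1d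
  have hE1 : ∀ p : X × unitInterval, E1 p = (e.symm p.1, p.2) := fun p => rfl
  have hE2 : ∀ p : X × unitInterval, E2 p = (e p.1, p.2) := fun p => rfl
  refine ⟨(E1.trans H).trans E2, e '' K, hK.image e.continuous, fun p => ?_, fun x => ?_,
    fun x => ?_, fun t x hx => ?_⟩
  · show (E2 (H (E1 p))).2 = p.2
    rw [hE2]
    show (H (E1 p)).2 = p.2
    rw [hl, hE1]
  · show E2 (H (E1 (x, 0))) = (x, 0)
    rw [hE1, h0, hE2]
    show (e (e.symm x), 0) = (x, 0)
    rw [e.apply_symm_apply]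
  · show E2 (H (E1 (x, 1))) = ((e.symm.trans f).trans e x, 1)
    rw [hE1, h1, hE2]
    rfl
  · show E2 (H (E1 (x, t))) = (x, t)
    have hx' : e.symm x ∉ K := by
      intro h
      exact hx ⟨e.symm x, h, e.apply_symm_apply x⟩
    rw [hE1, hs t _ hx', hE2]
    show (e (e.symm x), t) = (x, t)
    rw [e.apply_symm_apply]

lemma clamp_lip {E : Type*} [NormedAddCommGroup E] (a c : ℝ) (hc : 0 < c) (g : E → ℝ)
    (hg : ∀ x y : E, |g x - g y| ≤ dist x y) (x y : E) :
    |max 0 (min 1 (a - g x / c)) - max 0 (min 1 (a - g y / c))| ≤ c⁻¹ * dist x y := by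
  have h1 : |max 0 (min 1 (a - g x / c)) - max 0 (min 1 (a - g y / c))|
      ≤ |min 1 (a - g x / c) - min 1 (a - g y / c)| := by
    rw [max_comm 0 (min 1 (a - g x / c)), max_comm 0 (min 1 (a - g y / c))]
    exact abs_max_sub_max_le_abs _ _ _
  have h2 : |min 1 (a - g x / c) - min 1 (a - g y / c)| ≤ |(a - g x / c) - (a - g y / c)| := by
    have := abs_min_sub_min_le_max (1:ℝ) (a - g x / c) 1 (a - g y / c)
    simpa using this
  calc |max 0 (min 1 (a - g x / c)) - max 0 (min 1 (a - g y / c))|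
      ≤ |(a - g x / c) - (a - g y / c)| := le_trans h1 h2
    _ = |g x - g y| / c := by
        rw [show (a - g x / c) - (a - g y / c) = (g y - g x) / c by ring, abs_div,
          abs_of_pos hc, abs_sub_comm]
    _ ≤ dist x y / c := by gcongr; exact hg x y
    _ = c⁻¹ * dist x y := by rw [div_eq_inv_mul]

lemma lip_smul_self {E : Type*} [NormedAddCommGroup E] [NormedSpace ℝ E] (φ : E → ℝ)
    (L M R : ℝ) (hM : 0 ≤ M) (hL : 0 ≤ L) (hR : 0 ≤ R)
    (hlip : ∀ x y, |φ x - φ y| ≤ L * dist x y) (hbd : ∀ x, |φ x| ≤ M)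
    (hsupp : ∀ x : E, R < ‖x‖ → φ x = 0) (x y : E) :
    dist (φ x • x) (φ y • y) ≤ (2 * M + L * R) * dist x y := by
  have hdn : dist x y = ‖x - y‖ := dist_eq_norm x y
  have hsplit : φ x • x - φ y • y = φ x • (x - y) + (φ x - φ y) • y := by
    rw [smul_sub, sub_smul]; abel
  have hT1 : ‖φ x • (x - y)‖ ≤ M * ‖x - y‖ := by
    rw [norm_smul, Real.norm_eq_abs]
    exact mul_le_mul_of_nonneg_right (hbd x) (norm_nonneg _)
  have hT2 : ‖(φ x - φ y) • y‖ ≤ (M + L * R) * ‖x - y‖ := by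
    rw [norm_smul, Real.norm_eq_abs]
    by_cases hy : ‖y‖ ≤ R
    · calc |φ x - φ y| * ‖y‖ ≤ (L * dist x y) * R := by
            apply mul_le_mul (hlip x y) hy (norm_nonneg _)
            positivity
        _ = (L * R) * ‖x - y‖ := by rw [hdn]; ring
        _ ≤ (M + L * R) * ‖x - y‖ := by nlinarith [norm_nonneg (x - y)]
    · push_neg at hy
      rw [hsupp y hy]
      by_cases hx : R < ‖x‖
      · rw [hsupp x hx]
        simp
        positivity
      · push_neg at hx
        have hyb : ‖y‖ ≤ R + ‖x - y‖ := by
          calc ‖y‖ ≤ ‖x‖ + ‖x - y‖ := by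
                have := norm_sub_norm_le x y
                have := norm_sub_rev x y
                nlinarith [abs_norm_sub_norm_le x y, abs_le.mp (abs_norm_sub_norm_le x y)]
            _ ≤ R + ‖x - y‖ := by linarith
        have hφx : |φ x - 0| ≤ L * dist x y := by
          rw [← hsupp y hy]; exact hlip x y
        rw [sub_zero] at hφx
        calc |φ x - 0| * ‖y‖ = |φ x| * ‖y‖ := by rw [sub_zero]
          _ ≤ |φ x| * (R + ‖x - y‖) := by
              apply mul_le_mul_of_nonneg_left hyb (abs_nonneg _)
          _ = |φ x| * R + |φ x| * ‖x - y‖ := by ring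
          _ ≤ (L * dist x y) * R + M * ‖x - y‖ :=
              add_le_add (mul_le_mul_of_nonneg_right hφx hR)
                (mul_le_mul_of_nonneg_right (hbd x) (norm_nonneg _))
          _ = (L * R) * ‖x - y‖ + M * ‖x - y‖ := by rw [hdn]; ring
          _ = (M + L * R) * ‖x - y‖ := by ring
  calc dist (φ x • x) (φ y • y) = ‖φ x • x - φ y • y‖ := dist_eq_norm _ _
    _ ≤ ‖φ x • (x - y)‖ + ‖(φ x - φ y) • y‖ := by rw [hsplit]; exact norm_add_le _ _
    _ ≤ M * ‖x - y‖ + (M + L * R) * ‖x - y‖ := add_le_add hT1 hT2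
    _ = (2 * M + L * R) * dist x y := by rw [hdn]; ring


section EuclideanHelpers

variable {d : ℕ}

lemma euclid_abs_coord_le_norm (x : EuclideanSpace ℝ (Fin d)) (i : Fin d) : |x i| ≤ ‖x‖ := by
  rw [EuclideanSpace.norm_eq]
  rw [show |x i| = Real.sqrt (‖x i‖ ^ 2) by
    rw [Real.sqrt_sq_eq_abs, Real.norm_eq_abs, abs_abs]]
  apply Real.sqrt_le_sqrt
  exact Finset.single_le_sum (f := fun j => ‖x j‖ ^ 2)
    (fun j _ => sq_nonneg _) (Finset.mem_univ i)

lemma stdBallSet_eq (hd : 1 ≤ d) :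
    stdBallSet d = {x : EuclideanSpace ℝ (Fin d) |
      ‖x‖ ≤ 1 ∧ x ⟨d - 1, Nat.sub_lt hd one_pos⟩ = 0} := by
  ext x
  constructor
  · rintro ⟨h1, h2⟩
    exact ⟨h1, h2 _⟩
  · rintro ⟨h1, h2⟩
    exact ⟨h1, fun h => h2⟩

lemma zero_mem_stdBallSet : (0 : EuclideanSpace ℝ (Fin d)) ∈ stdBallSet d := by
  refine ⟨by simp, fun h => ?_⟩
  simp [PiLp.zero_apply]

lemma norm_le_one_of_mem_stdBallSet {x : EuclideanSpace ℝ (Fin d)} (hx : x ∈ stdBallSet d) :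
    ‖x‖ ≤ 1 := hx.1

lemma smul_mem_stdBallSet {c : ℝ} (hc0 : 0 ≤ c) (hc1 : c ≤ 1)
    {x : EuclideanSpace ℝ (Fin d)} (hx : x ∈ stdBallSet d) : c • x ∈ stdBallSet d := by
  refine ⟨?_, fun h => ?_⟩
  · rw [norm_smul, Real.norm_eq_abs, abs_of_nonneg hc0]
    calc c * ‖x‖ ≤ 1 * 1 := mul_le_mul hc1 hx.1 (norm_nonneg _) zero_le_one
      _ = 1 := one_mul 1
  · rw [PiLp.smul_apply, hx.2 h]
    simp

lemma isCompact_stdBallSet (hd : 1 ≤ d) : IsCompact (stdBallSet d) := by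
  rw [stdBallSet_eq hd]
  apply isCompact_of_isClosed_isBounded
  · apply IsClosed.inter
    · exact isClosed_le continuous_norm continuous_const
    · have hcont : Continuous fun x : EuclideanSpace ℝ (Fin d) =>
          x (⟨d - 1, Nat.sub_lt hd one_pos⟩ : Fin d) :=
        (EuclideanSpace.proj (𝕜 := ℝ) (⟨d - 1, Nat.sub_lt hd one_pos⟩ : Fin d)).continuous
      exact isClosed_eq hcont continuous_const
  · apply Bornology.IsBounded.subset (Metric.isBounded_closedBall (x := 0) (r := 1))
    intro x hx
    simpa [Metric.mem_closedBall, dist_eq_norm] using hx.1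

lemma compl_stdBallSet_unbounded (hd : 1 ≤ d) (y : EuclideanSpace ℝ (Fin d))
    (hy : y ∉ stdBallSet d) (R : ℝ) (hR : 0 ≤ R) :
    ∃ z, JoinedIn (stdBallSet d)ᶜ y z ∧ R ≤ ‖z‖ := by
  have hlt : d - 1 < d := Nat.sub_lt hd one_pos
  set i0 : Fin d := ⟨d - 1, hlt⟩ with hi0
  have hmemcoord : ∀ x : EuclideanSpace ℝ (Fin d), x i0 ≠ 0 → x ∈ (stdBallSet d)ᶜ := by
    intro x hx hmem
    exact hx (hmem.2 hlt)
  have hmemnorm : ∀ x : EuclideanSpace ℝ (Fin d), 1 < ‖x‖ → x ∈ (stdBallSet d)ᶜ := by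
    intro x hx hmem
    linarith [hmem.1]
  by_cases ha : y i0 = 0
  · -- then ‖y‖ > 1; scale y
    have hn : 1 < ‖y‖ := by
      by_contra h
      push_neg at h
      exact hy ⟨h, fun _ => ha⟩
    have hy0 : (0:ℝ) < ‖y‖ := by linarith
    set C : ℝ := max 1 ((R + 1) / ‖y‖) with hC
    have hC1 : 1 ≤ C := le_max_left _ _
    refine ⟨C • y, ⟨⟨⟨fun t => (1 + (t : ℝ) * (C - 1)) • y, by fun_prop⟩, ?_, ?_⟩, ?_⟩, ?_⟩
    · show (1 + ((0:unitInterval) : ℝ) * (C - 1)) • y = y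
      norm_num
    · show (1 + ((1:unitInterval) : ℝ) * (C - 1)) • y = C • y
      norm_num
    · intro t
      apply hmemnorm
      have ht0 : (0:ℝ) ≤ (t : ℝ) := t.2.1
      have hk : 1 ≤ 1 + (t : ℝ) * (C - 1) := by nlinarith
      show 1 < ‖(1 + (t : ℝ) * (C - 1)) • y‖
      rw [norm_smul, Real.norm_eq_abs, abs_of_nonneg (by linarith)]
      nlinarith
    · rw [norm_smul, Real.norm_eq_abs, abs_of_nonneg (by linarith)]
      have : (R + 1) / ‖y‖ ≤ C := le_max_right _ _
      calc R ≤ R + 1 := by linarith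
        _ = ((R + 1) / ‖y‖) * ‖y‖ := by field_simp
        _ ≤ C * ‖y‖ := by
            apply mul_le_mul_of_nonneg_right this (le_of_lt hy0)
  · -- coordinate nonzero; translate in the i0 direction
    set a : ℝ := y i0 with hadef
    set u : EuclideanSpace ℝ (Fin d) := EuclideanSpace.single i0 (1:ℝ) with hu
    set c : ℝ := (if 0 ≤ a then 1 else -1) * (R + |a|) with hc
    have hcoord : ∀ s : ℝ, (y + s • u) i0 = a + s := by
      intro s
      rw [PiLp.add_apply, PiLp.smul_apply, hu, EuclideanSpace.single_apply]
      simp [hadef]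
    have hsign : ∀ s : ℝ, 0 ≤ s → s ≤ 1 → a + s * c ≠ 0 := by
      intro s hs0 hs1
      rcases le_or_gt 0 a with h | h
      · have ha' : 0 < a := lt_of_le_of_ne h (Ne.symm ha)
        have : 0 ≤ s * c := by
          rw [hc, if_pos h]
          nlinarith [abs_nonneg a]
        nlinarith
      · have : s * c ≤ 0 := by
          rw [hc, if_neg (not_le.mpr h)]
          nlinarith [abs_nonneg a]
        nlinarith
    refine ⟨y + c • u, ⟨⟨⟨fun t => y + ((t : ℝ) * c) • u, by fun_prop⟩, ?_, ?_⟩, ?_⟩, ?_⟩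
    · show y + (((0:unitInterval) : ℝ) * c) • u = y
      norm_num
    · show y + (((1:unitInterval) : ℝ) * c) • u = y + c • u
      norm_num
    · intro t
      apply hmemcoord
      show (y + ((t : ℝ) * c) • u) i0 ≠ 0
      rw [hcoord]
      exact hsign (t : ℝ) t.2.1 t.2.2
    · have h1 : |a + c| = |a| + (R + |a|) := by
        rcases le_or_gt 0 a with h | h
        · rw [hc, if_pos h, one_mul, abs_of_nonneg (by positivity)]
          rw [abs_of_nonneg h]
        · rw [hc, if_neg (not_le.mpr h), neg_one_mul, abs_of_nonpos (by nlinarith [abs_nonneg a])]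
          rw [abs_of_neg h]
          ring
      calc R ≤ |a| + (R + |a|) := by linarith [abs_nonneg a]
        _ = |a + c| := h1.symm
        _ = |(y + c • u) i0| := by rw [hcoord]
        _ ≤ ‖y + c • u‖ := euclid_abs_coord_le_norm _ _

lemma compl_image_unbounded (hd : 1 ≤ d)
    (ψ : EuclideanSpace ℝ (Fin d) ≃ₜ EuclideanSpace ℝ (Fin d))
    (w : EuclideanSpace ℝ (Fin d)) (hw : w ∉ ψ '' stdBallSet d) (R : ℝ) (hR : 0 ≤ R) :
    ∃ z, JoinedIn (ψ '' stdBallSet d)ᶜ w z ∧ R ≤ ‖z‖ := by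
  set y := ψ.symm w with hydef
  have hy : y ∉ stdBallSet d := fun h => hw ⟨y, h, ψ.apply_symm_apply w⟩
  obtain ⟨R2, hR2⟩ : ∃ R2 : ℝ, ∀ v : EuclideanSpace ℝ (Fin d), ‖v‖ ≤ R → ‖ψ.symm v‖ ≤ R2 := by
    obtain ⟨r, hr⟩ := ((isCompact_closedBall (0 : EuclideanSpace ℝ (Fin d)) R).image
      ψ.symm.continuous).isBounded.subset_closedBall 0
    refine ⟨r, fun v hv => ?_⟩
    have : ψ.symm v ∈ Metric.closedBall 0 r :=
      hr ⟨v, by simpa [Metric.mem_closedBall, dist_eq_norm] using hv, rfl⟩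
    simpa [Metric.mem_closedBall, dist_eq_norm] using this
  obtain ⟨z', hz'j, hz'⟩ := compl_stdBallSet_unbounded hd y hy (max (R2 + 1) 0)
    (le_max_right _ _)
  refine ⟨ψ z', ?_, ?_⟩
  · have h2 := hz'j.map ψ.continuous
    have himg : ψ '' (stdBallSet d)ᶜ ⊆ (ψ '' stdBallSet d)ᶜ := by
      rintro _ ⟨v, hv, rfl⟩ ⟨v', hv', hvv⟩
      exact hv (by rwa [← ψ.injective hvv])
    have h3 := h2.mono himg
    rwa [show ψ y = w from ψ.apply_symm_apply w] at h3
  · by_contra h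
    push_neg at h
    have h4 : ‖ψ.symm (ψ z')‖ ≤ R2 := hR2 _ (le_of_lt h)
    rw [ψ.symm_apply_apply] at h4
    have h5 : R2 + 1 ≤ ‖z'‖ := le_trans (le_max_left _ _) hz'
    linarith

end EuclideanHelpers


set_option maxHeartbeats 1600000 in
/-- If `φ : Homeo₀(ℝ^d) → Homeo(ℝ)` is a group morphism whose image has no global fixed
point, then for disjoint embedded `(d-1)`-dimensional balls `D`, `D'`,
`F_D ∩ F_{D'} = ∅`, where `F_D = Fix(φ(H_D^d))`. -/
theorem stmt_8 {d : ℕ} (hd : 1 ≤ d)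
    (φ : Homeo0 (EuclideanSpace ℝ (Fin d)) →* (ℝ ≃ₜ ℝ))
    (hfix : ∀ x : ℝ, ∃ f : Homeo0 (EuclideanSpace ℝ (Fin d)), φ f x ≠ x)
    {D D' : Set (EuclideanSpace ℝ (Fin d))}
    (hD : IsEmbeddedBall D) (hD' : IsEmbeddedBall D') (hdisj : Disjoint D D') :
    fixSet φ (fixingNbhd D) ∩ fixSet φ (fixingNbhd D') = ∅ := by
  
  classical
  by_contra hne
  obtain ⟨x, hxD, hxD'⟩ := Set.nonempty_iff_ne_empty.mpr hne
  obtain ⟨f₀, hf₀⟩ := hfix x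
  apply hf₀
  obtain ⟨e, hDe⟩ := hD
  obtain ⟨e', hD'e⟩ := hD'
  -- basic sets
  have hScpt : IsCompact (stdBallSet d) := isCompact_stdBallSet hd
  have hSne : (stdBallSet d).Nonempty := ⟨0, zero_mem_stdBallSet⟩
  set A : Set (EuclideanSpace ℝ (Fin d)) := e.symm '' D' with hA
  have hAcpt : IsCompact A := by
    rw [hA, hD'e]
    exact ((hScpt.image e'.continuous).image e.symm.continuous)
  have hAne : A.Nonempty := by
    rw [hA, hD'e]
    exact ⟨e.symm (e' 0), ⟨e' 0, ⟨0, zero_mem_stdBallSet, rfl⟩, rfl⟩⟩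
  have hSA : ∀ v ∈ stdBallSet d, v ∉ A := by
    intro v hv hvA
    obtain ⟨w, hw, hwv⟩ := hvA
    have h1 : e v ∈ D := by rw [hDe]; exact ⟨v, hv, rfl⟩
    have h2 : e v ∈ D' := by
      rw [← hwv, e.apply_symm_apply]
      exact hw
    exact Set.disjoint_left.mp hdisj h1 h2
  set ψ : EuclideanSpace ℝ (Fin d) ≃ₜ EuclideanSpace ℝ (Fin d) := e'.trans e.symm with hψ
  have hψS : ψ '' stdBallSet d = A := by
    rw [hA, hD'e, Set.image_image]
    rfl
  -- support of f₀
  have hf₀iso : IsotopicToIdC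
      (f₀ : EuclideanSpace ℝ (Fin d) ≃ₜ EuclideanSpace ℝ (Fin d)) := f₀.2
  obtain ⟨H₀, K, hK, hl₀, h00, h01, hs₀⟩ := hf₀iso
  have hf₀id : ∀ v ∉ K,
      (f₀ : EuclideanSpace ℝ (Fin d) ≃ₜ EuclideanSpace ℝ (Fin d)) v = v := by
    intro v hv
    have h1 := hs₀ 1 v hv
    rw [h01 v] at h1
    exact (Prod.ext_iff.mp h1).1
  -- bound for K in model coordinates
  obtain ⟨RK, hRK0, hRK⟩ : ∃ RK : ℝ, 0 ≤ RK ∧ ∀ v ∈ e.symm '' K, ‖v‖ ≤ RK := by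
    obtain ⟨r0, hr0⟩ := ((hK.image e.symm.continuous).isBounded).subset_closedBall 0
    refine ⟨max r0 0, le_max_right _ _, fun v hv => ?_⟩
    have := hr0 hv
    rw [Metric.mem_closedBall, dist_eq_norm, sub_zero] at this
    exact le_trans this (le_max_left _ _)
  -- the reachability relation
  set Rel : Set (EuclideanSpace ℝ (Fin d)) → Set (EuclideanSpace ℝ (Fin d)) → Prop :=
    fun C C' => ∃ g : Homeo0 (EuclideanSpace ℝ (Fin d)), g ∈ fixingNbhd D' ∧
      (g : EuclideanSpace ℝ (Fin d) ≃ₜ EuclideanSpace ℝ (Fin d)) '' C ⊆ C' with hRel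
  have hRelrefl : ∀ C, Rel C C := by
    intro C
    refine ⟨1, one_mem _, ?_⟩
    rintro w ⟨v, hv, rfl⟩
    exact hv
  have hReltrans : ∀ C C' C'', Rel C C' → Rel C' C'' → Rel C C'' := by
    rintro C C' C'' ⟨g1, hg1, hi1⟩ ⟨g2, hg2, hi2⟩
    refine ⟨g2 * g1, mul_mem hg2 hg1, ?_⟩
    rintro w ⟨v, hv, rfl⟩
    exact hi2 ⟨(g1 : EuclideanSpace ℝ (Fin d) ≃ₜ EuclideanSpace ℝ (Fin d)) v,
      hi1 ⟨v, hv, rfl⟩, rfl⟩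
  have hRelmono : ∀ C C' C'', Rel C C' → C' ⊆ C'' → Rel C C'' := by
    rintro C C' C'' ⟨g1, hg1, hi1⟩ hsub
    exact ⟨g1, hg1, hi1.trans hsub⟩
  -- the basic perturbation step
  have hstep : ∀ (F : EuclideanSpace ℝ (Fin d) → EuclideanSpace ℝ (Fin d)) (L : NNReal),
      L < 1 → LipschitzWith L F →
      ∀ Lc : Set (EuclideanSpace ℝ (Fin d)), IsCompact Lc → (∀ v ∉ Lc, F v = 0) →
      (∀ a ∈ A, a ∉ Lc) →
      ∀ C C' : Set (EuclideanSpace ℝ (Fin d)), ((fun v => v + F v) '' C ⊆ C') →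
      Rel (e '' C) (e '' C') := by
    intro F L hL hF Lc hLc hFsupp hALc C C' himg
    obtain ⟨ph, hiso, happ⟩ := exists_pertHomeo F L hL hF Lc hLc hFsupp
    set g0 := (e.symm.trans ph).trans e with hg0
    have hg0iso : IsotopicToIdC g0 := hiso.conj e
    have hg0mem : g0 ∈ Homeo0 (EuclideanSpace ℝ (Fin d)) := hg0iso
    set g : Homeo0 (EuclideanSpace ℝ (Fin d)) := ⟨g0, hg0mem⟩ with hgdef
    have hg0app : ∀ v, g0 (e v) = e (v + F v) := by
      intro v
      show e (ph (e.symm (e v))) = e (v + F v)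
      rw [e.symm_apply_apply, happ]
    refine ⟨g, ⟨e '' Lcᶜ, e.isOpenMap _ hLc.isClosed.isOpen_compl, ?_, ?_⟩, ?_⟩
    · intro w hw
      refine ⟨e.symm w, ?_, e.apply_symm_apply w⟩
      exact hALc (e.symm w) ⟨w, hw, rfl⟩
    · rintro _ ⟨v, hv, rfl⟩
      show g0 (e v) = e v
      rw [hg0app, hFsupp v hv, add_zero]
    · rintro _ ⟨_, ⟨v, hv, rfl⟩, rfl⟩
      show g0 (e v) ∈ e '' C'
      rw [hg0app]
      exact ⟨v + F v, himg ⟨v, hv, rfl⟩, rfl⟩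
  -- the shrink parameter δ
  have hSclosed : IsClosed (stdBallSet d) := hScpt.isClosed
  obtain ⟨a0, ha0A, ha0min⟩ := hAcpt.exists_isMinOn hAne
    ((Metric.continuous_infDist_pt (stdBallSet d)).continuousOn)
  have ha0pos : 0 < Metric.infDist a0 (stdBallSet d) :=
    (hSclosed.notMem_iff_infDist_pos hSne).mp (fun h => hSA a0 h ha0A)
  set δ : ℝ := Metric.infDist a0 (stdBallSet d) / 2 with hδdef
  have hδpos : 0 < δ := by positivity
  have hδA : ∀ a ∈ A, δ < Metric.infDist a (stdBallSet d) := by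
    intro a ha
    have h2 := ha0min ha
    simp only [Set.mem_setOf_eq] at h2
    calc δ < Metric.infDist a0 (stdBallSet d) := by rw [hδdef]; linarith
      _ ≤ Metric.infDist a (stdBallSet d) := h2
  -- the cut-off function for the shrink map
  set μ : EuclideanSpace ℝ (Fin d) → ℝ :=
    fun v => max 0 (min 1 (1 - Metric.infDist v (stdBallSet d) / δ)) with hμdef
  have hμ0 : ∀ v, 0 ≤ μ v := fun v => le_max_left _ _
  have hμle1 : ∀ v, μ v ≤ 1 := fun v => max_le zero_le_one (min_le_left _ _)
  have hμone : ∀ v ∈ stdBallSet d, μ v = 1 := by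
    intro v hv
    show max 0 (min 1 (1 - Metric.infDist v (stdBallSet d) / δ)) = 1
    rw [Metric.infDist_zero_of_mem hv]
    norm_num
  have hμzero : ∀ v, δ < Metric.infDist v (stdBallSet d) → μ v = 0 := by
    intro v hv
    have h1 : 1 - Metric.infDist v (stdBallSet d) / δ < 0 := by
      rw [sub_neg, lt_div_iff₀ hδpos]
      linarith
    have h2 : min 1 (1 - Metric.infDist v (stdBallSet d) / δ) ≤ 0 :=
      le_trans (min_le_right _ _) (le_of_lt h1)
    show max 0 (min 1 (1 - Metric.infDist v (stdBallSet d) / δ)) = 0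
    exact max_eq_left h2
  have hμlip : ∀ v w, |μ v - μ w| ≤ δ⁻¹ * dist v w := by
    intro v w
    exact clamp_lip 1 δ hδpos (fun v => Metric.infDist v (stdBallSet d))
      (fun v w => by
        have h3 := (Metric.lipschitz_infDist_pt (stdBallSet d)).dist_le_mul v w
        rwa [Real.dist_eq, NNReal.coe_one, one_mul] at h3) v w
  -- shrink speed
  have hCspos : (0:ℝ) < 2 + (1 + δ) / δ := by positivity
  set s : ℝ := 1 / (2 * (2 + (1 + δ) / δ)) with hs
  have hspos : 0 < s := by positivity
  have hsCs : s * (2 + (1 + δ) / δ) = 1 / 2 := by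
    rw [hs]
    field_simp
  have hslt1 : s < 1 := by
    rw [hs, div_lt_one (by positivity)]
    have hq : 0 < (1 + δ) / δ := by positivity
    linarith
  set Fsh : EuclideanSpace ℝ (Fin d) → EuclideanSpace ℝ (Fin d) :=
    fun v => (-(s * μ v)) • v with hFsh
  have hFshsupp : ∀ v ∉ (Metric.closedBall (0 : EuclideanSpace ℝ (Fin d)) (1 + δ) ∩
      {v | Metric.infDist v (stdBallSet d) ≤ δ}), Fsh v = 0 := by
    intro v hv
    rw [Set.mem_inter_iff, not_and_or] at hv
    have hμv : μ v = 0 := by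
      rcases hv with hv | hv
      · rw [Metric.mem_closedBall, dist_eq_norm, sub_zero, not_le] at hv
        apply hμzero
        obtain ⟨p, hp, hdp⟩ := hScpt.exists_infDist_eq_dist hSne v
        rw [hdp]
        have h3 : ‖v‖ - ‖p‖ ≤ dist v p := by
          rw [dist_eq_norm]
          exact norm_sub_norm_le v p
        have h4 := norm_le_one_of_mem_stdBallSet hp
        linarith
      · rw [Set.mem_setOf_eq, not_le] at hv
        exact hμzero v hv
    rw [hFsh]
    simp only [hμv, mul_zero, neg_zero, zero_smul]
  have hFshlipR : ∀ v w, dist (Fsh v) (Fsh w)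
      ≤ (2 * s + (s * δ⁻¹) * (1 + δ)) * dist v w := by
    intro v w
    apply lip_smul_self (fun v => -(s * μ v)) (s * δ⁻¹) s (1 + δ)
      (le_of_lt hspos) (by positivity) (by positivity)
    · intro a b
      have h1 : -(s * μ a) - -(s * μ b) = s * (μ b - μ a) := by ring
      rw [h1, abs_mul, abs_of_pos hspos, abs_sub_comm]
      calc s * |μ a - μ b| ≤ s * (δ⁻¹ * dist a b) :=
            mul_le_mul_of_nonneg_left (hμlip a b) (le_of_lt hspos)
        _ = s * δ⁻¹ * dist a b := by ring
    · intro v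
      rw [abs_neg, abs_mul, abs_of_pos hspos]
      calc s * |μ v| ≤ s * 1 := by
            apply mul_le_mul_of_nonneg_left _ (le_of_lt hspos)
            rw [abs_of_nonneg (hμ0 v)]
            exact hμle1 v
        _ = s := mul_one s
    · intro v hv
      have : μ v = 0 := by
        apply hμzero
        obtain ⟨p, hp, hdp⟩ := hScpt.exists_infDist_eq_dist hSne v
        rw [hdp]
        have h3 : ‖v‖ - ‖p‖ ≤ dist v p := by
          rw [dist_eq_norm]
          exact norm_sub_norm_le v p
        have h4 := norm_le_one_of_mem_stdBallSet hp
        linarith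
      rw [this, mul_zero, neg_zero]
  have hFshbound : 2 * s + (s * δ⁻¹) * (1 + δ) = 1 / 2 := by
    rw [← hsCs]
    field_simp
  have hFshlip : LipschitzWith (1/2 : NNReal) Fsh := by
    apply LipschitzWith.of_dist_le_mul
    intro v w
    have := hFshlipR v w
    rw [hFshbound] at this
    convert this using 2
    norm_num
  have hLchalf : ((1:NNReal)/2) < 1 := by
    rw [← NNReal.coe_lt_coe]
    norm_num
  -- compactness of the shrink support, and it avoids A
  have hLshcpt : IsCompact (Metric.closedBall (0 : EuclideanSpace ℝ (Fin d)) (1 + δ) ∩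
      {v | Metric.infDist v (stdBallSet d) ≤ δ}) := by
    apply (isCompact_closedBall _ _).inter_right
    exact isClosed_le (Metric.continuous_infDist_pt _) continuous_const
  have hLshA : ∀ a ∈ A, a ∉ (Metric.closedBall (0 : EuclideanSpace ℝ (Fin d)) (1 + δ) ∩
      {v | Metric.infDist v (stdBallSet d) ≤ δ}) := by
    intro a ha hmem
    exact absurd hmem.2 (not_le.mpr (hδA a ha))
  -- the iterated shrink
  have hshrink : ∀ n : ℕ, Rel (e '' stdBallSet d)
      (e '' ((fun v => ((1 - s) ^ n : ℝ) • v) '' stdBallSet d)) := by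
    intro n
    induction n with
    | zero =>
      apply hRelmono _ _ _ (hRelrefl _)
      apply Set.image_mono
      intro v hv
      exact ⟨v, hv, by simp⟩
    | succ n ih =>
      apply hReltrans _ _ _ ih
      apply hstep Fsh (1/2) hLchalf hFshlip _ hLshcpt hFshsupp hLshA
      rintro _ ⟨_, ⟨v, hv, rfl⟩, rfl⟩
      refine ⟨v, hv, ?_⟩
      have hb0 : (0:ℝ) ≤ 1 - s := by linarith
      have hc0 : (0:ℝ) ≤ (1 - s) ^ n := pow_nonneg hb0 n
      have hc1 : ((1 - s) ^ n : ℝ) ≤ 1 := pow_le_one₀ hb0 (by linarith)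
      have hμ1 : μ (((1 - s) ^ n : ℝ) • v) = 1 :=
        hμone _ (smul_mem_stdBallSet hc0 hc1 hv)
      show ((1 - s) ^ (n+1) : ℝ) • v
        = ((1 - s) ^ n : ℝ) • v + Fsh (((1 - s) ^ n : ℝ) • v)
      rw [hFsh]
      simp only [hμ1, mul_one]
      rw [smul_smul, ← add_smul]
      congr 1
      ring
  -- choose the far-away target point z and the path
  have h0S : (0 : EuclideanSpace ℝ (Fin d)) ∈ stdBallSet d := zero_mem_stdBallSet
  have h0ψ : (0 : EuclideanSpace ℝ (Fin d)) ∉ ψ '' stdBallSet d := by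
    rw [hψS]
    exact hSA 0 h0S
  obtain ⟨z, hzjoin, hznorm⟩ := compl_image_unbounded hd ψ 0 h0ψ (RK + 2) (by linarith)
  rw [hψS] at hzjoin
  obtain ⟨γ, hγ⟩ := hzjoin
  -- a uniform margin around the path
  obtain ⟨t0, ht0, ht0min⟩ := (isCompact_Icc (a := (0:ℝ)) (b := 1)).exists_isMinOn
    (Set.nonempty_Icc.mpr zero_le_one)
    ((Metric.continuous_infDist_pt A).comp γ.continuous_extend).continuousOn
  have hextmem : ∀ t ∈ Set.Icc (0:ℝ) 1, γ.extend t ∈ Aᶜ := by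
    intro t ht
    rw [γ.extend_apply ht]
    exact hγ _
  have hm0pos : 0 < Metric.infDist (γ.extend t0) A :=
    (hAcpt.isClosed.notMem_iff_infDist_pos hAne).mp (hextmem t0 ht0)
  set r : ℝ := Metric.infDist (γ.extend t0) A / 4 with hrdef
  have hrpos : 0 < r := by positivity
  have hA2r : ∀ t ∈ Set.Icc (0:ℝ) 1, ∀ w, dist w (γ.extend t) ≤ 2 * r → w ∉ A := by
    intro t ht w hw hwA
    have h1 : Metric.infDist (γ.extend t) A ≤ dist (γ.extend t) w :=
      Metric.infDist_le_dist_of_mem hwA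
    have h2 := ht0min ht
    simp only [Set.mem_setOf_eq, Function.comp_apply] at h2
    rw [dist_comm] at h1
    have : Metric.infDist (γ.extend t0) A ≤ 2 * r := le_trans (le_trans h2 h1) hw
    rw [hrdef] at this
    linarith [hm0pos]
  -- subdivision
  obtain ⟨δu, hδupos, hδu⟩ := Metric.uniformContinuousOn_iff.mp
    ((isCompact_Icc (a := (0:ℝ)) (b := 1)).uniformContinuousOn_of_continuous
      γ.continuous_extend.continuousOn) (r / 2) (by positivity)
  obtain ⟨N0, hN0⟩ := exists_nat_one_div_lt hδupos
  set N : ℕ := N0 + 1 with hN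
  have hNpos : 0 < N := Nat.succ_pos _
  have hNR : (0:ℝ) < N := by exact_mod_cast hNpos
  have h1N : 1 / (N:ℝ) < δu := by
    rw [hN]
    push_cast
    exact hN0
  set ρ : ℝ := min r 1 with hρ
  have hρpos : 0 < ρ := lt_min hrpos one_pos
  have hρr : ρ ≤ r := min_le_left _ _
  have hρ1 : ρ ≤ 1 := min_le_right _ _
  have hdivmem : ∀ i : ℕ, i ≤ N → ((i:ℝ) / N) ∈ Set.Icc (0:ℝ) 1 := by
    intro i hi
    constructor
    · positivity
    · rw [div_le_one hNR]
      exact_mod_cast hi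
  -- the pushes
  have hpush : ∀ i : ℕ, i ≤ N → Rel (e '' Metric.closedBall (γ.extend ((0:ℝ) / N)) ρ)
      (e '' Metric.closedBall (γ.extend ((i:ℝ) / N)) ρ) := by
    intro i hi
    induction i with
    | zero =>
      have h0 : ((0:ℕ):ℝ) = (0:ℝ) := Nat.cast_zero
      rw [h0]
      exact hRelrefl _
    | succ i ih =>
      have hiN : i ≤ N := le_trans (Nat.le_succ i) hi
      apply hReltrans _ _ _ (ih hiN)
      set c1 : EuclideanSpace ℝ (Fin d) := γ.extend ((i:ℝ) / N) with hc1
      set c2 : EuclideanSpace ℝ (Fin d) := γ.extend (((i+1:ℕ):ℝ) / N) with hc2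
      have hvnorm : dist c2 c1 < r / 2 := by
        apply hδu _ (hdivmem (i+1) hi) _ (hdivmem i hiN)
        rw [Real.dist_eq]
        have : ((i+1:ℕ):ℝ) / N - (i:ℝ) / N = 1 / N := by
          push_cast
          field_simp
          ring
        rw [this, abs_of_pos (by positivity)]
        exact h1N
      set lam : EuclideanSpace ℝ (Fin d) → ℝ :=
        fun w => max 0 (min 1 (2 - dist w c1 / r)) with hlam
      set Fp : EuclideanSpace ℝ (Fin d) → EuclideanSpace ℝ (Fin d) :=
        fun w => lam w • (c2 - c1) with hFp
      have hlamlip : ∀ w w', |lam w - lam w'| ≤ r⁻¹ * dist w w' :=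
        clamp_lip 2 r hrpos (fun w => dist w c1) (fun w w' => abs_dist_sub_le w w' c1)
      have hlam1 : ∀ w, dist w c1 ≤ r → lam w = 1 := by
        intro w hw
        have h1 : (1:ℝ) ≤ 2 - dist w c1 / r := by
          have h2 : dist w c1 / r ≤ 1 := by
            rw [div_le_one hrpos]; exact hw
          linarith
        rw [hlam]
        simp only [min_eq_left h1, max_eq_right zero_le_one]
      have hlam0 : ∀ w, 2 * r ≤ dist w c1 → lam w = 0 := by
        intro w hw
        have h1 : 2 - dist w c1 / r ≤ 0 := by
          have h2 : (2:ℝ) ≤ dist w c1 / r := by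
            rw [le_div_iff₀ hrpos]; linarith
          linarith
        rw [hlam]
        simp only [max_eq_left (le_trans (min_le_right _ _) h1)]
      have hFplip : LipschitzWith ((1:NNReal)/2) Fp := by
        apply LipschitzWith.of_dist_le_mul
        intro w w'
        rw [dist_eq_norm, hFp]
        have h2 : lam w • (c2 - c1) - lam w' • (c2 - c1) = (lam w - lam w') • (c2 - c1) :=
          (sub_smul _ _ _).symm
        rw [h2, norm_smul, Real.norm_eq_abs]
        have h3 : ‖c2 - c1‖ ≤ r / 2 := by
          rw [← dist_eq_norm]; exact le_of_lt hvnorm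
        have hcoe : (((1:NNReal)/2 : NNReal) : ℝ) = 1/2 := by norm_num
        rw [hcoe]
        calc |lam w - lam w'| * ‖c2 - c1‖ ≤ (r⁻¹ * dist w w') * (r/2) :=
              mul_le_mul (hlamlip w w') h3 (norm_nonneg _) (by positivity)
          _ = (r⁻¹ * r) * (dist w w' / 2) := by ring
          _ = 1/2 * dist w w' := by
              rw [inv_mul_cancel₀ (ne_of_gt hrpos)]; ring
      have hFpsupp : ∀ w ∉ Metric.closedBall c1 (2*r), Fp w = 0 := by
        intro w hw
        rw [Metric.mem_closedBall, not_le] at hw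
        rw [hFp]
        simp only [hlam0 w (le_of_lt hw), zero_smul]
      have hFpavoid : ∀ a ∈ A, a ∉ Metric.closedBall c1 (2*r) := by
        intro a ha hmem
        rw [Metric.mem_closedBall] at hmem
        exact hA2r _ (hdivmem i hiN) a hmem ha
      apply hstep Fp ((1:NNReal)/2) hLchalf hFplip _
        (isCompact_closedBall _ _) hFpsupp hFpavoid
      rintro _ ⟨w, hw, rfl⟩
      rw [Metric.mem_closedBall] at hw
      have h4 : lam w = 1 := hlam1 w (le_trans hw hρr)
      show w + Fp w ∈ Metric.closedBall c2 ρ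
      rw [Metric.mem_closedBall, hFp]
      simp only [h4, one_smul]
      have h5 : w + (c2 - c1) - c2 = w - c1 := by abel
      rw [dist_eq_norm, h5, ← dist_eq_norm]
      exact hw
  -- assemble the chain
  have hchain : Rel (e '' stdBallSet d) (e '' Metric.closedBall z ρ) := by
    obtain ⟨n, hn⟩ := exists_pow_lt_of_lt_one hρpos (by linarith : 1 - s < 1)
    have h2 : Rel (e '' stdBallSet d)
        (e '' Metric.closedBall (γ.extend ((0:ℝ) / N)) ρ) := by
      apply hRelmono _ _ _ (hshrink n)
      apply Set.image_mono
      rintro _ ⟨v, hv, rfl⟩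
      rw [show (0:ℝ)/(N:ℝ) = 0 by simp, Path.extend_zero]
      rw [Metric.mem_closedBall, dist_eq_norm, sub_zero, norm_smul, Real.norm_eq_abs,
        abs_of_nonneg (pow_nonneg (by linarith : (0:ℝ) ≤ 1 - s) n)]
      have h4 := norm_le_one_of_mem_stdBallSet hv
      nlinarith [le_of_lt hn, pow_nonneg (by linarith : (0:ℝ) ≤ 1 - s) n, norm_nonneg v]
    have h3 := hpush N (le_refl N)
    rw [show ((N:ℝ))/(N:ℝ) = 1 from div_self (ne_of_gt hNR), Path.extend_one] at h3
    exact hReltrans _ _ _ h2 h3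
  obtain ⟨g, hgmem, hgimg⟩ := hchain
  -- the image of D under g avoids K
  have hgDK : ∀ v ∈ D,
      (g : EuclideanSpace ℝ (Fin d) ≃ₜ EuclideanSpace ℝ (Fin d)) v ∉ K := by
    intro v hv hyK
    rw [hDe] at hv
    have h5 : (g : EuclideanSpace ℝ (Fin d) ≃ₜ EuclideanSpace ℝ (Fin d)) v
        ∈ e '' Metric.closedBall z ρ := hgimg ⟨v, hv, rfl⟩
    obtain ⟨w, hw, hwe⟩ := h5
    have h6 : w ∈ e.symm '' K :=
      ⟨(g : EuclideanSpace ℝ (Fin d) ≃ₜ EuclideanSpace ℝ (Fin d)) v, hyK, by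
        rw [← hwe, e.symm_apply_apply]⟩
    have h7 := hRK w h6
    rw [Metric.mem_closedBall] at hw
    have h8 : ‖z‖ - ‖w‖ ≤ dist w z := by
      rw [dist_comm, dist_eq_norm]
      exact norm_sub_norm_le z w
    linarith
  -- conclude
  have hgx : φ g x = x := hxD' g hgmem
  have hhmem : g⁻¹ * f₀ * g ∈ fixingNbhd D := by
    refine ⟨(⇑(g : EuclideanSpace ℝ (Fin d) ≃ₜ EuclideanSpace ℝ (Fin d))) ⁻¹' Kᶜ,
      hK.isClosed.isOpen_compl.preimage
        (g : EuclideanSpace ℝ (Fin d) ≃ₜ EuclideanSpace ℝ (Fin d)).continuous, ?_, ?_⟩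
    · intro v hv
      exact hgDK v hv
    · intro v hv
      show ((g : EuclideanSpace ℝ (Fin d) ≃ₜ EuclideanSpace ℝ (Fin d))).symm
        ((f₀ : EuclideanSpace ℝ (Fin d) ≃ₜ EuclideanSpace ℝ (Fin d))
          ((g : EuclideanSpace ℝ (Fin d) ≃ₜ EuclideanSpace ℝ (Fin d)) v)) = v
      rw [hf₀id _ hv, Homeomorph.symm_apply_apply]
  have hf₀eq : f₀ = g * (g⁻¹ * f₀ * g) * g⁻¹ := by group
  rw [hf₀eq, map_mul, map_mul, map_inv]
  have hgsx : (φ g)⁻¹ x = x := by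
    conv_lhs => rw [← hgx]
    exact (φ g).symm_apply_apply x
  show (φ g) ((φ (g⁻¹ * f₀ * g)) ((φ g)⁻¹ x)) = x
  rw [hgsx, hxD _ hhmem, hgx]
end

section
/- Let d ≥ 1 and let φ : Homeo₀(ℝᵈ) → Homeo(ℝ) be a group homomorphism such that no point of ℝ is fixed by every element of φ(Homeo₀(ℝᵈ)), and suppose the sets F_D = Fix(φ(H_D^d)) are nonempty. Then for every embedded (d−1)-dimensional ball D of ℝᵈ, the set F_D consists of exactly one point. -/
namespace Stmt10Aux

open Set Topology Filter Bornology

section HomeoExt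

variable {Y : Type*} [TopologicalSpace Y] [T2Space Y] [WeaklyLocallyCompactSpace Y]

theorem isClosedMap_of_id_outside {f : Y → Y} (hc : Continuous f)
    (K : Set Y) (hK : IsCompact K) (hid : ∀ y ∉ K, f y = y) : IsClosedMap f := by
  have hproper : IsProperMap f := by
    rw [isProperMap_iff_isCompact_preimage]
    refine ⟨hc, fun L hL => ?_⟩
    have hsub : f ⁻¹' L ⊆ K ∪ L := by
      intro x hx
      by_cases hxK : x ∈ K
      · exact Or.inl hxK
      · exact Or.inr (by rwa [← hid x hxK])
    exact (hK.union hL).of_isClosed_subset (hL.isClosed.preimage hc) hsub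
  exact hproper.isClosedMap

/-- A continuous bijection of a (compactly generated) Hausdorff space which is the identity
outside a compact set is a homeomorphism. -/
noncomputable def homeoExt (f : Y → Y) (hc : Continuous f) (hb : Function.Bijective f)
    (K : Set Y) (hK : IsCompact K) (hid : ∀ y ∉ K, f y = y) : Y ≃ₜ Y where
  toEquiv := Equiv.ofBijective f hb
  continuous_toFun := hc
  continuous_invFun := by
    rw [continuous_iff_isClosed]
    intro C hC
    have himg : (Equiv.ofBijective f hb).symm ⁻¹' C = f '' C := by
      ext y
      constructor
      · intro hy
        exact ⟨(Equiv.ofBijective f hb).symm y, hy,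
          (Equiv.ofBijective f hb).apply_symm_apply y⟩
      · rintro ⟨c, hcC, rfl⟩
        have : (Equiv.ofBijective f hb).symm (f c) = c :=
          (Equiv.ofBijective f hb).symm_apply_apply c
        simpa [this] using hcC
    show IsClosed ((Equiv.ofBijective f hb).symm ⁻¹' C)
    rw [himg]
    exact isClosedMap_of_id_outside hc K hK hid C hC

omit [T2Space Y] [WeaklyLocallyCompactSpace Y] in
@[simp] theorem homeoExt_apply [T2Space Y] [WeaklyLocallyCompactSpace Y]
    (f : Y → Y) (hc : Continuous f) (hb : Function.Bijective f)
    (K : Set Y) (hK : IsCompact K) (hid : ∀ y ∉ K, f y = y) (y : Y) :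
    homeoExt f hc hb K hK hid y = f y := rfl

end HomeoExt

section Ramp

/-- A 1-dimensional "ramp" shift map. -/
noncomputable def rampF (r m₁ p₀ M s : ℝ) : ℝ :=
  max s (min (s + r * ((s - m₁) * (p₀ - m₁)⁻¹)) (s + r * ((M - s) * (M - p₀)⁻¹)))

variable {c r m₁ p₀ M : ℝ}

theorem rampF_strictMono (hm : m₁ < p₀) (hM : p₀ + c < M) (hr0 : 0 ≤ r) (hrc : r ≤ c) :
    StrictMono (rampF r m₁ p₀ M) := by
  have h1 : (0:ℝ) < p₀ - m₁ := by linarith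
  have hc0 : (0:ℝ) ≤ c := le_trans hr0 hrc
  have h2 : (0:ℝ) < M - p₀ := by linarith
  have hA : StrictMono (fun s : ℝ => s + r * ((s - m₁) * (p₀ - m₁)⁻¹)) := by
    intro s₁ s₂ h
    have hpos : (0:ℝ) < 1 + r * (p₀ - m₁)⁻¹ := by positivity
    have key : 0 < (s₂ - s₁) * (1 + r * (p₀ - m₁)⁻¹) := mul_pos (by linarith) hpos
    simp only
    nlinarith [key]
  have hB : StrictMono (fun s : ℝ => s + r * ((M - s) * (M - p₀)⁻¹)) := by
    intro s₁ s₂ h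
    have hlt : r * (M - p₀)⁻¹ < 1 := by
      rw [← div_eq_mul_inv]
      exact (div_lt_one h2).2 (by linarith)
    have key : 0 < (s₂ - s₁) * (1 - r * (M - p₀)⁻¹) := mul_pos (by linarith) (by linarith)
    simp only
    nlinarith [key]
  intro s₁ s₂ h
  exact max_lt_max h (min_lt_min (hA h) (hB h))

theorem rampF_of_left (hr0 : 0 ≤ r) (hm : m₁ < p₀) (hs : s ≤ m₁) :
    rampF r m₁ p₀ M s = s := by
  have h1 : (0:ℝ) < p₀ - m₁ := by linarith
  have hA : s + r * ((s - m₁) * (p₀ - m₁)⁻¹) ≤ s := by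
    have : r * ((s - m₁) * (p₀ - m₁)⁻¹) ≤ 0 := by
      apply mul_nonpos_of_nonneg_of_nonpos hr0
      apply mul_nonpos_of_nonpos_of_nonneg (by linarith) (by positivity)
    linarith
  exact max_eq_left (le_trans (min_le_left _ _) hA)

theorem rampF_of_right (hr0 : 0 ≤ r) (hm : p₀ < M) (hs : M ≤ s) :
    rampF r m₁ p₀ M s = s := by
  have h2 : (0:ℝ) < M - p₀ := by linarith
  have hB : s + r * ((M - s) * (M - p₀)⁻¹) ≤ s := by
    have : r * ((M - s) * (M - p₀)⁻¹) ≤ 0 := by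
      apply mul_nonpos_of_nonneg_of_nonpos hr0
      apply mul_nonpos_of_nonpos_of_nonneg (by linarith) (by positivity)
    linarith
  exact max_eq_left (le_trans (min_le_right _ _) hB)

theorem rampF_peak (hr0 : 0 ≤ r) (hm : m₁ < p₀) (hM : p₀ < M) :
    rampF r m₁ p₀ M p₀ = p₀ + r := by
  have h1 : (p₀ - m₁) ≠ 0 := ne_of_gt (by linarith)
  have h2 : (M - p₀) ≠ 0 := ne_of_gt (by linarith)
  unfold rampF
  rw [mul_inv_cancel₀ h1, mul_inv_cancel₀ h2]
  simp only [mul_one]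
  rw [min_self, max_eq_right (by linarith)]

theorem rampF_zero : rampF 0 m₁ p₀ M s = s := by
  simp [rampF]

theorem rampF_continuous : Continuous (fun p : ℝ × ℝ => rampF p.1 m₁ p₀ M p.2) := by
  unfold rampF
  fun_prop

theorem rampF_surjective (hm : m₁ < p₀) (hM : p₀ + c < M) (hr0 : 0 ≤ r) (hrc : r ≤ c) :
    Function.Surjective (rampF r m₁ p₀ M) := by
  have hc0 : (0:ℝ) ≤ c := le_trans hr0 hrc
  have hm1M : m₁ ≤ M := by linarith
  intro y
  rcases le_or_gt y m₁ with hy | hy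
  · exact ⟨y, rampF_of_left hr0 hm hy⟩
  rcases le_or_gt M y with hy2 | hy2
  · exact ⟨y, rampF_of_right hr0 (by linarith) hy2⟩
  · have hcont : ContinuousOn (rampF r m₁ p₀ M) (Set.Icc m₁ M) := by
      have := rampF_continuous (m₁ := m₁) (p₀ := p₀) (M := M)
      have : Continuous (rampF r m₁ p₀ M) := by
        have h' : Continuous (fun s : ℝ => ((r, s) : ℝ × ℝ)) := by fun_prop
        exact rampF_continuous.comp h'
      exact this.continuousOn
    have hIcc : Set.Icc (rampF r m₁ p₀ M m₁) (rampF r m₁ p₀ M M) ⊆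
        (rampF r m₁ p₀ M) '' (Set.Icc m₁ M) := intermediate_value_Icc hm1M hcont
    rw [rampF_of_left hr0 hm le_rfl, rampF_of_right hr0 (by linarith) le_rfl] at hIcc
    obtain ⟨s, _, hs⟩ := hIcc ⟨le_of_lt hy, le_of_lt hy2⟩
    exact ⟨s, hs⟩

end Ramp

end Stmt10Aux

namespace Stmt10Aux

open Set

section Shear

variable {d : ℕ}

local notation "X" => EuclideanSpace ℝ (Fin d)

/-- coordinate vector -/
noncomputable def Ej (j : Fin d) : EuclideanSpace ℝ (Fin d) := EuclideanSpace.single j 1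

@[simp] theorem Ej_apply_self (j : Fin d) : Ej j j = 1 := by
  simp [Ej, EuclideanSpace.single_apply]

theorem Ej_apply_ne {i j : Fin d} (h : i ≠ j) : Ej j i = 0 := by
  simp [Ej, EuclideanSpace.single_apply, h]

theorem norm_Ej (j : Fin d) : ‖Ej j‖ = 1 := by
  simp [Ej, EuclideanSpace.norm_single]

theorem abs_coord_le_norm (x : EuclideanSpace ℝ (Fin d)) (i : Fin d) : |x i| ≤ ‖x‖ := by
  rw [EuclideanSpace.norm_eq]
  have h1 : |x i| = Real.sqrt (‖x i‖ ^ 2) := by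
    rw [Real.sqrt_sq_eq_abs]; simp
  rw [h1]
  apply Real.sqrt_le_sqrt
  apply Finset.single_le_sum (f := fun i => ‖x i‖ ^ 2) (fun i _ => by positivity)
    (Finset.mem_univ i)

/-- horizontal norm -/
noncomputable def hnorm (j : Fin d) (x : EuclideanSpace ℝ (Fin d)) : ℝ := ‖x - x j • Ej j‖

theorem hnorm_eq_of_offdiag_eq {j : Fin d} {x y : EuclideanSpace ℝ (Fin d)}
    (h : ∀ i, i ≠ j → x i = y i) : hnorm j x = hnorm j y := by
  unfold hnorm
  congr 1
  ext i
  by_cases hij : i = j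
  · subst hij
    simp [PiLp.sub_apply, PiLp.smul_apply]
  · simp [PiLp.sub_apply, PiLp.smul_apply, Ej_apply_ne hij, h i hij]

theorem hnorm_add_smul (j : Fin d) (x : EuclideanSpace ℝ (Fin d)) (t : ℝ) :
    hnorm j (x + t • Ej j) = hnorm j x := by
  apply hnorm_eq_of_offdiag_eq
  intro i hij
  simp [PiLp.add_apply, PiLp.smul_apply, Ej_apply_ne hij]

theorem norm_le_hnorm_add (j : Fin d) (x : EuclideanSpace ℝ (Fin d)) :
    ‖x‖ ≤ hnorm j x + |x j| := by
  calc ‖x‖ = ‖(x - x j • Ej j) + x j • Ej j‖ := by congr 1; abel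
    _ ≤ ‖x - x j • Ej j‖ + ‖x j • Ej j‖ := norm_add_le _ _
    _ = hnorm j x + |x j| := by
        rw [norm_smul, norm_Ej]
        simp [hnorm]

theorem hnorm_continuous (j : Fin d) : Continuous (hnorm j) := by
  apply Continuous.norm
  exact continuous_id.sub (((EuclideanSpace.proj j).continuous).smul continuous_const)

/-- the [0,1]-valued cutoff -/
noncomputable def cut01 (u : ℝ) : ℝ := max 0 (min 1 (2 - u))

theorem cut01_nonneg (u : ℝ) : 0 ≤ cut01 u := le_max_left _ _

theorem cut01_le_one (u : ℝ) : cut01 u ≤ 1 :=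
  max_le zero_le_one (min_le_left _ _)

theorem cut01_of_le_one {u : ℝ} (h : u ≤ 1) : cut01 u = 1 := by
  unfold cut01
  rw [min_eq_left (by linarith), max_eq_right zero_le_one]

theorem cut01_of_two_le {u : ℝ} (h : 2 ≤ u) : cut01 u = 0 := by
  unfold cut01
  rw [max_eq_left]
  exact le_trans (min_le_right _ _) (by linarith)

theorem cut01_continuous : Continuous cut01 := by
  unfold cut01; fun_prop

/-- the shear map -/
noncomputable def shF (j : Fin d) (c m₁ p₀ M ρ : ℝ) (x : EuclideanSpace ℝ (Fin d)) :
    EuclideanSpace ℝ (Fin d) :=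
  x + (rampF (c * ρ * cut01 (hnorm j x)) m₁ p₀ M (x j) - x j) • Ej j

theorem shF_apply_ne {j : Fin d} {c m₁ p₀ M ρ : ℝ} {x : EuclideanSpace ℝ (Fin d)}
    {i : Fin d} (h : i ≠ j) : shF j c m₁ p₀ M ρ x i = x i := by
  simp [shF, PiLp.add_apply, PiLp.smul_apply, Ej_apply_ne h]

theorem shF_apply_j (j : Fin d) (c m₁ p₀ M ρ : ℝ) (x : EuclideanSpace ℝ (Fin d)) :
    shF j c m₁ p₀ M ρ x j = rampF (c * ρ * cut01 (hnorm j x)) m₁ p₀ M (x j) := by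
  simp [shF, PiLp.add_apply, PiLp.smul_apply]

theorem hnorm_shF (j : Fin d) (c m₁ p₀ M ρ : ℝ) (x : EuclideanSpace ℝ (Fin d)) :
    hnorm j (shF j c m₁ p₀ M ρ x) = hnorm j x := by
  apply hnorm_eq_of_offdiag_eq
  intro i hij
  exact shF_apply_ne hij

end Shear

end Stmt10Aux

namespace Stmt10Aux

open Set

section Shear2

variable {d : ℕ} {j : Fin d} {c m₁ p₀ M ρ : ℝ}

theorem rcoef_bounds (hc0 : 0 ≤ c) (hρ0 : 0 ≤ ρ) (hρ1 : ρ ≤ 1) (u : ℝ) :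
    0 ≤ c * ρ * cut01 u ∧ c * ρ * cut01 u ≤ c := by
  constructor
  · have := cut01_nonneg u
    positivity
  · have h1 := cut01_le_one u
    have h0 := cut01_nonneg u
    calc c * ρ * cut01 u ≤ c * ρ * 1 :=
          mul_le_mul_of_nonneg_left h1 (mul_nonneg hc0 hρ0)
      _ = c * ρ := by ring
      _ ≤ c * 1 := mul_le_mul_of_nonneg_left hρ1 hc0
      _ = c := by ring

theorem shF_injective (hm : m₁ < p₀) (hM : p₀ + c < M) (hc0 : 0 ≤ c)
    (hρ0 : 0 ≤ ρ) (hρ1 : ρ ≤ 1) : Function.Injective (shF j c m₁ p₀ M ρ) := by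
  intro x y h
  have hoff : ∀ i, i ≠ j → x i = y i := by
    intro i hij
    have := congrArg (fun z => z i) h
    simpa [shF_apply_ne hij] using this
  have hhn : hnorm j x = hnorm j y := hnorm_eq_of_offdiag_eq hoff
  have hj : x j = y j := by
    have hcoord := congrArg (fun z => z j) h
    simp only [shF_apply_j, hhn] at hcoord
    obtain ⟨hr0, hrc⟩ := rcoef_bounds hc0 hρ0 hρ1 (hnorm j y)
    exact (rampF_strictMono hm hM hr0 hrc).injective hcoord
  ext i
  by_cases hij : i = j
  · subst hij; exact hj
  · exact hoff i hij

theorem shF_surjective (hm : m₁ < p₀) (hM : p₀ + c < M) (hc0 : 0 ≤ c)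
    (hρ0 : 0 ≤ ρ) (hρ1 : ρ ≤ 1) : Function.Surjective (shF j c m₁ p₀ M ρ) := by
  intro y
  obtain ⟨hr0, hrc⟩ := rcoef_bounds hc0 hρ0 hρ1 (hnorm j y)
  obtain ⟨s, hs⟩ := rampF_surjective hm hM hr0 hrc (y j)
  refine ⟨y + (s - y j) • Ej j, ?_⟩
  have hoff : ∀ i, i ≠ j → (y + (s - y j) • Ej j) i = y i := by
    intro i hij
    simp [PiLp.add_apply, PiLp.smul_apply, Ej_apply_ne hij]
  have hhn : hnorm j (y + (s - y j) • Ej j) = hnorm j y := hnorm_add_smul j y _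
  have hjc : (y + (s - y j) • Ej j) j = s := by
    simp [PiLp.add_apply, PiLp.smul_apply]
  ext i
  by_cases hij : i = j
  · subst hij
    rw [shF_apply_j, hhn, hjc, hs]
  · rw [shF_apply_ne hij, hoff i hij]

theorem shF_continuous_joint (m₁ p₀ M : ℝ) (j : Fin d) (c : ℝ) :
    Continuous (fun p : (EuclideanSpace ℝ (Fin d)) × ℝ => shF j c m₁ p₀ M p.2 p.1) := by
  unfold shF
  have hcoord : Continuous (fun p : (EuclideanSpace ℝ (Fin d)) × ℝ => p.1 j) :=
    (EuclideanSpace.proj j).continuous.comp continuous_fst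
  have hr : Continuous (fun p : (EuclideanSpace ℝ (Fin d)) × ℝ =>
      c * p.2 * cut01 (hnorm j p.1)) := by
    apply ((continuous_const.mul continuous_snd).mul _)
    exact cut01_continuous.comp ((hnorm_continuous j).comp continuous_fst)
  have hramp : Continuous (fun p : (EuclideanSpace ℝ (Fin d)) × ℝ =>
      rampF (c * p.2 * cut01 (hnorm j p.1)) m₁ p₀ M (p.1 j)) := by
    have := rampF_continuous (m₁ := m₁) (p₀ := p₀) (M := M)
    exact this.comp (hr.prodMk hcoord)
  exact continuous_fst.add ((hramp.sub hcoord).smul continuous_const)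

theorem shF_continuous (m₁ p₀ M : ℝ) (j : Fin d) (c ρ : ℝ) :
    Continuous (shF j c m₁ p₀ M ρ) := by
  have h' : Continuous (fun x : EuclideanSpace ℝ (Fin d) => (x, ρ)) := by fun_prop
  exact (shF_continuous_joint m₁ p₀ M j c).comp h'

theorem shF_id_of_cut (hcut : cut01 (hnorm j x) = 0) : shF j c m₁ p₀ M ρ x = x := by
  unfold shF
  rw [hcut, mul_zero, rampF_zero]
  simp

theorem shF_id_of_low (hm : m₁ < p₀) (hc0 : 0 ≤ c) (hρ0 : 0 ≤ ρ) (hρ1 : ρ ≤ 1)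
    {x : EuclideanSpace ℝ (Fin d)} (hs : x j ≤ m₁) : shF j c m₁ p₀ M ρ x = x := by
  unfold shF
  obtain ⟨hr0, _⟩ := rcoef_bounds hc0 hρ0 hρ1 (hnorm j x)
  rw [rampF_of_left hr0 hm hs]
  simp

theorem shF_id_of_high (hm : p₀ < M) (hc0 : 0 ≤ c) (hρ0 : 0 ≤ ρ) (hρ1 : ρ ≤ 1)
    {x : EuclideanSpace ℝ (Fin d)} (hs : M ≤ x j) : shF j c m₁ p₀ M ρ x = x := by
  unfold shF
  obtain ⟨hr0, _⟩ := rcoef_bounds hc0 hρ0 hρ1 (hnorm j x)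
  rw [rampF_of_right hr0 hm hs]
  simp

theorem shF_id_outside (hm : m₁ < p₀) (hMp : p₀ < M) (hc0 : 0 ≤ c) (hρ0 : 0 ≤ ρ) (hρ1 : ρ ≤ 1)
    {x : EuclideanSpace ℝ (Fin d)} (hx : x ∉ Metric.closedBall (0 : EuclideanSpace ℝ (Fin d)) (|m₁| + |M| + 3)) :
    shF j c m₁ p₀ M ρ x = x := by
  have hnx : |m₁| + |M| + 3 < ‖x‖ := by
    simpa [Metric.mem_closedBall, dist_zero_right] using hx
  rcases le_or_gt 2 (hnorm j x) with h2 | h2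
  · exact shF_id_of_cut (cut01_of_two_le h2)
  · have habs : |m₁| + |M| + 1 < |x j| := by
      have := norm_le_hnorm_add j x
      linarith
    rcases le_or_gt 0 (x j) with hsgn | hsgn
    · apply shF_id_of_high hMp hc0 hρ0 hρ1
      have : |x j| = x j := abs_of_nonneg hsgn
      have hM' : M ≤ |M| := le_abs_self M
      linarith [abs_nonneg m₁]
    · apply shF_id_of_low hm hc0 hρ0 hρ1
      have : |x j| = -(x j) := abs_of_neg hsgn
      have hm' : -|m₁| ≤ m₁ := neg_abs_le m₁
      linarith [abs_nonneg M]

end Shear2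

end Stmt10Aux

namespace Stmt10Aux

open Set

section ShHomeo

variable {d : ℕ}

/-- The compactly supported shear homeomorphism. -/
noncomputable def shHomeo (j : Fin d) (c m₁ p₀ M : ℝ) (hm : m₁ < p₀) (hM : p₀ + c < M)
    (hc0 : 0 ≤ c) : (EuclideanSpace ℝ (Fin d)) ≃ₜ (EuclideanSpace ℝ (Fin d)) :=
  homeoExt (shF j c m₁ p₀ M 1) (shF_continuous m₁ p₀ M j c 1)
    ⟨shF_injective hm hM hc0 zero_le_one le_rfl, shF_surjective hm hM hc0 zero_le_one le_rfl⟩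
    (Metric.closedBall 0 (|m₁| + |M| + 3)) (isCompact_closedBall _ _)
    (fun y hy => shF_id_outside hm (by linarith) hc0 zero_le_one le_rfl hy)

theorem shHomeo_apply (j : Fin d) (c m₁ p₀ M : ℝ) (hm : m₁ < p₀) (hM : p₀ + c < M)
    (hc0 : 0 ≤ c) (x : EuclideanSpace ℝ (Fin d)) :
    shHomeo j c m₁ p₀ M hm hM hc0 x = shF j c m₁ p₀ M 1 x := rfl

theorem shHomeo_mem_Homeo0 (j : Fin d) (c m₁ p₀ M : ℝ) (hm : m₁ < p₀) (hM : p₀ + c < M)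
    (hc0 : 0 ≤ c) : shHomeo j c m₁ p₀ M hm hM hc0 ∈ Homeo0 (EuclideanSpace ℝ (Fin d)) := by
  set K : Set (EuclideanSpace ℝ (Fin d)) := Metric.closedBall 0 (|m₁| + |M| + 3) with hKdef
  have hK : IsCompact K := isCompact_closedBall _ _
  have hKI : IsCompact (K ×ˢ (Set.univ : Set unitInterval)) := hK.prod isCompact_univ
  have hbij : Function.Bijective (fun p : (EuclideanSpace ℝ (Fin d)) × unitInterval =>
      ((shF j c m₁ p₀ M (p.2 : ℝ) p.1, p.2) : (EuclideanSpace ℝ (Fin d)) × unitInterval)) := by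
    constructor
    · rintro ⟨x, t⟩ ⟨y, u⟩ h
      have ht : t = u := congrArg Prod.snd h
      subst ht
      have hx : shF j c m₁ p₀ M (t : ℝ) x = shF j c m₁ p₀ M (t : ℝ) y := congrArg Prod.fst h
      have := shF_injective (j := j) hm hM hc0 t.2.1 t.2.2 hx
      rw [this]
    · rintro ⟨y, t⟩
      obtain ⟨x, hx⟩ := shF_surjective (j := j) (ρ := (t : ℝ)) hm hM hc0 t.2.1 t.2.2 y
      exact ⟨(x, t), by simp [hx]⟩
  have hcont : Continuous (fun p : (EuclideanSpace ℝ (Fin d)) × unitInterval =>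
      ((shF j c m₁ p₀ M (p.2 : ℝ) p.1, p.2) : (EuclideanSpace ℝ (Fin d)) × unitInterval)) := by
    apply Continuous.prodMk _ continuous_snd
    have h' : Continuous (fun p : (EuclideanSpace ℝ (Fin d)) × unitInterval =>
        ((p.1, (p.2 : ℝ)) : (EuclideanSpace ℝ (Fin d)) × ℝ)) :=
      continuous_fst.prodMk (continuous_subtype_val.comp continuous_snd)
    exact (shF_continuous_joint m₁ p₀ M j c).comp h'
  have hid : ∀ p : (EuclideanSpace ℝ (Fin d)) × unitInterval,
      p ∉ K ×ˢ (Set.univ : Set unitInterval) →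
      (fun p : (EuclideanSpace ℝ (Fin d)) × unitInterval =>
        ((shF j c m₁ p₀ M (p.2 : ℝ) p.1, p.2) : (EuclideanSpace ℝ (Fin d)) × unitInterval)) p = p := by
    rintro ⟨x, t⟩ hp
    have hx : x ∉ K := by
      intro hxK
      exact hp (Set.mk_mem_prod hxK (Set.mem_univ t))
    simp only
    rw [shF_id_outside hm (by linarith) hc0 t.2.1 t.2.2 hx]
  refine ⟨homeoExt _ hcont hbij _ hKI hid, K, hK, ?_, ?_, ?_, ?_⟩
  · intro p; rfl
  · intro x
    show (shF j c m₁ p₀ M ((0 : unitInterval) : ℝ) x, (0 : unitInterval))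
      = (x, (0 : unitInterval))
    have h0 : ((0 : unitInterval) : ℝ) = 0 := rfl
    rw [h0]
    unfold shF
    rw [mul_zero, zero_mul, rampF_zero]
    simp
  · intro x
    show (shF j c m₁ p₀ M ((1 : unitInterval) : ℝ) x, (1 : unitInterval))
      = (shHomeo j c m₁ p₀ M hm hM hc0 x, (1 : unitInterval))
    rfl
  · intro t x hx
    show (shF j c m₁ p₀ M ((t : unitInterval) : ℝ) x, t) = (x, t)
    rw [shF_id_outside hm (by linarith) hc0 t.2.1 t.2.2 hx]

/-- The shear as an element of the subgroup `Homeo0`. -/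
noncomputable def shearElt (j : Fin d) (c m₁ p₀ M : ℝ) (hm : m₁ < p₀) (hM : p₀ + c < M)
    (hc0 : 0 ≤ c) : (Homeo0 (EuclideanSpace ℝ (Fin d))) :=
  ⟨shHomeo j c m₁ p₀ M hm hM hc0, shHomeo_mem_Homeo0 j c m₁ p₀ M hm hM hc0⟩

end ShHomeo

end Stmt10Aux


namespace Stmt10Aux

open Set

section Balls

variable {d : ℕ}

/-- flat (d-1)-ball at height t in direction j -/
def flatBall (j : Fin d) (t : ℝ) : Set (EuclideanSpace ℝ (Fin d)) :=
  {x | x j = t ∧ ‖x - t • Ej j‖ ≤ 1}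

theorem hnorm_of_flatBall {j : Fin d} {t : ℝ} {x : EuclideanSpace ℝ (Fin d)}
    (hx : x ∈ flatBall j t) : hnorm j x ≤ 1 := by
  obtain ⟨h1, h2⟩ := hx
  unfold hnorm
  rw [h1]
  exact h2

theorem shF_image_flatBall (j : Fin d) (c m₁ p₀ M : ℝ) (hm : m₁ < p₀) (hM : p₀ + c < M)
    (hc0 : 0 ≤ c) :
    shF j c m₁ p₀ M 1 '' flatBall j p₀ = flatBall j (p₀ + c) := by
  have hMp : p₀ < M := by linarith
  have key : ∀ x ∈ flatBall j p₀, shF j c m₁ p₀ M 1 x = x + c • Ej j := by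
    intro x hx
    have hcut : cut01 (hnorm j x) = 1 := cut01_of_le_one (hnorm_of_flatBall hx)
    unfold shF
    rw [hcut, mul_one, mul_one, hx.1, rampF_peak hc0 hm hMp]
    have hpc : p₀ + c - p₀ = c := by ring
    rw [hpc]
  apply Set.Subset.antisymm
  · rintro y ⟨x, hx, rfl⟩
    rw [key x hx]
    constructor
    · simp [PiLp.add_apply, PiLp.smul_apply, hx.1]
    · have : x + c • Ej j - (p₀ + c) • Ej j = x - p₀ • Ej j := by
        rw [add_smul]; abel
      rw [this]
      exact hx.2
  · intro y hy
    have hxm : y - c • Ej j ∈ flatBall j p₀ := by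
      constructor
      · simp [PiLp.sub_apply, PiLp.smul_apply, hy.1]
      · have : y - c • Ej j - p₀ • Ej j = y - (p₀ + c) • Ej j := by
          rw [add_smul]; abel
        rw [this]
        exact hy.2
    refine ⟨y - c • Ej j, hxm, ?_⟩
    rw [key _ hxm]
    abel

theorem flatBall_subset_low {j : Fin d} {t m₁ : ℝ} (h : t ≤ m₁) :
    flatBall j t ⊆ {x | x j ≤ m₁} := fun x hx => by rw [Set.mem_setOf_eq, hx.1]; exact h

theorem flatBall_subset_high {j : Fin d} {t M : ℝ} (h : M ≤ t) :
    flatBall j t ⊆ {x | M ≤ x j} := fun x hx => by rw [Set.mem_setOf_eq, hx.1]; exact h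

theorem isOpen_coord_lt (j : Fin d) (a : ℝ) :
    IsOpen {x : EuclideanSpace ℝ (Fin d) | x j < a} :=
  isOpen_lt (EuclideanSpace.proj j).continuous continuous_const

theorem isOpen_coord_gt (j : Fin d) (a : ℝ) :
    IsOpen {x : EuclideanSpace ℝ (Fin d) | a < x j} :=
  isOpen_lt continuous_const (EuclideanSpace.proj j).continuous

theorem flatBall_disjoint {j : Fin d} {t t' : ℝ} (h : t ≠ t') :
    flatBall j t ∩ flatBall j t' = ∅ := by
  ext x
  simp only [Set.mem_inter_iff, Set.mem_empty_iff_false, iff_false]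
  rintro ⟨h1, h2⟩
  exact h (h1.1 ▸ h2.1)

/-- flat balls are translates of the standard ball -/
theorem stdBallSet_eq_flatBall (hd : 1 ≤ d) :
    stdBallSet d = flatBall (⟨d - 1, by omega⟩ : Fin d) 0 := by
  ext x
  constructor
  · rintro ⟨h1, h2⟩
    exact ⟨h2 (by omega), by simpa using h1⟩
  · rintro ⟨h1, h2⟩
    refine ⟨by simpa using h2, fun h => h1⟩

theorem flatBall_image_translate (j : Fin d) (t : ℝ) :
    flatBall j t = (fun x => x + t • Ej j) '' flatBall j 0 := by
  ext y
  constructor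
  · intro hy
    refine ⟨y - t • Ej j, ⟨?_, ?_⟩, ?_⟩
    · simp [PiLp.sub_apply, PiLp.smul_apply, hy.1]
    · simpa using hy.2
    · show y - t • Ej j + t • Ej j = y
      abel
  · rintro ⟨x, hx, rfl⟩
    constructor
    · simp [PiLp.add_apply, PiLp.smul_apply, hx.1]
    · have : x + t • Ej j - t • Ej j = x := by abel
      rw [this]
      simpa using hx.2

theorem isEmbeddedBall_image {d : ℕ} (e : EuclideanSpace ℝ (Fin d) ≃ₜ EuclideanSpace ℝ (Fin d))
    (hd : 1 ≤ d) (t : ℝ) :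
    IsEmbeddedBall (e '' flatBall (⟨d - 1, by omega⟩ : Fin d) t) := by
  set j : Fin d := ⟨d - 1, by omega⟩
  refine ⟨(Homeomorph.addRight (t • Ej j)).trans e, ?_⟩
  rw [stdBallSet_eq_flatBall hd]
  have himg : (fun x : EuclideanSpace ℝ (Fin d) => x + t • Ej j) '' flatBall j 0
      = flatBall j t := (flatBall_image_translate j t).symm
  rw [← himg, ← Set.image_comp]
  rfl

end Balls

end Stmt10Aux


namespace Stmt10Aux

open Set

section Conj

variable {X : Type*} [TopologicalSpace X]

/-- conjugation of a homeomorphism -/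
def conjHomeo (w f : X ≃ₜ X) : X ≃ₜ X := (w.symm.trans f).trans w

theorem conjHomeo_apply (w f : X ≃ₜ X) (x : X) : conjHomeo w f x = w (f (w.symm x)) := rfl

theorem conjHomeo_mem (w : X ≃ₜ X) (f : X ≃ₜ X) (hf : f ∈ Homeo0 X) :
    conjHomeo w f ∈ Homeo0 X := by
  obtain ⟨H, K, hK, hl, h0, h1, hs⟩ := hf
  refine ⟨((w.symm.prodCongr (Homeomorph.refl unitInterval)).trans H).trans
      (w.prodCongr (Homeomorph.refl unitInterval)), w '' K, hK.image w.continuous,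
      ?_, ?_, ?_, ?_⟩
  · intro p
    exact hl ((w.symm.prodCongr (Homeomorph.refl unitInterval)) p)
  · intro x
    show (w.prodCongr (Homeomorph.refl unitInterval)) (H ((w.symm x, (0 : unitInterval)))) = _
    rw [h0 (w.symm x)]
    show (w (w.symm x), (0 : unitInterval)) = (x, 0)
    rw [w.apply_symm_apply]
  · intro x
    show (w.prodCongr (Homeomorph.refl unitInterval)) (H ((w.symm x, (1 : unitInterval)))) = _
    rw [h1 (w.symm x)]
    rfl
  · intro t x hx
    have hx' : w.symm x ∉ K := by
      intro hc
      exact hx ⟨w.symm x, hc, w.apply_symm_apply x⟩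
    show (w.prodCongr (Homeomorph.refl unitInterval)) (H ((w.symm x, t))) = _
    rw [hs t (w.symm x) hx']
    show (w (w.symm x), t) = (x, t)
    rw [w.apply_symm_apply]

/-- conjugation at the level of subgroup elements -/
noncomputable def conjElt (w : X ≃ₜ X) (f : Homeo0 X) : Homeo0 X :=
  ⟨conjHomeo w (f : X ≃ₜ X), conjHomeo_mem w _ f.2⟩

theorem conjElt_coe_apply (w : X ≃ₜ X) (f : Homeo0 X) (x : X) :
    ((conjElt w f : Homeo0 X) : X ≃ₜ X) x = w ((f : X ≃ₜ X) (w.symm x)) := rfl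

theorem conjHomeo_image (w f : X ≃ₜ X) (S : Set X) :
    (conjHomeo w f) '' (w '' S) = w '' (f '' S) := by
  ext y
  constructor
  · rintro ⟨x, ⟨s, hs, rfl⟩, rfl⟩
    refine ⟨f s, ⟨s, hs, rfl⟩, ?_⟩
    rw [conjHomeo_apply, w.symm_apply_apply]
  · rintro ⟨x, ⟨s, hs, rfl⟩, rfl⟩
    refine ⟨w s, ⟨s, hs, rfl⟩, ?_⟩
    rw [conjHomeo_apply, w.symm_apply_apply]

end Conj

section GroupLemmas

variable {X : Type*} [TopologicalSpace X]

theorem homeo_symm_image_image {Z W : Type*} [TopologicalSpace Z] [TopologicalSpace W]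
    (f : Z ≃ₜ W) (s : Set Z) : f.symm '' (f '' s) = s :=
  f.toEquiv.symm_image_image s

theorem Homeo0_coe_mul (f g : Homeo0 X) (x : X) :
    ((f * g : Homeo0 X) : X ≃ₜ X) x = (f : X ≃ₜ X) ((g : X ≃ₜ X) x) := rfl

theorem Homeo0_coe_inv (f : Homeo0 X) :
    ((f⁻¹ : Homeo0 X) : X ≃ₜ X) = (f : X ≃ₜ X).symm := rfl

theorem mem_fixingNbhd {S : Set X} {f : Homeo0 X} :
    f ∈ fixingNbhd S ↔ ∃ U : Set X, IsOpen U ∧ S ⊆ U ∧ ∀ x ∈ U, (f : X ≃ₜ X) x = x :=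
  Iff.rfl

theorem mem_fixingNbhd_conj {S : Set X} (g f : Homeo0 X) :
    f ∈ fixingNbhd ((g : X ≃ₜ X) '' S) ↔ (g⁻¹ * f * g) ∈ fixingNbhd S := by
  constructor
  · rintro ⟨U, hU, hSU, hfix⟩
    refine ⟨(g : X ≃ₜ X) ⁻¹' U, hU.preimage (g : X ≃ₜ X).continuous,
      fun s hs => hSU ⟨s, hs, rfl⟩, fun x hx => ?_⟩
    show ((g⁻¹ * f * g : Homeo0 X) : X ≃ₜ X) x = x
    rw [Homeo0_coe_mul, Homeo0_coe_mul, Homeo0_coe_inv]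
    rw [hfix _ hx]
    exact (g : X ≃ₜ X).symm_apply_apply x
  · rintro ⟨U, hU, hSU, hfix⟩
    refine ⟨(g : X ≃ₜ X) '' U, (g : X ≃ₜ X).isOpen_image.2 hU,
      Set.image_mono hSU, ?_⟩
    rintro x ⟨u, hu, rfl⟩
    have h1 : ((g⁻¹ * f * g : Homeo0 X) : X ≃ₜ X) u = u := hfix u hu
    rw [Homeo0_coe_mul, Homeo0_coe_mul, Homeo0_coe_inv] at h1
    have := congrArg (g : X ≃ₜ X) h1
    rwa [(g : X ≃ₜ X).apply_symm_apply ((f : X ≃ₜ X) ((g : X ≃ₜ X) u))] at this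

theorem fixingNbhd_mono {S T : Set X} (h : S ⊆ T) : fixingNbhd T ≤ fixingNbhd S := by
  rintro f ⟨U, hU, hTU, hfix⟩
  exact ⟨U, hU, h.trans hTU, hfix⟩

end GroupLemmas

section FixSetLemmas

variable {X : Type*} [TopologicalSpace X] (φ : Homeo0 X →* (ℝ ≃ₜ ℝ))

theorem homeoR_coe_mul (f g : ℝ ≃ₜ ℝ) (x : ℝ) : (f * g) x = f (g x) := rfl

theorem fixSet_isClosed (H : Subgroup (Homeo0 X)) : IsClosed (fixSet φ H) := by
  have : fixSet φ H = ⋂ (f : Homeo0 X), ⋂ (_ : f ∈ H), {y : ℝ | φ f y = y} := by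
    ext y
    simp [fixSet, Set.mem_iInter]
  rw [this]
  exact isClosed_iInter fun f => isClosed_iInter fun _ =>
    isClosed_eq (φ f).continuous continuous_id

theorem fixSet_conj (g : Homeo0 X) (S : Set X) :
    fixSet φ (fixingNbhd ((g : X ≃ₜ X) '' S)) = (φ g) '' (fixSet φ (fixingNbhd S)) := by
  ext y
  constructor
  · intro hy
    refine ⟨(φ g).symm y, ?_, (φ g).apply_symm_apply y⟩
    intro f hf
    have h1 : (g * f * g⁻¹) ∈ fixingNbhd ((g : X ≃ₜ X) '' S) := by
      rw [mem_fixingNbhd_conj g]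
      have : g⁻¹ * (g * f * g⁻¹) * g = f := by group
      rwa [this]
    have h2 := hy _ h1
    rw [map_mul, map_mul, map_inv] at h2
    rw [homeoR_coe_mul, homeoR_coe_mul] at h2
    have h3 : (φ g)⁻¹ y = (φ g).symm y := rfl
    rw [h3] at h2
    have := congrArg (φ g).symm h2
    rwa [(φ g).symm_apply_apply] at this
  · rintro ⟨z, hz, rfl⟩
    intro f hf
    have h1 : (g⁻¹ * f * g) ∈ fixingNbhd S := (mem_fixingNbhd_conj g f).1 hf
    have h2 := hz _ h1
    rw [map_mul, map_mul, map_inv] at h2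
    rw [homeoR_coe_mul, homeoR_coe_mul] at h2
    have h4 := congrArg (φ g) h2
    rw [show ((φ g)⁻¹ : ℝ ≃ₜ ℝ) = (φ g).symm from rfl] at h4
    rw [(φ g).apply_symm_apply] at h4
    exact h4

theorem fixSet_mem_apply {H : Subgroup (Homeo0 X)} {f : Homeo0 X} {y : ℝ}
    (hf : f ∈ H) (hy : y ∈ fixSet φ H) : φ f y = y := hy f hf

end FixSetLemmas

section Support

variable {X : Type*} [TopologicalSpace X]

theorem Homeo0_exists_compact_support (f : Homeo0 X) :
    ∃ K : Set X, IsCompact K ∧ ∀ x ∉ K, (f : X ≃ₜ X) x = x := by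
  obtain ⟨H, K, hK, hl, h0, h1, hs⟩ := f.2
  refine ⟨K, hK, fun x hx => ?_⟩
  have h := hs 1 x hx
  rw [h1 x] at h
  exact (Prod.ext_iff.1 h).1

end Support

end Stmt10Aux


namespace Stmt10Aux

open Set

section EltLemmas

variable {d : ℕ} (e : EuclideanSpace ℝ (Fin d) ≃ₜ EuclideanSpace ℝ (Fin d))
variable {j : Fin d} {c m₁ p₀ M : ℝ}

theorem conjElt_shear_image (hm : m₁ < p₀) (hM : p₀ + c < M) (hc0 : 0 ≤ c) :
    ((conjElt e (shearElt j c m₁ p₀ M hm hM hc0) : Homeo0 (EuclideanSpace ℝ (Fin d)))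
      : EuclideanSpace ℝ (Fin d) ≃ₜ EuclideanSpace ℝ (Fin d)) '' (e '' flatBall j p₀)
      = e '' flatBall j (p₀ + c) := by
  have h1 : ((conjElt e (shearElt j c m₁ p₀ M hm hM hc0) : Homeo0 (EuclideanSpace ℝ (Fin d)))
      : EuclideanSpace ℝ (Fin d) ≃ₜ EuclideanSpace ℝ (Fin d))
      = conjHomeo e (shHomeo j c m₁ p₀ M hm hM hc0) := rfl
  rw [h1, conjHomeo_image]
  have h2 : ⇑(shHomeo j c m₁ p₀ M hm hM hc0) = shF j c m₁ p₀ M 1 := rfl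
  rw [h2, shF_image_flatBall j c m₁ p₀ M hm hM hc0]

theorem conjElt_shear_fixes_low (hm : m₁ < p₀) (hM : p₀ + c < M) (hc0 : 0 ≤ c)
    {t : ℝ} (ht : t < m₁) :
    conjElt e (shearElt j c m₁ p₀ M hm hM hc0) ∈ fixingNbhd (e '' flatBall j t) := by
  refine ⟨e '' {x | x j < m₁}, (Homeomorph.isOpen_image e).2 (isOpen_coord_lt j m₁),
    Set.image_mono (fun x hx => by rw [Set.mem_setOf_eq, hx.1]; exact ht), ?_⟩
  rintro x ⟨x₀, hx₀, rfl⟩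
  rw [conjElt_coe_apply, e.symm_apply_apply]
  have h3 : ((shearElt j c m₁ p₀ M hm hM hc0 : Homeo0 (EuclideanSpace ℝ (Fin d)))
      : EuclideanSpace ℝ (Fin d) ≃ₜ EuclideanSpace ℝ (Fin d)) x₀ = x₀ := by
    show shF j c m₁ p₀ M 1 x₀ = x₀
    exact shF_id_of_low hm hc0 zero_le_one le_rfl (le_of_lt hx₀)
  rw [h3]

theorem conjElt_shear_fixes_high (hm : m₁ < p₀) (hM : p₀ + c < M) (hc0 : 0 ≤ c)
    {t : ℝ} (ht : M < t) :
    conjElt e (shearElt j c m₁ p₀ M hm hM hc0) ∈ fixingNbhd (e '' flatBall j t) := by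
  have hpM : p₀ < M := by linarith
  refine ⟨e '' {x | M < x j}, (Homeomorph.isOpen_image e).2 (isOpen_coord_gt j M),
    Set.image_mono (fun x hx => by rw [Set.mem_setOf_eq, hx.1]; exact ht), ?_⟩
  rintro x ⟨x₀, hx₀, rfl⟩
  rw [conjElt_coe_apply, e.symm_apply_apply]
  have h3 : ((shearElt j c m₁ p₀ M hm hM hc0 : Homeo0 (EuclideanSpace ℝ (Fin d)))
      : EuclideanSpace ℝ (Fin d) ≃ₜ EuclideanSpace ℝ (Fin d)) x₀ = x₀ := by
    show shF j c m₁ p₀ M 1 x₀ = x₀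
    exact shF_id_of_high hpM hc0 zero_le_one le_rfl (le_of_lt hx₀)
  rw [h3]

end EltLemmas

end Stmt10Aux


/-- Suppose `φ : Homeo₀(ℝ^d) → Homeo(ℝ)` has no global fixed point and all the sets
`F_D = Fix(φ(H_D^d))` (for `D` an embedded `(d-1)`-ball) are nonempty. Then each set
`F_D` contains exactly one point. -/
theorem stmt_10 {d : ℕ} (hd : 1 ≤ d)
    (φ : Homeo0 (EuclideanSpace ℝ (Fin d)) →* (ℝ ≃ₜ ℝ))
    (hfix : ∀ x : ℝ, ∃ f : Homeo0 (EuclideanSpace ℝ (Fin d)), φ f x ≠ x)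
    (hne : ∀ D : Set (EuclideanSpace ℝ (Fin d)), IsEmbeddedBall D →
      (fixSet φ (fixingNbhd D)).Nonempty)
    (D : Set (EuclideanSpace ℝ (Fin d))) (hD : IsEmbeddedBall D) :
    ∃ x : ℝ, fixSet φ (fixingNbhd D) = {x} := by
  classical
  obtain ⟨e, hDe⟩ := id hD
  have hdd : d - 1 < d := by omega
  set j : Fin d := ⟨d - 1, hdd⟩ with hjdef
  set Ball : ℝ → Set (EuclideanSpace ℝ (Fin d)) := fun t => e '' Stmt10Aux.flatBall j t
    with hBalldef
  have hBall0 : Ball 0 = D := by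
    rw [hBalldef]
    simp only
    rw [hDe, Stmt10Aux.stdBallSet_eq_flatBall hd]
  set F : ℝ → Set ℝ := fun t => fixSet φ (fixingNbhd (Ball t)) with hFdef
  have hEquiv : ∀ (g : Homeo0 (EuclideanSpace ℝ (Fin d))) (t s : ℝ),
      ((g : EuclideanSpace ℝ (Fin d) ≃ₜ EuclideanSpace ℝ (Fin d)) '' Ball t = Ball s) →
      F s = (φ g) '' F t := by
    intro g t s himg
    show fixSet φ (fixingNbhd (Ball s)) = _
    rw [← himg, Stmt10Aux.fixSet_conj φ g (Ball t)]
  by_contra hcon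
  push_neg at hcon
  obtain ⟨c₀, hc₀⟩ := hne D hD
  have hc₀' : c₀ ∈ F 0 := by
    show c₀ ∈ fixSet φ (fixingNbhd (Ball 0))
    rw [hBall0]; exact hc₀
  have h2pt : ∃ a b : ℝ, a ∈ F 0 ∧ b ∈ F 0 ∧ a < b := by
    have hne0 : fixSet φ (fixingNbhd D) ≠ {c₀} := hcon c₀
    have hex : ∃ y ∈ fixSet φ (fixingNbhd D), y ≠ c₀ := by
      by_contra hy
      push_neg at hy
      exact hne0 (Set.eq_singleton_iff_unique_mem.2 ⟨hc₀, hy⟩)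
    obtain ⟨y, hyF, hyne⟩ := hex
    have hyF' : y ∈ F 0 := by
      show y ∈ fixSet φ (fixingNbhd (Ball 0))
      rw [hBall0]; exact hyF
    rcases hyne.lt_or_gt with h | h
    · exact ⟨y, c₀, hyF', hc₀', h⟩
    · exact ⟨c₀, y, hc₀', hyF', h⟩
  obtain ⟨a, b, haF, hbF, hab⟩ := h2pt
  -- far balls avoid a given compact set
  have hAvoid : ∀ Kf : Set (EuclideanSpace ℝ (Fin d)), IsCompact Kf →
      ∃ R : ℝ, ∀ u : ℝ, R < |u| → Ball u ∩ Kf = ∅ := by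
    intro Kf hKf
    obtain ⟨R, hR⟩ := (Metric.isBounded_iff_subset_closedBall 0).1
      (hKf.image e.symm.continuous).isBounded
    refine ⟨R, fun u hu => ?_⟩
    ext z
    simp only [Set.mem_inter_iff, Set.mem_empty_iff_false, iff_false]
    rintro ⟨⟨x, hx, rfl⟩, hzK⟩
    have h1 : e.symm (e x) ∈ Metric.closedBall 0 R := hR ⟨e x, hzK, rfl⟩
    rw [e.symm_apply_apply] at h1
    have h2 : |x j| ≤ ‖x‖ := Stmt10Aux.abs_coord_le_norm x j
    have h3 : ‖x‖ ≤ R := by simpa [Metric.mem_closedBall, dist_zero_right] using h1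
    rw [hx.1] at h2
    linarith
  -- the gap-avoidance lemma
  have hGA : ∀ t t' : ℝ, 0 < t → 0 < t' → t ≠ t' →
      ∀ y p q : ℝ, y ∈ F t' → p ∈ F t → q ∈ F t → p ≤ y → y ≤ q → False := by
    intro t t' ht ht' htt' y p q hy hp hq hpy hyq
    have hfam : ∃ (g : ℕ → Homeo0 (EuclideanSpace ℝ (Fin d))) (s : ℕ → ℝ),
        (∀ n, g n ∈ fixingNbhd (Ball t)) ∧
        (∀ n, ((g n : EuclideanSpace ℝ (Fin d) ≃ₜ EuclideanSpace ℝ (Fin d)) '' Ball t'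
          = Ball (s n))) ∧
        (∀ n : ℕ, (n : ℝ) + 1 - |t'| ≤ |s n|) := by
      rcases lt_or_gt_of_ne htt' with hlt | hgt
      · refine ⟨fun n => Stmt10Aux.conjElt e (Stmt10Aux.shearElt j ((n : ℝ) + 1) ((t + t') / 2)
            t' (t' + (n : ℝ) + 2) (by linarith) (by linarith) (by positivity)),
          fun n => t' + ((n : ℝ) + 1), fun n => ?_, fun n => ?_, fun n => ?_⟩
        · exact Stmt10Aux.conjElt_shear_fixes_low e _ _ _ (by linarith)
        · have h := Stmt10Aux.conjElt_shear_image e (j := j) (c := (n : ℝ) + 1)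
            (m₁ := (t + t') / 2) (p₀ := t') (M := t' + (n : ℝ) + 2)
            (by linarith) (by linarith) (by positivity)
          exact h
        · have h1 : |(n : ℝ) + 1| ≤ |t' + ((n : ℝ) + 1)| + |t'| := by
            calc |(n : ℝ) + 1| = |(t' + ((n : ℝ) + 1)) + (-t')| := by ring_nf
              _ ≤ |t' + ((n : ℝ) + 1)| + |(-t')| := abs_add_le _ _
              _ = |t' + ((n : ℝ) + 1)| + |t'| := by rw [abs_neg]
          have h2 : |(n : ℝ) + 1| = (n : ℝ) + 1 := abs_of_pos (by positivity)
          linarith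
      · have key : ∀ n : ℕ, ∃ gg : Homeo0 (EuclideanSpace ℝ (Fin d)),
            gg ∈ fixingNbhd (Ball t) ∧
            ((gg : EuclideanSpace ℝ (Fin d) ≃ₜ EuclideanSpace ℝ (Fin d)) '' Ball t'
              = Ball (t' - ((n : ℝ) + 1))) := by
          intro n
          have hm' : t' - (n : ℝ) - 2 < t' - (n : ℝ) - 1 := by linarith
          have hM' : t' - (n : ℝ) - 1 + ((n : ℝ) + 1) < (t + t') / 2 := by
            have he : t' - (n : ℝ) - 1 + ((n : ℝ) + 1) = t' := by ring
            rw [he]; linarith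
          have hc' : (0 : ℝ) ≤ (n : ℝ) + 1 := by positivity
          refine ⟨(Stmt10Aux.conjElt e (Stmt10Aux.shearElt j ((n : ℝ) + 1)
            (t' - (n : ℝ) - 2) (t' - (n : ℝ) - 1) ((t + t') / 2) hm' hM' hc'))⁻¹, ?_, ?_⟩
          · exact Subgroup.inv_mem _
              (Stmt10Aux.conjElt_shear_fixes_high e hm' hM' hc' (by linarith))
          · have hfwd := Stmt10Aux.conjElt_shear_image e (j := j) (c := (n : ℝ) + 1)
              (m₁ := t' - (n : ℝ) - 2) (p₀ := t' - (n : ℝ) - 1) (M := (t + t') / 2)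
              hm' hM' hc'
            have e1 : t' - (n : ℝ) - 1 + ((n : ℝ) + 1) = t' := by ring
            have e2 : t' - ((n : ℝ) + 1) = t' - (n : ℝ) - 1 := by ring
            have hBeq1 : Ball t' = Ball (t' - (n : ℝ) - 1 + ((n : ℝ) + 1)) := by rw [e1]
            have hBeq2 : Ball (t' - ((n : ℝ) + 1)) = Ball (t' - (n : ℝ) - 1) := by rw [e2]
            rw [Stmt10Aux.Homeo0_coe_inv, hBeq1, hBeq2]
            show _ '' (⇑e '' Stmt10Aux.flatBall j (t' - (n : ℝ) - 1 + ((n : ℝ) + 1)))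
              = ⇑e '' Stmt10Aux.flatBall j (t' - (n : ℝ) - 1)
            rw [← hfwd, Stmt10Aux.homeo_symm_image_image]
        choose gg hgg1 hgg2 using key
        refine ⟨gg, fun n => t' - ((n : ℝ) + 1), hgg1, hgg2, fun n => ?_⟩
        have h1 : |(n : ℝ) + 1| ≤ |t'| + |t' - ((n : ℝ) + 1)| := by
          calc |(n : ℝ) + 1| = |t' - (t' - ((n : ℝ) + 1))| := by ring_nf
            _ ≤ |t'| + |t' - ((n : ℝ) + 1)| := abs_sub _ _
        have h2 : |(n : ℝ) + 1| = (n : ℝ) + 1 := abs_of_pos (by positivity)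
        linarith
    obtain ⟨g, s, hgmem, hgimg, hsesc⟩ := hfam
    set x : ℕ → ℝ := fun n => φ (g n) y with hxdef
    have hxF : ∀ n, x n ∈ F (s n) := by
      intro n
      rw [hEquiv (g n) t' (s n) (hgimg n)]
      exact ⟨y, hy, rfl⟩
    have hxIcc : ∀ n, x n ∈ Set.Icc p q := by
      intro n
      have hfp : φ (g n) p = p := hp _ (hgmem n)
      have hfq : φ (g n) q = q := hq _ (hgmem n)
      rcases eq_or_lt_of_le (hpy.trans hyq) with heq | hpq
      · have hyp : y = p := le_antisymm (heq ▸ hyq) hpy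
        have : x n = p := by rw [hxdef]; simp only; rw [hyp, hfp]
        rw [this]
        exact ⟨le_refl p, le_of_eq heq⟩
      · rcases (φ (g n)).continuous.strictMono_of_inj (φ (g n)).injective with hmono | hanti
        · constructor
          · rw [← hfp]; exact hmono.le_iff_le.2 hpy
          · rw [hxdef]; simp only; rw [← hfq]; exact hmono.le_iff_le.2 hyq
        · exfalso
          have h1 := hanti hpq
          rw [hfp, hfq] at h1
          exact absurd h1 (not_lt.2 (le_of_lt hpq))
    obtain ⟨L, _, ψ, hψ, htend⟩ := tendsto_subseq_of_bounded (Metric.isBounded_Icc p q) hxIcc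
    have hLfix : ∀ f : Homeo0 (EuclideanSpace ℝ (Fin d)), φ f L = L := by
      intro f
      obtain ⟨Kf, hKf, hKfix⟩ := Stmt10Aux.Homeo0_exists_compact_support f
      obtain ⟨R, hR⟩ := hAvoid Kf hKf
      obtain ⟨N, hN⟩ := exists_nat_gt (R + |t'|)
      have hfixn : ∀ n, N ≤ n → φ f (x n) = x n := by
        intro n hn
        have h1 : R < |s n| := by
          have h2 := hsesc n
          have h3 : (N : ℝ) ≤ (n : ℝ) := Nat.cast_le.2 hn
          linarith
        have hmem : f ∈ fixingNbhd (Ball (s n)) := by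
          refine ⟨Kfᶜ, hKf.isClosed.isOpen_compl, ?_, fun z hz => hKfix z hz⟩
          intro z hz hzK
          have hmem2 : z ∈ Ball (s n) ∩ Kf := ⟨hz, hzK⟩
          rw [hR (s n) h1] at hmem2
          exact hmem2
        exact hxF n f hmem
      have h1 : Filter.Tendsto (fun k => φ f (x (ψ k))) Filter.atTop (nhds (φ f L)) :=
        ((φ f).continuous.tendsto L).comp htend
      have h2 : (fun k => x (ψ k)) =ᶠ[Filter.atTop] (fun k => φ f (x (ψ k))) := by
        filter_upwards [Filter.eventually_ge_atTop N] with k hk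
        exact (hfixn (ψ k) (le_trans hk hψ.le_apply)).symm
      have h3 : Filter.Tendsto (fun k => φ f (x (ψ k))) Filter.atTop (nhds L) :=
        htend.congr' h2
      exact tendsto_nhds_unique h1 h3
    obtain ⟨f₀, hf₀⟩ := hfix L
    exact hf₀ (hLfix f₀)
  -- each far fixed-point set contains two points
  have hTwo : ∀ s : ℝ, ∃ ab : ℝ × ℝ,
      ab.1 ∈ F (Real.exp s) ∧ ab.2 ∈ F (Real.exp s) ∧ ab.1 < ab.2 := by
    intro s
    have ht : (0 : ℝ) < Real.exp s := Real.exp_pos s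
    set u := Stmt10Aux.conjElt e (Stmt10Aux.shearElt j (Real.exp s) (-1) 0 (Real.exp s + 1)
      (by norm_num) (by linarith) ht.le) with hudef
    have himg : ((u : EuclideanSpace ℝ (Fin d) ≃ₜ EuclideanSpace ℝ (Fin d)) '' Ball 0
        = Ball (Real.exp s)) := by
      have h := Stmt10Aux.conjElt_shear_image e (j := j) (c := Real.exp s) (m₁ := -1)
        (p₀ := 0) (M := Real.exp s + 1) (by norm_num) (by linarith) ht.le
      have hBeq : Ball (Real.exp s) = Ball (0 + Real.exp s) := by rw [zero_add]
      rw [hBeq]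
      exact h
    have hFt : F (Real.exp s) = φ u '' F 0 := hEquiv u 0 (Real.exp s) himg
    have hmem1 : φ u a ∈ F (Real.exp s) := by rw [hFt]; exact ⟨a, haF, rfl⟩
    have hmem2 : φ u b ∈ F (Real.exp s) := by rw [hFt]; exact ⟨b, hbF, rfl⟩
    have hneq : φ u a ≠ φ u b := fun h => (ne_of_lt hab) ((φ u).injective h)
    rcases lt_or_gt_of_ne hneq with h | h
    · exact ⟨(φ u a, φ u b), hmem1, hmem2, h⟩
    · exact ⟨(φ u b, φ u a), hmem2, hmem1, h⟩
  choose AB hA hB hAB using hTwo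
  have hrat : ∀ s : ℝ, ∃ r : ℚ, (AB s).1 < (r : ℝ) ∧ (r : ℝ) < (AB s).2 :=
    fun s => exists_rat_btwn (hAB s)
  choose r hr1 hr2 using hrat
  have hinj : Function.Injective r := by
    intro s s' hss'
    by_contra hne'
    have hts : Real.exp s ≠ Real.exp s' := fun h => hne' (Real.exp_injective h)
    have hz2a : (AB s').1 < (r s : ℝ) := by rw [hss']; exact hr1 s'
    have hz2b : (r s : ℝ) < (AB s').2 := by rw [hss']; exact hr2 s'
    rcases le_total ((AB s).1) ((AB s').1) with hle | hle
    · exact hGA (Real.exp s) (Real.exp s') (Real.exp_pos s) (Real.exp_pos s') hts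
        ((AB s').1) ((AB s).1) ((AB s).2) (hA s') (hA s) (hB s) hle
        (le_of_lt (lt_trans hz2a (hr2 s)))
    · exact hGA (Real.exp s') (Real.exp s) (Real.exp_pos s') (Real.exp_pos s) hts.symm
        ((AB s).1) ((AB s').1) ((AB s').2) (hA s) (hA s') (hB s') hle
        (le_of_lt (lt_trans (hr1 s) hz2b))
  have hcnt : Countable ℝ := hinj.countable
  exact Cardinal.not_countable_real (@Set.countable_univ ℝ hcnt)
end
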